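/- arXiv:2303.11962 — 9 statements merged into one kernel-verified Lean document; each statement's English description precedes it below -/
import Mathlib

section
/- Let K be a Hermitian D×D complex matrix, let Π and Π₀ be orthogonal projectors, and let Γ > 0, Δ ≥ 0 and ε ≥ 0 be reals such that KΠ = ΠK, KΠ ≥ √Γ·Π in the Loewner order, ‖(I−Π)K(I−Π)‖ ≤ √Δ, and ‖Π − Π₀‖ ≤ ε. Let ρ be a density matrix with tr(Πρ) > 0 and let n be a natural number. Then tr(Kⁿ ρ Kⁿ) > 0, and the normalized matrix ρₙ := Kⁿ ρ Kⁿ / tr(Kⁿ ρ Kⁿ) satisfies tr(Π₀ ρₙ) ≥ 1 − ((1 − tr(Πρ))/tr(Πρ))·(Δ/Γ)ⁿ − ε. -/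
open scoped Matrix.Norms.L2Operator ComplexOrder

open Matrix

variable {D : ℕ}

lemma diag_re_nonneg {σ : Matrix (Fin D) (Fin D) ℂ} (hσ : σ.PosSemidef) (i : Fin D) :
    0 ≤ (σ i i).re := by
  have := hσ.re_dotProduct_nonneg (Pi.single i 1)
  simpa [dotProduct, Matrix.mulVec, Pi.single_apply, Finset.sum_ite_eq] using this

lemma trace_re_nonneg' {σ : Matrix (Fin D) (Fin D) ℂ} (hσ : σ.PosSemidef) :
    0 ≤ σ.trace.re := by
  rw [Matrix.trace, Complex.re_sum]
  exact Finset.sum_nonneg fun i _ => diag_re_nonneg hσ i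

open scoped MatrixOrder in
lemma trace_mul_re_nonneg' (X σ : Matrix (Fin D) (Fin D) ℂ)
    (hX : X.PosSemidef) (hσ : σ.PosSemidef) : 0 ≤ ((X * σ).trace).re := by
  set S := CFC.sqrt σ with hSdef
  have hpsd : ((S)ᴴ * X * S).PosSemidef := hX.conjTranspose_mul_mul_same S
  rw [(CFC.sqrt_nonneg σ).posSemidef.isHermitian.eq] at hpsd
  have htr : (X * σ).trace = (S * X * S).trace := by
    rw [← CFC.sqrt_mul_sqrt_self σ hσ.nonneg, ← mul_assoc, Matrix.trace_mul_comm, ← mul_assoc]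
  rw [htr]
  exact trace_re_nonneg' hpsd

open scoped MatrixOrder in
lemma trace_mul_re_le_norm (B σ : Matrix (Fin D) (Fin D) ℂ)
    (hσ : σ.PosSemidef) : ((B * σ).trace).re ≤ ‖B‖ * σ.trace.re := by
  classical
  set S := CFC.sqrt σ with hSdef
  have hSh : S.IsHermitian := (CFC.sqrt_nonneg σ).posSemidef.isHermitian
  have hSS : S * S = σ := CFC.sqrt_mul_sqrt_self σ hσ.nonneg
  have hconj : ∀ i j, (starRingEnd ℂ) (S j i) = S i j := fun i j => by
    conv_rhs => rw [← hSh.eq]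
    simp [Matrix.conjTranspose_apply]
  set v : Fin D → EuclideanSpace ℂ (Fin D) := fun i => (WithLp.equiv 2 _).symm (fun j => S j i) with hv
  have hvapp : ∀ i j, v i j = S j i := fun i j => rfl
  have happ : ∀ (f : Fin D → ℂ) (j : Fin D), ((EuclideanSpace.equiv (Fin D) ℂ).symm f) j = f j :=
    fun f j => rfl
  have htr : (B * σ).trace = (S * B * S).trace := by
    rw [← hSS, ← mul_assoc, Matrix.trace_mul_comm, ← mul_assoc]
  have key1 : ∀ i, (S * B * S) i i
      = inner ℂ (v i) ((EuclideanSpace.equiv (Fin D) ℂ).symm (B *ᵥ fun j => S j i)) := by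
    intro i
    rw [PiLp.inner_apply]
    simp only [Matrix.mul_apply, Matrix.mulVec, dotProduct, RCLike.inner_apply,
      happ, hvapp, hconj, Finset.sum_mul, Finset.mul_sum]
    rw [Finset.sum_comm]
    exact Finset.sum_congr rfl fun j _ => Finset.sum_congr rfl fun k _ => by ring
  have hnormv : ∀ i, ‖v i‖ ^ 2 = (σ i i).re := by
    intro i
    rw [EuclideanSpace.norm_eq, Real.sq_sqrt (by positivity), ← hSS]
    simp only [Matrix.mul_apply]
    rw [Complex.re_sum]
    refine Finset.sum_congr rfl fun j _ => ?_
    rw [hvapp, ← hconj i j, mul_comm, Complex.mul_conj]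
    simp [Complex.sq_norm]
  have key2 : ∀ i, ((S * B * S) i i).re ≤ ‖B‖ * ‖v i‖ ^ 2 := by
    intro i
    rw [key1 i]
    have h1 := re_inner_le_norm (𝕜 := ℂ) (v i)
      ((EuclideanSpace.equiv (Fin D) ℂ).symm (B *ᵥ fun j => S j i))
    rw [RCLike.re_to_complex] at h1
    have h2 : ‖(EuclideanSpace.equiv (Fin D) ℂ).symm (B *ᵥ fun j => S j i)‖ ≤ ‖B‖ * ‖v i‖ :=
      B.l2_opNorm_mulVec (v i)
    nlinarith [norm_nonneg (v i), norm_nonneg ((EuclideanSpace.equiv (Fin D) ℂ).symm (B *ᵥ fun j => S j i))]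
  calc ((B * σ).trace).re = ∑ i, ((S * B * S) i i).re := by
        rw [htr, Matrix.trace, Complex.re_sum]; rfl
    _ ≤ ∑ i, ‖B‖ * ‖v i‖ ^ 2 := Finset.sum_le_sum fun i _ => key2 i
    _ = ‖B‖ * σ.trace.re := by
        rw [← Finset.mul_sum, Matrix.trace, Complex.re_sum]
        congr 1
        exact Finset.sum_congr rfl fun i _ => hnormv i

set_option maxHeartbeats 1000000 in
/-- Overlap bound for the stopped process after `n` successful weak measurements of an AGSP. -/
theorem stmt0 (D : ℕ) (hD : 1 ≤ D)
    (K P P₀ ρ : Matrix (Fin D) (Fin D) ℂ)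
    (Γ Δ ε : ℝ) (hΓ : 0 < Γ) (hΔ : 0 ≤ Δ) (hε : 0 ≤ ε)
    (hK : K.IsHermitian)
    (hPherm : P.IsHermitian) (hPproj : P * P = P)
    (hP₀herm : P₀.IsHermitian) (hP₀proj : P₀ * P₀ = P₀)
    (hcomm : K * P = P * K)
    (hGamma : (K * P - (Real.sqrt Γ : ℂ) • P).PosSemidef)
    (hDelta : ‖(1 - P) * K * (1 - P)‖ ≤ Real.sqrt Δ)
    (hPP₀ : ‖P - P₀‖ ≤ ε)
    (hρ : ρ.PosSemidef) (hρtr : ρ.trace = 1)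
    (hover : 0 < (P * ρ).trace.re) (n : ℕ) :
    0 < (K ^ n * ρ * K ^ n).trace.re ∧
      1 - (1 - (P * ρ).trace.re) / (P * ρ).trace.re * (Δ / Γ) ^ n - ε ≤
        (P₀ * (((K ^ n * ρ * K ^ n).trace.re)⁻¹ • (K ^ n * ρ * K ^ n))).trace.re := by
  classical
  obtain ⟨p, hp⟩ : ∃ p : ℝ, p = (P * ρ).trace.re := ⟨_, rfl⟩
  obtain ⟨Q, hQdef⟩ : ∃ Q, Q = 1 - P := ⟨_, rfl⟩
  have hQherm : Q.IsHermitian := hQdef ▸ Matrix.isHermitian_one.sub hPherm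
  have hQproj : Q * Q = Q := by
    rw [hQdef, sub_mul, one_mul, mul_sub, mul_one, hPproj, sub_self, sub_zero]
  have hPpsd : P.PosSemidef := by
    have := Matrix.posSemidef_conjTranspose_mul_self P
    rwa [hPherm.eq, hPproj] at this
  have hQpsd : Q.PosSemidef := by
    have := Matrix.posSemidef_conjTranspose_mul_self Q
    rwa [hQherm.eq, hQproj] at this
  have hKQ : K * Q = Q * K := by
    rw [hQdef, mul_sub, sub_mul, mul_one, one_mul, hcomm]
  obtain ⟨M, hMdef⟩ : ∃ M, M = K * P := ⟨_, rfl⟩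
  obtain ⟨N, hNdef⟩ : ∃ N, N = K * Q := ⟨_, rfl⟩
  obtain ⟨C, hCdef⟩ : ∃ C, C = M - (Real.sqrt Γ : ℂ) • P := ⟨_, rfl⟩
  have hCpsd : C.PosSemidef := by rw [hCdef, hMdef]; exact hGamma
  have hMherm : M.IsHermitian := by
    rw [Matrix.IsHermitian, hMdef, Matrix.conjTranspose_mul, hPherm.eq, hK.eq, ← hcomm]
  have hNherm : N.IsHermitian := by
    rw [Matrix.IsHermitian, hNdef, Matrix.conjTranspose_mul, hQherm.eq, hK.eq, ← hKQ]
  have hcommP : ∀ m : ℕ, K ^ m * P = P * K ^ m := fun m => (Commute.pow_left hcomm m)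
  have hcommQ : ∀ m : ℕ, K ^ m * Q = Q * K ^ m := fun m => (Commute.pow_left hKQ m)
  have hMP1 : M * P = M := by rw [hMdef, mul_assoc, hPproj]
  have hPM1 : P * M = M := by rw [hMdef, ← mul_assoc, ← hcomm, mul_assoc, hPproj]
  have hNQ1 : N * Q = N := by rw [hNdef, mul_assoc, hQproj]
  have hQN1 : Q * N = N := by rw [hNdef, ← mul_assoc, ← hKQ, mul_assoc, hQproj]
  have hMP : ∀ m : ℕ, M ^ m * P = K ^ m * P := by
    intro m
    induction m with
    | zero => simp
    | succ m ih =>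
      calc M ^ (m+1) * P = M * (M ^ m * P) := by rw [pow_succ', mul_assoc]
        _ = K * (P * (K ^ m * P)) := by rw [ih, hMdef, mul_assoc]
        _ = K * (K ^ m * (P * P)) := by rw [← mul_assoc P, ← hcommP m, mul_assoc]
        _ = K ^ (m+1) * P := by rw [hPproj, ← mul_assoc, ← pow_succ']
  have hNQ : ∀ m : ℕ, N ^ m * Q = K ^ m * Q := by
    intro m
    induction m with
    | zero => simp
    | succ m ih =>
      calc N ^ (m+1) * Q = N * (N ^ m * Q) := by rw [pow_succ', mul_assoc]
        _ = K * (Q * (K ^ m * Q)) := by rw [ih, hNdef, mul_assoc]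
        _ = K * (K ^ m * (Q * Q)) := by rw [← mul_assoc Q, ← hcommQ m, mul_assoc]
        _ = K ^ (m+1) * Q := by rw [hQproj, ← mul_assoc, ← pow_succ']
  have hPM : ∀ m : ℕ, P * M ^ m = P * K ^ m := by
    intro m
    have := congrArg Matrix.conjTranspose (hMP m)
    rwa [Matrix.conjTranspose_mul, Matrix.conjTranspose_mul, hPherm.eq, (hMherm.pow m).eq,
      (hK.pow m).eq] at this
  have hQN : ∀ m : ℕ, Q * N ^ m = Q * K ^ m := by
    intro m
    have := congrArg Matrix.conjTranspose (hNQ m)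
    rwa [Matrix.conjTranspose_mul, Matrix.conjTranspose_mul, hQherm.eq, (hNherm.pow m).eq,
      (hK.pow m).eq] at this
  obtain ⟨σP, hσPdef⟩ : ∃ σP, σP = P * ρ * P := ⟨_, rfl⟩
  obtain ⟨σQ, hσQdef⟩ : ∃ σQ, σQ = Q * ρ * Q := ⟨_, rfl⟩
  have hσPpsd : σP.PosSemidef := by
    have := hρ.mul_mul_conjTranspose_same P; rw [hPherm.eq] at this; rwa [hσPdef]
  have hσQpsd : σQ.PosSemidef := by
    have := hρ.mul_mul_conjTranspose_same Q; rw [hQherm.eq] at this; rwa [hσQdef]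
  have hPσP : P * σP = σP := by rw [hσPdef, ← mul_assoc, ← mul_assoc, hPproj]
  have hQσQ : Q * σQ = σQ := by rw [hσQdef, ← mul_assoc, ← mul_assoc, hQproj]
  have hτP : ∀ k, (M ^ k * σP * M ^ k).PosSemidef := by
    intro k
    have := hσPpsd.mul_mul_conjTranspose_same (M ^ k)
    rwa [(hMherm.pow k).eq] at this
  have hτQ : ∀ k, (N ^ k * σQ * N ^ k).PosSemidef := by
    intro k
    have := hσQpsd.mul_mul_conjTranspose_same (N ^ k)
    rwa [(hNherm.pow k).eq] at this
  obtain ⟨f, hf⟩ : ∃ f : ℕ → ℝ, ∀ k, f k = ((M ^ k * σP * M ^ k).trace).re :=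
    ⟨_, fun _ => rfl⟩
  obtain ⟨g, hg⟩ : ∃ g : ℕ → ℝ, ∀ k, g k = ((N ^ k * σQ * N ^ k).trace).re :=
    ⟨_, fun _ => rfl⟩
  -- rewrite rules for normalization
  have hcP : ∀ (m : ℕ) (X : Matrix (Fin D) (Fin D) ℂ),
      K ^ m * (P * X) = P * (K ^ m * X) := fun m X => by
    rw [← mul_assoc, hcommP m, mul_assoc]
  have hcQ : ∀ (m : ℕ) (X : Matrix (Fin D) (Fin D) ℂ),
      K ^ m * (Q * X) = Q * (K ^ m * X) := fun m X => by
    rw [← mul_assoc, hcommQ m, mul_assoc]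
  have hP2 : ∀ X : Matrix (Fin D) (Fin D) ℂ, P * (P * X) = P * X := fun X => by
    rw [← mul_assoc, hPproj]
  have hQ2 : ∀ X : Matrix (Fin D) (Fin D) ℂ, Q * (Q * X) = Q * X := fun X => by
    rw [← mul_assoc, hQproj]
  -- trace identities
  have htrP : ∀ m : ℕ, (P * (K ^ m * ρ * K ^ m)).trace = (M ^ m * σP * M ^ m).trace := by
    intro m
    have e1 : M ^ m * σP * M ^ m = K ^ m * P * ρ * (P * K ^ m) := by
      rw [hσPdef]
      calc M ^ m * (P * ρ * P) * M ^ m = M ^ m * P * ρ * (P * M ^ m) := by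
            simp only [mul_assoc]
        _ = K ^ m * P * ρ * (P * K ^ m) := by rw [hMP, hPM]
    rw [e1, Matrix.trace_mul_cycle (K ^ m * P) ρ (P * K ^ m)]
    rw [show P * (K ^ m * ρ * K ^ m) = P * K ^ m * ρ * K ^ m by simp only [mul_assoc]]
    rw [Matrix.trace_mul_cycle (P * K ^ m) ρ (K ^ m)]
    congr 1
    simp only [mul_assoc, hcP, hP2, hcommP, hPproj]
  have htrQ : ∀ m : ℕ, (Q * (K ^ m * ρ * K ^ m)).trace = (N ^ m * σQ * N ^ m).trace := by
    intro m
    have e1 : N ^ m * σQ * N ^ m = K ^ m * Q * ρ * (Q * K ^ m) := by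
      rw [hσQdef]
      calc N ^ m * (Q * ρ * Q) * N ^ m = N ^ m * Q * ρ * (Q * N ^ m) := by
            simp only [mul_assoc]
        _ = K ^ m * Q * ρ * (Q * K ^ m) := by rw [hNQ, hQN]
    rw [e1, Matrix.trace_mul_cycle (K ^ m * Q) ρ (Q * K ^ m)]
    rw [show Q * (K ^ m * ρ * K ^ m) = Q * K ^ m * ρ * K ^ m by simp only [mul_assoc]]
    rw [Matrix.trace_mul_cycle (Q * K ^ m) ρ (K ^ m)]
    congr 1
    simp only [mul_assoc, hcQ, hQ2, hcommQ, hQproj]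
  -- step identity for powers
  have hstepM : ∀ k, (M ^ (k+1) * σP * M ^ (k+1)).trace
      = ((M * M) * (M ^ k * σP * M ^ k)).trace := by
    intro k
    have hMMk : ∀ X : Matrix (Fin D) (Fin D) ℂ, M ^ k * (M * X) = M * (M ^ k * X) :=
      fun X => by rw [← mul_assoc, ← pow_succ, pow_succ', mul_assoc]
    have e : M ^ (k+1) * σP * M ^ (k+1) = M * (M ^ k * σP * M ^ k) * M := by
      simp only [pow_succ, mul_assoc, hMMk]
    rw [e, Matrix.trace_mul_cycle M (M ^ k * σP * M ^ k) M, ← mul_assoc]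
  have hstepN : ∀ k, (N ^ (k+1) * σQ * N ^ (k+1)).trace
      = ((N * N) * (N ^ k * σQ * N ^ k)).trace := by
    intro k
    have hNNk : ∀ X : Matrix (Fin D) (Fin D) ℂ, N ^ k * (N * X) = N * (N ^ k * X) :=
      fun X => by rw [← mul_assoc, ← pow_succ, pow_succ', mul_assoc]
    have e : N ^ (k+1) * σQ * N ^ (k+1) = N * (N ^ k * σQ * N ^ k) * N := by
      simp only [pow_succ, mul_assoc, hNNk]
    rw [e, Matrix.trace_mul_cycle N (N ^ k * σQ * N ^ k) N, ← mul_assoc]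
  -- P absorbs τ
  have hPτ : ∀ k, P * (M ^ k * σP * M ^ k) = M ^ k * σP * M ^ k := by
    intro k
    have hPMk : P * M ^ k = M ^ k * P := by rw [hPM k, ← hcommP k, hMP k]
    calc P * (M ^ k * σP * M ^ k) = P * M ^ k * (σP * M ^ k) := by simp only [mul_assoc]
      _ = M ^ k * (P * σP) * M ^ k := by rw [hPMk]; simp only [mul_assoc]
      _ = M ^ k * σP * M ^ k := by rw [hPσP]
  -- decomposition of M*M
  have hMM : M * M = C * C + ((2 * Real.sqrt Γ : ℝ) : ℂ) • C + ((Γ : ℝ) : ℂ) • P := by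
    have hcc : (Real.sqrt Γ : ℂ) * (Real.sqrt Γ : ℂ) = ((Γ : ℝ) : ℂ) := by
      rw [← Complex.ofReal_mul, Real.mul_self_sqrt hΓ.le]
    rw [hCdef, ← hcc]
    simp only [sub_mul, mul_sub, Matrix.smul_mul, Matrix.mul_smul, hMP1, hPM1, hPproj,
      smul_smul, Complex.ofReal_mul]
    module
  -- growth of f
  have hfgrow : ∀ k, Γ * f k ≤ f (k + 1) := by
    intro k
    have hCC : (C * C).PosSemidef := by
      have := hCpsd.pow 2; rwa [pow_two] at this
    have h1 : 0 ≤ ((C * C * (M ^ k * σP * M ^ k)).trace).re :=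
      trace_mul_re_nonneg' _ _ hCC (hτP k)
    have h2 : 0 ≤ ((C * (M ^ k * σP * M ^ k)).trace).re :=
      trace_mul_re_nonneg' _ _ hCpsd (hτP k)
    have e : f (k+1) = ((C * C * (M ^ k * σP * M ^ k)).trace).re
        + (2 * Real.sqrt Γ) * ((C * (M ^ k * σP * M ^ k)).trace).re + Γ * f k := by
      rw [hf, hf, hstepM k, hMM]
      have hPt := hPτ k
      simp only [add_mul, Matrix.smul_mul, Matrix.trace_add, Matrix.trace_smul, hPt,
        Complex.add_re, smul_eq_mul, Complex.mul_re,
        Complex.ofReal_re, Complex.ofReal_im, zero_mul, sub_zero]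
    nlinarith [Real.sqrt_nonneg Γ]
  have hf0 : f 0 = p := by
    rw [hf, hp, hσPdef]
    simp only [pow_zero, one_mul, mul_one]
    rw [Matrix.trace_mul_cycle P ρ P, hPproj]
  have hflow : ∀ k, Γ ^ k * p ≤ f k := by
    intro k
    induction k with
    | zero => simp [hf0]
    | succ k ih =>
      have hpk : (0:ℝ) < Γ ^ k := pow_pos hΓ k
      calc Γ ^ (k+1) * p = Γ * (Γ ^ k * p) := by ring
        _ ≤ Γ * f k := by nlinarith
        _ ≤ f (k+1) := hfgrow k
  -- decay of g
  have hDelta' : ‖N‖ ≤ Real.sqrt Δ := by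
    have e : (1 - P) * K * (1 - P) = N := by
      rw [← hQdef, hNdef, ← hKQ, mul_assoc, hQproj]
    rwa [e] at hDelta
  have hNN : ‖N * N‖ ≤ Δ := by
    have h1 : ‖N * N‖ = ‖N‖ * ‖N‖ := by
      rw [show ‖N * N‖ = ‖Nᴴ * N‖ by rw [hNherm.eq]]
      exact N.l2_opNorm_conjTranspose_mul_self
    rw [h1, ← Real.mul_self_sqrt hΔ]
    exact mul_le_mul hDelta' hDelta' (norm_nonneg N) (Real.sqrt_nonneg Δ)
  have hgnonneg : ∀ k, 0 ≤ g k := fun k => hg k ▸ trace_re_nonneg' (hτQ k)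
  have hgdecay : ∀ k, g (k + 1) ≤ Δ * g k := by
    intro k
    rw [hg, hg, hstepN k]
    calc ((N * N * (N ^ k * σQ * N ^ k)).trace).re
        ≤ ‖N * N‖ * ((N ^ k * σQ * N ^ k).trace).re :=
          trace_mul_re_le_norm _ _ (hτQ k)
      _ ≤ Δ * ((N ^ k * σQ * N ^ k).trace).re := by
          have := trace_re_nonneg' (hτQ k)
          nlinarith
  have hg0 : g 0 = 1 - p := by
    rw [hg, hp, hσQdef]
    simp only [pow_zero, one_mul, mul_one]
    rw [Matrix.trace_mul_cycle Q ρ Q, hQproj, hQdef, sub_mul, one_mul,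
      Matrix.trace_sub, hρtr]
    simp [Complex.sub_re]
  have hghigh : ∀ k, g k ≤ Δ ^ k * (1 - p) := by
    intro k
    induction k with
    | zero => simp [hg0]
    | succ k ih =>
      calc g (k+1) ≤ Δ * g k := hgdecay k
        _ ≤ Δ * (Δ ^ k * (1 - p)) := by nlinarith [hgnonneg k]
        _ = Δ ^ (k+1) * (1 - p) := by ring
  -- totals
  obtain ⟨ρ', hρ'def⟩ : ∃ ρ', ρ' = K ^ n * ρ * K ^ n := ⟨_, rfl⟩
  have hρ'psd : ρ'.PosSemidef := by
    have := hρ.mul_mul_conjTranspose_same (K ^ n)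
    rw [(hK.pow n).eq] at this; rwa [hρ'def]
  have hsplit : ρ'.trace.re = f n + g n := by
    have h1 : P * ρ' + Q * ρ' = ρ' := by
      rw [hQdef, sub_mul, one_mul]; abel
    have h2 := congrArg (fun X : Matrix (Fin D) (Fin D) ℂ => (Matrix.trace X).re) h1
    simp only [Matrix.trace_add, Complex.add_re] at h2
    rw [hf, hg, ← htrP n, ← htrQ n, ← hρ'def]
    exact h2.symm
  rw [← hp] at hover
  have hT : 0 < ρ'.trace.re := by
    have h1 := hflow n
    have h2 := hgnonneg n
    have h3 : (0:ℝ) < Γ ^ n * p := by positivity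
    rw [hsplit]; linarith
  have hTgoal : 0 < (K ^ n * ρ * K ^ n).trace.re := by rw [← hρ'def]; exact hT
  refine ⟨hTgoal, ?_⟩
  rw [← hρ'def, ← hp]
  -- final bound
  have htrsm : (P₀ * ((ρ'.trace.re)⁻¹ • ρ')).trace.re = (ρ'.trace.re)⁻¹ * (P₀ * ρ').trace.re := by
    rw [mul_smul_comm, Matrix.trace_smul]
    simp [Complex.real_smul, Complex.mul_re]
  rw [htrsm]
  have hP₀split : ((P₀ * ρ').trace).re = ((P * ρ').trace).re - (((P - P₀) * ρ').trace).re := by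
    rw [sub_mul, Matrix.trace_sub]
    simp [Complex.sub_re]
  have hPmP0 : (((P - P₀) * ρ').trace).re ≤ ε * ρ'.trace.re := by
    calc (((P - P₀) * ρ').trace).re ≤ ‖P - P₀‖ * ρ'.trace.re :=
          trace_mul_re_le_norm _ _ hρ'psd
      _ ≤ ε * ρ'.trace.re := mul_le_mul_of_nonneg_right hPP₀ hT.le
  have hPρ' : ((P * ρ').trace).re = f n := by
    rw [hρ'def, htrP n, hf]
  -- arithmetic
  set T := ρ'.trace.re with hTdef
  have hfn : f n = T - g n := by rw [hsplit]; ring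
  have hge : T⁻¹ * (P₀ * ρ').trace.re ≥ 1 - g n / T - ε := by
    rw [hP₀split, hPρ', hfn]
    have h1 : (((P - P₀) * ρ').trace).re ≤ ε * T := hPmP0
    have h2 : T⁻¹ * (T - g n - ((P - P₀) * ρ').trace.re) ≥ T⁻¹ * (T - g n - ε * T) := by
      apply mul_le_mul_of_nonneg_left _ (inv_nonneg.mpr hT.le)
      linarith
    calc T⁻¹ * (T - g n - ((P - P₀) * ρ').trace.re) ≥ T⁻¹ * (T - g n - ε * T) := h2
      _ = 1 - g n / T - ε := by field_simp
  have hkey : g n / T ≤ (1 - p) / p * (Δ / Γ) ^ n := by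
    have h1 : g n ≤ Δ ^ n * (1 - p) := hghigh n
    have h2 : Γ ^ n * p ≤ T := by
      rw [hsplit]; have := hgnonneg n; linarith [hflow n]
    have h3 : (0:ℝ) < Γ ^ n * p := by positivity
    calc g n / T ≤ g n / (Γ ^ n * p) := by
          exact div_le_div_of_nonneg_left (hgnonneg n) h3 h2
      _ ≤ (Δ ^ n * (1 - p)) / (Γ ^ n * p) := (div_le_div_iff_of_pos_right h3).mpr h1
      _ = (1 - p) / p * (Δ / Γ) ^ n := by
          rw [div_pow]; field_simp
  linarith
end

section
/- Let K be a Hermitian D×D complex matrix, let Π and Π₀ be orthogonal projectors with N := tr Π > 0, and let Γ > 0, Δ ≥ 0 and ε ≥ 0 be reals such that KΠ = ΠK, KΠ ≥ √Γ·Π in the Loewner order, ‖(I−Π)K(I−Π)‖ ≤ √Δ, and ‖Π − Π₀‖ ≤ ε. Then for every natural number n, tr(K^{2n}) > 0 and tr(Π₀ · K^{2n}/tr(K^{2n})) ≥ 1 − ε − (D/N)·(Δ/Γ)ⁿ. (The matrix K^{2n}/tr(K^{2n}) is the state obtained after n successful measurements starting from the maximally mixed state I/D.) -/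
open scoped Matrix.Norms.L2Operator ComplexOrder

namespace StmtAux
open Matrix
variable {D : ℕ}

lemma trace_re_nonneg {A : Matrix (Fin D) (Fin D) ℂ} (hA : A.PosSemidef) :
    0 ≤ A.trace.re := by
  have h : ∀ i, 0 ≤ (A i i).re := by
    intro i
    have := hA.re_dotProduct_nonneg (Pi.single i 1)
    simpa [dotProduct, Pi.single_apply, apply_ite] using this
  simp only [Matrix.trace, Matrix.diag, Complex.re_sum]
  exact Finset.sum_nonneg fun i _ => h i

lemma trace_mul_re_nonneg {A B : Matrix (Fin D) (Fin D) ℂ} (hA : A.PosSemidef)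
    (hB : B.PosSemidef) : 0 ≤ (A * B).trace.re := by
  obtain ⟨C, rfl⟩ : ∃ C : Matrix (Fin D) (Fin D) ℂ, B = Cᴴ * C := by
    open scoped MatrixOrder in
    obtain ⟨X, hX, -, rfl⟩ := CFC.exists_sqrt_of_isSelfAdjoint_of_quasispectrumRestricts
      hB.isHermitian (QuasispectrumRestricts.nnreal_of_nonneg hB.nonneg)
    exact ⟨X, by rw [← Matrix.star_eq_conjTranspose, hX.star_eq]⟩
  have h : (A * (Cᴴ * C)).trace = (C * A * Cᴴ).trace := by
    rw [← Matrix.mul_assoc, Matrix.trace_mul_cycle]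
  rw [h]
  exact trace_re_nonneg (hA.mul_mul_conjTranspose_same C)

lemma im_dot_self (x : Fin D → ℂ) : (star x ⬝ᵥ x).im = 0 := by
  simp [dotProduct, Complex.im_sum, Complex.mul_im]
  exact Finset.sum_eq_zero fun i _ => by ring

lemma im_dot_herm {M : Matrix (Fin D) (Fin D) ℂ} (hM : M.IsHermitian) (x : Fin D → ℂ) :
    (star x ⬝ᵥ (M *ᵥ x)).im = 0 := by
  rw [← Complex.conj_eq_iff_im]
  have h1 : (starRingEnd ℂ) (star x ⬝ᵥ (M *ᵥ x)) = star (M *ᵥ x) ⬝ᵥ x := by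
    rw [Matrix.star_dotProduct]; exact star_star _
  rw [h1, Matrix.star_mulVec, ← Matrix.dotProduct_mulVec, hM.eq]

lemma abs_re_dot_le (M : Matrix (Fin D) (Fin D) ℂ) (x : Fin D → ℂ) :
    |(star x ⬝ᵥ (M *ᵥ x)).re| ≤ ‖M‖ * (star x ⬝ᵥ x).re := by
  set y : EuclideanSpace ℂ (Fin D) := WithLp.toLp 2 x with hy
  set z : EuclideanSpace ℂ (Fin D) := WithLp.toLp 2 (M *ᵥ x) with hz
  have h1 : star x ⬝ᵥ (M *ᵥ x) = inner ℂ y z := by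
    rw [EuclideanSpace.inner_eq_star_dotProduct, dotProduct_comm]
  have h2 : (star x ⬝ᵥ x).re = ‖y‖ ^ 2 := by
    have h : star x ⬝ᵥ x = inner ℂ y y := by
      rw [EuclideanSpace.inner_eq_star_dotProduct, dotProduct_comm]
    have := inner_self_eq_norm_sq (𝕜 := ℂ) y
    rw [h, ← this]
    rfl
  have h3 : ‖z‖ ≤ ‖M‖ * ‖y‖ := M.l2_opNorm_mulVec y
  have h4 : |(inner ℂ y z : ℂ).re| ≤ ‖(inner ℂ y z : ℂ)‖ := Complex.abs_re_le_norm _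
  have h5 : ‖(inner ℂ y z : ℂ)‖ ≤ ‖y‖ * ‖z‖ := norm_inner_le_norm y z
  rw [h1, h2]
  calc |(inner ℂ y z : ℂ).re| ≤ ‖y‖ * ‖z‖ := h4.trans h5
    _ ≤ ‖y‖ * (‖M‖ * ‖y‖) := mul_le_mul_of_nonneg_left h3 (norm_nonneg _)
    _ = ‖M‖ * ‖y‖ ^ 2 := by ring

lemma psd_smul {A : Matrix (Fin D) (Fin D) ℂ} (hA : A.PosSemidef) {r : ℝ} (hr : 0 ≤ r) :
    ((r : ℂ) • A).PosSemidef := by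
  refine Matrix.posSemidef_iff_dotProduct_mulVec.mpr ⟨?_, ?_⟩
  · unfold Matrix.IsHermitian
    rw [Matrix.conjTranspose_smul, hA.1.eq]
    congr 1
    simp [Complex.star_def, Complex.conj_ofReal]
  · intro x
    have := hA.dotProduct_mulVec_nonneg x
    rw [Matrix.smul_mulVec, dotProduct_smul, smul_eq_mul]
    exact mul_nonneg (Complex.zero_le_real.mpr hr) this

lemma psd_smul_one_sub {M : Matrix (Fin D) (Fin D) ℂ} (hM : M.IsHermitian) {c : ℝ}
    (hc : ‖M‖ ≤ c) : (((c : ℂ) • 1 - M) : Matrix (Fin D) (Fin D) ℂ).PosSemidef := by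
  refine Matrix.posSemidef_iff_dotProduct_mulVec.mpr ⟨?_, ?_⟩
  · unfold Matrix.IsHermitian
    rw [Matrix.conjTranspose_sub, Matrix.conjTranspose_smul, Matrix.conjTranspose_one, hM.eq]
    simp [Complex.star_def, Complex.conj_ofReal]
  · intro x
    have hexp : star x ⬝ᵥ (((c : ℂ) • 1 - M) *ᵥ x) =
        (c : ℂ) * (star x ⬝ᵥ x) - star x ⬝ᵥ (M *ᵥ x) := by
      rw [Matrix.sub_mulVec, dotProduct_sub, Matrix.smul_mulVec,
        Matrix.one_mulVec, dotProduct_smul, smul_eq_mul]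
    rw [hexp, Complex.nonneg_iff]
    have hq0 : 0 ≤ (star x ⬝ᵥ x).re := by
      have := dotProduct_star_self_nonneg x
      exact (Complex.nonneg_iff.mp this).1
    have habs := abs_re_dot_le M x
    constructor
    · simp only [Complex.sub_re, Complex.mul_re, Complex.ofReal_re, Complex.ofReal_im,
        zero_mul, sub_zero]
      have h1 : (star x ⬝ᵥ (M *ᵥ x)).re ≤ ‖M‖ * (star x ⬝ᵥ x).re := (abs_le.mp habs).2
      nlinarith [norm_nonneg M]
    · simp [Complex.sub_im, Complex.mul_im, Complex.ofReal_im, im_dot_self x, im_dot_herm hM x]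

lemma trace_re_le_card_mul {S : Matrix (Fin D) (Fin D) ℂ} (hS : S.PosSemidef) {c : ℝ}
    (hc : ‖S‖ ≤ c) : S.trace.re ≤ D * c := by
  have h := trace_re_nonneg (psd_smul_one_sub hS.isHermitian hc)
  rw [Matrix.trace_sub, Matrix.trace_smul, Matrix.trace_one] at h
  simp only [Complex.sub_re, smul_eq_mul, Complex.mul_re, Complex.ofReal_re, Complex.ofReal_im,
    Complex.natCast_re, Complex.natCast_im, zero_mul, sub_zero, Fintype.card_fin] at h
  linarith

/-- `tr(M*S).re ≤ ‖M‖ * tr(S).re` for `M` Hermitian and `S` PSD. -/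
lemma trace_mul_re_le {M S : Matrix (Fin D) (Fin D) ℂ} (hM : M.IsHermitian)
    (hS : S.PosSemidef) {c : ℝ} (hc : ‖M‖ ≤ c) : (M * S).trace.re ≤ c * S.trace.re := by
  have h := trace_mul_re_nonneg (psd_smul_one_sub hM hc) hS
  have hexp : ((c : ℂ) • 1 - M) * S = (c : ℂ) • S - M * S := by
    rw [Matrix.sub_mul, Matrix.smul_mul, Matrix.one_mul]
  rw [hexp, Matrix.trace_sub, Matrix.trace_smul] at h
  simp only [Complex.sub_re, smul_eq_mul, Complex.mul_re, Complex.ofReal_re, Complex.ofReal_im,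
    zero_mul, sub_zero] at h
  linarith

end StmtAux

open Matrix StmtAux in
/-- Overlap bound for the state `K^(2n)/tr(K^(2n))` obtained after `n` successful measurements
starting from the maximally mixed state. -/
theorem stmt1 (D : ℕ) (hD : 1 ≤ D)
    (K P P₀ : Matrix (Fin D) (Fin D) ℂ)
    (Γ Δ ε : ℝ) (hΓ : 0 < Γ) (hΔ : 0 ≤ Δ) (hε : 0 ≤ ε)
    (hK : K.IsHermitian)
    (hPherm : P.IsHermitian) (hPproj : P * P = P)
    (hP₀herm : P₀.IsHermitian) (hP₀proj : P₀ * P₀ = P₀)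
    (hN : 0 < P.trace.re)
    (hcomm : K * P = P * K)
    (hGamma : (K * P - (Real.sqrt Γ : ℂ) • P).PosSemidef)
    (hDelta : ‖(1 - P) * K * (1 - P)‖ ≤ Real.sqrt Δ)
    (hPP₀ : ‖P - P₀‖ ≤ ε)
    (n : ℕ) :
    0 < (K ^ (2 * n)).trace.re ∧
      1 - ε - (D / P.trace.re) * (Δ / Γ) ^ n ≤
        (P₀ * (((K ^ (2 * n)).trace.re)⁻¹ • K ^ (2 * n))).trace.re := by
  classical
  set c : ℝ := Real.sqrt Γ with hcdef
  set A : Matrix (Fin D) (Fin D) ℂ := K * P with hAdef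
  set Q : Matrix (Fin D) (Fin D) ℂ := 1 - P with hQdef
  set B : Matrix (Fin D) (Fin D) ℂ := A - (c : ℂ) • P with hBdef
  have hKP : K * P = P * K := by rw [← hAdef]; exact hcomm
  -- basic algebra
  have hQherm : Qᴴ = Q := by
    rw [hQdef, Matrix.conjTranspose_sub, Matrix.conjTranspose_one, hPherm.eq]
  have hQproj : Q * Q = Q := by
    have h : Q * Q = 1 - P - P + P * P := by rw [hQdef]; noncomm_ring
    rw [hPproj] at h
    rw [h, hQdef]; abel
  have hcommQ : K * Q = Q * K := by
    rw [hQdef, Matrix.mul_sub, Matrix.sub_mul, Matrix.mul_one, Matrix.one_mul, hKP]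
  have hPpow : ∀ m : ℕ, P ^ m * P = P := by
    intro m
    induction m with
    | zero => simp
    | succ k ih => rw [pow_succ, Matrix.mul_assoc, hPproj, ih]
  have hQpow : ∀ m : ℕ, Q ^ m * Q = Q := by
    intro m
    induction m with
    | zero => simp
    | succ k ih => rw [pow_succ, Matrix.mul_assoc, hQproj, ih]
  have hAherm : Aᴴ = A := by
    rw [hAdef, Matrix.conjTranspose_mul, hPherm.eq, hK.eq, hKP]
  have hAP : A * P = A := by rw [hAdef, Matrix.mul_assoc, hPproj]
  have hPA : P * A = A := by
    rw [hAdef, ← Matrix.mul_assoc, ← hKP, Matrix.mul_assoc, hPproj]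
  have hc0 : 0 ≤ c := Real.sqrt_nonneg Γ
  have hc2 : (c : ℂ) * (c : ℂ) = (Γ : ℂ) := by
    rw [← Complex.ofReal_mul, Real.mul_self_sqrt hΓ.le]
  have hBherm : Bᴴ = B := hGamma.1
  have hPpsd : P.PosSemidef := by
    have h := Matrix.posSemidef_conjTranspose_mul_self P
    rwa [hPherm.eq, hPproj] at h
  have hQpsd : Q.PosSemidef := by
    have h := Matrix.posSemidef_conjTranspose_mul_self Q
    rwa [hQherm, hQproj] at h
  -- A² ≥ Γ P
  have hA2 : (A * A - (Γ : ℂ) • P).PosSemidef := by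
    have key : A * A - (Γ : ℂ) • P = B * B + ((2 * c : ℝ) : ℂ) • B := by
      have hBB : B * B = A * A - (c : ℂ) • A - (c : ℂ) • A + ((Γ : ℂ)) • P := by
        rw [hBdef]
        rw [Matrix.sub_mul, Matrix.mul_sub, Matrix.mul_sub, Matrix.smul_mul, Matrix.mul_smul,
          Matrix.smul_mul, hAP, hPA, Matrix.mul_smul, hPproj, smul_smul, hc2]
        abel
      rw [hBB, hBdef, ← hc2]
      push_cast
      match_scalars <;> ring
    rw [key]
    have h1 : (B * B).PosSemidef := by
      have h := Matrix.posSemidef_conjTranspose_mul_self B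
      rwa [hBherm] at h
    exact h1.add (psd_smul hGamma (by linarith))
  -- ladder : A^(2m) ≥ Γ^m P
  have ladder : ∀ m : ℕ, (A ^ (2 * m) - ((Γ ^ m : ℝ) : ℂ) • P).PosSemidef := by
    intro m
    induction m with
    | zero =>
      simpa [hQdef] using hQpsd
    | succ k ih =>
      have hpow : A ^ (2 * (k + 1)) = A * A ^ (2 * k) * A := by
        rw [show 2 * (k + 1) = 1 + 2 * k + 1 by ring, pow_add, pow_add, pow_one]
      have key : A ^ (2 * (k + 1)) - ((Γ ^ (k + 1) : ℝ) : ℂ) • P =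
          A * (A ^ (2 * k) - ((Γ ^ k : ℝ) : ℂ) • P) * A +
            ((Γ ^ k : ℝ) : ℂ) • (A * A - (Γ : ℂ) • P) := by
        rw [hpow]
        have h1 : A * (A ^ (2 * k) - ((Γ ^ k : ℝ) : ℂ) • P) * A
            = A * A ^ (2 * k) * A - ((Γ ^ k : ℝ) : ℂ) • (A * A) := by
          rw [Matrix.mul_sub, Matrix.sub_mul, Matrix.mul_smul, Matrix.smul_mul, hAP]
        rw [h1]
        push_cast
        match_scalars <;> ring
      rw [key]
      have h1 : (A * (A ^ (2 * k) - ((Γ ^ k : ℝ) : ℂ) • P) * A).PosSemidef := by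
        have h := ih.mul_mul_conjTranspose_same A
        rwa [hAherm] at h
      exact h1.add (psd_smul hA2 (pow_nonneg hΓ.le k))
  -- K^{2n} pieces
  have hKpowherm : ∀ m : ℕ, (K ^ m)ᴴ = K ^ m := fun m => (hK.pow m).eq
  have hKpsd : (K ^ (2 * n)).PosSemidef := by
    have h := Matrix.posSemidef_conjTranspose_mul_self (K ^ n)
    rwa [hKpowherm n, ← pow_add, show n + n = 2 * n by ring] at h
  have hcommKP : K ^ (2 * n) * P = P * K ^ (2 * n) :=
    ((Commute.pow_left (hKP) (2 * n)))
  have hcommKQ : K ^ (2 * n) * Q = Q * K ^ (2 * n) :=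
    ((Commute.pow_left (hcommQ) (2 * n)))
  -- P-block trace lower bound
  have hApow : A ^ (2 * n) = K ^ (2 * n) * P ^ (2 * n) := by
    rw [hAdef]; exact Commute.mul_pow hKP (2 * n)
  have hPAP : P * A ^ (2 * n) * P = P * K ^ (2 * n) * P := by
    rw [hApow, Matrix.mul_assoc P, Matrix.mul_assoc (K ^ (2 * n)), hPpow, ← Matrix.mul_assoc]
  have hPblock : ((Γ ^ n : ℝ)) * P.trace.re ≤ (P * K ^ (2 * n) * P).trace.re := by
    have h := (ladder n).mul_mul_conjTranspose_same P
    rw [hPherm.eq] at h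
    have hexp : P * (A ^ (2 * n) - ((Γ ^ n : ℝ) : ℂ) • P) * P =
        P * K ^ (2 * n) * P - ((Γ ^ n : ℝ) : ℂ) • P := by
      rw [Matrix.mul_sub, Matrix.sub_mul, Matrix.mul_smul, Matrix.smul_mul, hPproj, hPAP,
        hPproj]
    rw [hexp] at h
    have h2 := trace_re_nonneg h
    rw [Matrix.trace_sub, Matrix.trace_smul] at h2
    simp only [Complex.sub_re, smul_eq_mul, Complex.mul_re, Complex.ofReal_re,
      Complex.ofReal_im, zero_mul, sub_zero] at h2
    linarith
  set a : ℝ := (P * K ^ (2 * n) * P).trace.re with hadef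
  set b : ℝ := (Q * K ^ (2 * n) * Q).trace.re with hbdef
  have hQKQpsd : (Q * K ^ (2 * n) * Q).PosSemidef := by
    have h := hKpsd.mul_mul_conjTranspose_same Q
    rwa [hQherm] at h
  have hb0 : 0 ≤ b := trace_re_nonneg hQKQpsd
  have ha0 : 0 < a := lt_of_lt_of_le (by positivity) hPblock
  -- Q-block trace upper bound
  have hQtr : Q.trace.re ≤ (D : ℝ) := by
    rw [hQdef, Matrix.trace_sub, Matrix.trace_one]
    simp only [Complex.sub_re, Complex.natCast_re, Fintype.card_fin]
    linarith
  have hQblock : b ≤ (D : ℝ) * Δ ^ n := by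
    rcases Nat.eq_zero_or_pos n with hn0 | hnpos
    · have h : Q * K ^ (2 * n) * Q = Q := by
        rw [hn0]; simp [hQproj]
      rw [hbdef, h, hn0]
      simpa using hQtr
    · set M : Matrix (Fin D) (Fin D) ℂ := Q * K * Q with hMdef
      have hMKQ : M = K * Q := by
        rw [hMdef, ← hcommQ, Matrix.mul_assoc, hQproj]
      have hMherm : Mᴴ = M := by
        rw [hMdef, Matrix.conjTranspose_mul, Matrix.conjTranspose_mul, hQherm, hK.eq,
          Matrix.mul_assoc]
      have hMpowpsd : (M ^ (2 * n)).PosSemidef := by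
        have h := Matrix.posSemidef_conjTranspose_mul_self (M ^ n)
        rwa [(Matrix.IsHermitian.pow hMherm n).eq, ← pow_add,
          show n + n = 2 * n by ring] at h
      have hMeq : Q * K ^ (2 * n) * Q = Q * M ^ (2 * n) * Q := by
        rw [hMKQ, Commute.mul_pow hcommQ (2 * n), ← Matrix.mul_assoc,
          Matrix.mul_assoc (Q * K ^ (2 * n)), hQpow, Matrix.mul_assoc]
      have hb1 : b ≤ (M ^ (2 * n)).trace.re := by
        have hcyc : (Q * M ^ (2 * n) * Q).trace = (Q * Q * M ^ (2 * n)).trace :=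
          Matrix.trace_mul_cycle Q (M ^ (2 * n)) Q
        have hQM : Q * M ^ (2 * n) = M ^ (2 * n) - P * M ^ (2 * n) := by
          rw [hQdef, Matrix.sub_mul, Matrix.one_mul]
        have hPM : 0 ≤ (P * M ^ (2 * n)).trace.re := trace_mul_re_nonneg hPpsd hMpowpsd
        rw [hbdef, hMeq, hcyc, hQproj, hQM, Matrix.trace_sub]
        simp only [Complex.sub_re]
        linarith
      have hnorm : ‖M ^ (2 * n)‖ ≤ Real.sqrt Δ ^ (2 * n) := by
        calc ‖M ^ (2 * n)‖ ≤ ‖M‖ ^ (2 * n) := norm_pow_le' M (by omega)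
          _ ≤ Real.sqrt Δ ^ (2 * n) := pow_le_pow_left₀ (norm_nonneg M) hDelta _
      have hb2 : (M ^ (2 * n)).trace.re ≤ (D : ℝ) * (Real.sqrt Δ ^ (2 * n)) :=
        trace_re_le_card_mul hMpowpsd hnorm
      have hsq : Real.sqrt Δ ^ (2 * n) = Δ ^ n := by
        rw [pow_mul, Real.sq_sqrt hΔ]
      rw [hsq] at hb2
      linarith
  -- splitting of K^(2n)
  have hPKP : P * K ^ (2 * n) * P = K ^ (2 * n) * P := by
    rw [hcommKP.symm, Matrix.mul_assoc, hPproj]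
  have hQKQ : Q * K ^ (2 * n) * Q = K ^ (2 * n) * Q := by
    rw [hcommKQ.symm, Matrix.mul_assoc, hQproj]
  have hsplit : K ^ (2 * n) = P * K ^ (2 * n) * P + Q * K ^ (2 * n) * Q := by
    rw [hPKP, hQKQ, ← Matrix.mul_add, hQdef]
    simp
  have hs : (K ^ (2 * n)).trace.re = a + b := by
    conv_lhs => rw [hsplit]
    rw [Matrix.trace_add, Complex.add_re]
  have hspos : 0 < (K ^ (2 * n)).trace.re := by rw [hs]; linarith
  refine ⟨hspos, ?_⟩
  -- overlap with P₀
  set t : ℝ := ((P - P₀) * K ^ (2 * n)).trace.re with htdef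
  have hRherm : (P - P₀).IsHermitian := hPherm.sub hP₀herm
  have ht : t ≤ ε * (a + b) := by
    have h := trace_mul_re_le hRherm hKpsd hPP₀
    rwa [hs] at h
  have hPtr : (P * K ^ (2 * n)).trace.re = a := by
    have hcyc : (P * K ^ (2 * n) * P).trace = (P * P * K ^ (2 * n)).trace :=
      Matrix.trace_mul_cycle P (K ^ (2 * n)) P
    rw [hadef, hcyc, hPproj]
  have hP0tr : (P₀ * K ^ (2 * n)).trace.re = a - t := by
    have h : (P - P₀) * K ^ (2 * n) = P * K ^ (2 * n) - P₀ * K ^ (2 * n) :=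
      Matrix.sub_mul _ _ _
    rw [htdef, h, Matrix.trace_sub, Complex.sub_re, hPtr]
    ring
  have hgoal : (P₀ * (((K ^ (2 * n)).trace.re)⁻¹ • K ^ (2 * n))).trace.re
      = (a + b)⁻¹ * (a - t) := by
    rw [Matrix.mul_smul, Matrix.trace_smul, Complex.real_smul, Complex.mul_re]
    simp only [Complex.ofReal_re, Complex.ofReal_im, zero_mul, sub_zero]
    rw [hP0tr, hs]
  rw [hgoal]
  -- final arithmetic
  set r : ℝ := ((D : ℝ) / P.trace.re) * (Δ / Γ) ^ n with hrdef
  have hr0 : 0 ≤ r := by rw [hrdef]; positivity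
  have hbr : b ≤ r * a := by
    have h1 : r * (Γ ^ n * P.trace.re) = (D : ℝ) * Δ ^ n := by
      have hNne : P.trace.re ≠ 0 := ne_of_gt hN
      have hgn : Γ ^ n ≠ 0 := pow_ne_zero _ (ne_of_gt hΓ)
      rw [hrdef, div_pow]
      field_simp
    have h2 : r * (Γ ^ n * P.trace.re) ≤ r * a := by
      apply mul_le_mul_of_nonneg_left hPblock hr0
    linarith
  have hab : 0 < a + b := by linarith
  rw [inv_mul_eq_div, le_div_iff₀ hab]
  nlinarith [mul_nonneg hr0 hb0, ht, hbr]
end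

section
/- Let K be a Hermitian D×D complex matrix, let Π and Π₀ be orthogonal projectors with N := tr Π > 0, and let reals Γ, Δ, ε with 0 < Δ < Γ and ε ≥ 0 satisfy KΠ = ΠK, KΠ ≥ √Γ·Π in the Loewner order, ‖(I−Π)K(I−Π)‖ ≤ √Δ, and ‖Π − Π₀‖ ≤ ε. Then for every η with 0 < η < 1 and every natural number n with n ≥ log(D/(N·η)) / log(Γ/Δ), one has tr(Π₀ · K^{2n}/tr(K^{2n})) ≥ 1 − ε − η. Hence a circuit depth of n = O(log(D/(Nη))/log(Γ/Δ)) suffices to reach ground-space overlap 1 − ε − η. -/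
open scoped Matrix.Norms.L2Operator ComplexOrder

namespace Stmt2Aux

open Matrix

variable {D : ℕ}

lemma entry_dot (A : Matrix (Fin D) (Fin D) ℂ) (i : Fin D) :
    dotProduct (star (Pi.single i 1)) (A *ᵥ Pi.single i 1) = A i i := by
  simp [dotProduct, Matrix.mulVec, Pi.single_apply, apply_ite star, mul_ite, ite_mul]

lemma conj_entry_dot (H M : Matrix (Fin D) (Fin D) ℂ) (i : Fin D) :
    (Mᴴ * H * M) i i
      = dotProduct (star (M *ᵥ Pi.single i 1)) (H *ᵥ (M *ᵥ Pi.single i 1)) := by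
  rw [star_mulVec, dotProduct_mulVec, Matrix.vecMul_vecMul, ← dotProduct_mulVec,
    Matrix.mulVec_mulVec]
  exact (entry_dot (Mᴴ * H * M) i).symm

lemma quad_abs_le (H : Matrix (Fin D) (Fin D) ℂ) (v : Fin D → ℂ) :
    |(dotProduct (star v) (H *ᵥ v)).re| ≤ ‖H‖ * (dotProduct (star v) v).re := by
  have h1 : dotProduct (star v) (H *ᵥ v)
      = @inner ℂ _ _ ((WithLp.equiv 2 (Fin D → ℂ)).symm v)
          ((WithLp.equiv 2 (Fin D → ℂ)).symm (H *ᵥ v)) :=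
    by rw [dotProduct_comm]; rfl
  have h2 : dotProduct (star v) v
      = @inner ℂ _ _ ((WithLp.equiv 2 (Fin D → ℂ)).symm v)
          ((WithLp.equiv 2 (Fin D → ℂ)).symm v) :=
    by rw [dotProduct_comm]; rfl
  set v' : EuclideanSpace ℂ (Fin D) := (WithLp.equiv 2 (Fin D → ℂ)).symm v
  have hw : ‖(WithLp.equiv 2 (Fin D → ℂ)).symm (H *ᵥ v)‖ ≤ ‖H‖ * ‖v'‖ :=
    H.l2_opNorm_mulVec v'
  calc |(dotProduct (star v) (H *ᵥ v)).re|
      ≤ ‖dotProduct (star v) (H *ᵥ v)‖ := Complex.abs_re_le_norm _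
    _ = ‖@inner ℂ _ _ v' ((WithLp.equiv 2 (Fin D → ℂ)).symm (H *ᵥ v))‖ := by rw [h1]
    _ ≤ ‖v'‖ * ‖(WithLp.equiv 2 (Fin D → ℂ)).symm (H *ᵥ v)‖ := norm_inner_le_norm _ _
    _ ≤ ‖v'‖ * (‖H‖ * ‖v'‖) := mul_le_mul_of_nonneg_left hw (norm_nonneg _)
    _ = ‖H‖ * (‖v'‖ * ‖v'‖) := by ring
    _ = ‖H‖ * RCLike.re (@inner ℂ _ _ v' v') := by rw [@inner_self_eq_norm_mul_norm ℂ]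
    _ = ‖H‖ * (dotProduct (star v) v).re := by rw [h2]; rfl

lemma norm_single_one (i : Fin D) :
    ‖((WithLp.equiv 2 (Fin D → ℂ)).symm (Pi.single i 1) : EuclideanSpace ℂ (Fin D))‖ = 1 := by
  rw [EuclideanSpace.norm_eq]
  simp [Pi.single_apply, apply_ite]

lemma col_sq (M : Matrix (Fin D) (Fin D) ℂ) (i : Fin D) :
    ((Mᴴ * M) i i).re ≤ ‖M‖ ^ 2 := by
  have h := conj_entry_dot 1 M i
  rw [Matrix.mul_one] at h
  set c := M *ᵥ Pi.single i 1
  have h2 : dotProduct (star c) c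
      = @inner ℂ _ _ ((WithLp.equiv 2 (Fin D → ℂ)).symm c)
          ((WithLp.equiv 2 (Fin D → ℂ)).symm c) :=
    by rw [dotProduct_comm]; rfl
  have hc : ‖((WithLp.equiv 2 (Fin D → ℂ)).symm c : EuclideanSpace ℂ (Fin D))‖ ≤ ‖M‖ := by
    have := M.l2_opNorm_mulVec ((WithLp.equiv 2 (Fin D → ℂ)).symm (Pi.single i 1))
    simpa [norm_single_one, c] using this
  have heq : ((Mᴴ * M) i i).re
      = ‖((WithLp.equiv 2 (Fin D → ℂ)).symm c : EuclideanSpace ℂ (Fin D))‖ ^ 2 := by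
    rw [h, Matrix.one_mulVec, h2]
    rw [show (@inner ℂ _ _ ((WithLp.equiv 2 (Fin D → ℂ)).symm c)
        ((WithLp.equiv 2 (Fin D → ℂ)).symm c) : ℂ).re
      = RCLike.re (@inner ℂ _ _ ((WithLp.equiv 2 (Fin D → ℂ)).symm c)
        ((WithLp.equiv 2 (Fin D → ℂ)).symm c)) from rfl,
      @inner_self_eq_norm_sq ℂ]
  rw [heq]
  exact pow_le_pow_left₀ (norm_nonneg _) hc 2

lemma trace_re_sum (A : Matrix (Fin D) (Fin D) ℂ) :
    A.trace.re = ∑ i, (A i i).re := by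
  simp [Matrix.trace, Matrix.diag, Complex.re_sum]

lemma trace_conj_bound (H M : Matrix (Fin D) (Fin D) ℂ) :
    |((Mᴴ * H * M).trace).re| ≤ ‖H‖ * ((Mᴴ * M).trace).re := by
  rw [trace_re_sum, trace_re_sum, Finset.mul_sum]
  refine (Finset.abs_sum_le_sum_abs _ _).trans (Finset.sum_le_sum fun i _ => ?_)
  have h1 := conj_entry_dot H M i
  have h2 := conj_entry_dot 1 M i
  rw [Matrix.mul_one] at h2
  rw [h1, h2, Matrix.one_mulVec]
  exact quad_abs_le H _

lemma trace_sq_le (M : Matrix (Fin D) (Fin D) ℂ) :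
    ((Mᴴ * M).trace).re ≤ D * ‖M‖ ^ 2 := by
  rw [trace_re_sum]
  calc ∑ i, ((Mᴴ * M) i i).re ≤ ∑ _i : Fin D, ‖M‖ ^ 2 :=
        Finset.sum_le_sum fun i _ => col_sq M i
    _ ≤ D * ‖M‖ ^ 2 := by
        rw [Finset.sum_const, Finset.card_univ, Fintype.card_fin, nsmul_eq_mul]

lemma psd_diag_re_nonneg {A : Matrix (Fin D) (Fin D) ℂ} (hA : A.PosSemidef) (i : Fin D) :
    0 ≤ (A i i).re := by
  have := hA.re_dotProduct_nonneg (Pi.single i 1)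
  rwa [entry_dot] at this

lemma psd_trace_re_nonneg {A : Matrix (Fin D) (Fin D) ℂ} (hA : A.PosSemidef) :
    0 ≤ A.trace.re := by
  rw [trace_re_sum]
  exact Finset.sum_nonneg fun i _ => psd_diag_re_nonneg hA i

lemma psd_smul_complex {A : Matrix (Fin D) (Fin D) ℂ} {c : ℂ} (hc : 0 ≤ c)
    (hA : A.PosSemidef) : (c • A).PosSemidef := by
  rw [Matrix.posSemidef_iff_dotProduct_mulVec]
  constructor
  · have hcr : star c = c := by
      rw [Complex.star_def, Complex.conj_eq_iff_im]
      exact ((Complex.le_def.mp hc).2).symm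
    show (c • A)ᴴ = c • A
    rw [Matrix.conjTranspose_smul, hcr, hA.1]
  · intro x
    rw [Matrix.smul_mulVec, dotProduct_smul, smul_eq_mul]
    exact mul_nonneg hc (hA.dotProduct_mulVec_nonneg x)

lemma psd_of_proj {A : Matrix (Fin D) (Fin D) ℂ} (hh : A.IsHermitian) (hp : A * A = A) :
    A.PosSemidef := by
  have : A = Aᴴ * A := by rw [hh]; exact hp.symm
  rw [this]
  exact Matrix.posSemidef_conjTranspose_mul_self A

/-- The key PSD induction:  `X^{2n} ≥ (a²)^n P`. -/
lemma pow_sub_psd (X P : Matrix (Fin D) (Fin D) ℂ) (a : ℂ) (ha : 0 ≤ a)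
    (hXh : X.IsHermitian) (hPP : P * P = P) (hQpsd : (1 - P).PosSemidef)
    (hXP : X * P = X) (hPX : P * X = X)
    (hC : (X - a • P).PosSemidef) :
    ∀ n : ℕ, (X ^ (2 * n) - (a * a) ^ n • P).PosSemidef := by
  intro n
  induction n with
  | zero => simpa using hQpsd
  | succ n ih =>
    set C : Matrix (Fin D) (Fin D) ℂ := X - a • P with hCdef
    have hCC : C * C = X * X - (2 * a) • X + (a * a) • P := by
      simp only [hCdef, Matrix.sub_mul, Matrix.mul_sub, Matrix.smul_mul, Matrix.mul_smul,
        hXP, hPX, hPP, smul_smul]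
      module
    have hXPX : X * P * X = X * X := by rw [hXP]
    have hpow : X * X ^ (2 * n) * X = X ^ (2 * (n + 1)) := by
      rw [show 2 * (n + 1) = 1 + 2 * n + 1 by ring, pow_add, pow_add, pow_one]
    have key : X ^ (2 * (n + 1)) - (a * a) ^ (n + 1) • P
        = X * (X ^ (2 * n) - (a * a) ^ n • P) * X
          + (a * a) ^ n • (C * C) + ((a * a) ^ n * (2 * a)) • C := by
      rw [Matrix.mul_sub, Matrix.sub_mul, Matrix.mul_smul, Matrix.smul_mul, hXPX, hpow, hCC,
        hCdef, pow_succ]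
      module
    rw [key]
    have h1 : (X * (X ^ (2 * n) - (a * a) ^ n • P) * X).PosSemidef := by
      have := ih.conjTranspose_mul_mul_same X
      rwa [hXh.eq] at this
    have hgn : (0:ℂ) ≤ (a * a) ^ n := pow_nonneg (mul_nonneg ha ha) n
    have h2 : ((a * a) ^ n • (C * C)).PosSemidef := by
      refine psd_smul_complex hgn ?_
      have : C * C = Cᴴ * C := by rw [hC.1]
      rw [this]
      exact Matrix.posSemidef_conjTranspose_mul_self C
    have h3 : (((a * a) ^ n * (2 * a)) • C).PosSemidef :=
      psd_smul_complex (mul_nonneg hgn (mul_nonneg (by norm_num) ha)) hC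
    exact (h1.add h2).add h3

end Stmt2Aux

open Stmt2Aux Matrix

set_option maxHeartbeats 2000000 in
/-- Circuit-depth bound: a run of `n ≥ log(D/(Nη))/log(Γ/Δ)` successful measurements suffices to
reach ground-space overlap `1 - ε - η`. -/
theorem stmt2 (D : ℕ) (hD : 1 ≤ D)
    (K P P₀ : Matrix (Fin D) (Fin D) ℂ)
    (Γ Δ ε : ℝ) (hΔ : 0 < Δ) (hΔΓ : Δ < Γ) (hε : 0 ≤ ε)
    (hK : K.IsHermitian)
    (hPherm : P.IsHermitian) (hPproj : P * P = P)
    (hP₀herm : P₀.IsHermitian) (hP₀proj : P₀ * P₀ = P₀)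
    (hN : 0 < P.trace.re)
    (hcomm : K * P = P * K)
    (hGamma : (K * P - (Real.sqrt Γ : ℂ) • P).PosSemidef)
    (hDelta : ‖(1 - P) * K * (1 - P)‖ ≤ Real.sqrt Δ)
    (hPP₀ : ‖P - P₀‖ ≤ ε)
    (η : ℝ) (hη0 : 0 < η) (hη1 : η < 1)
    (n : ℕ) (hn : Real.log (D / (P.trace.re * η)) / Real.log (Γ / Δ) ≤ (n : ℝ)) :
    1 - ε - η ≤ (P₀ * (((K ^ (2 * n)).trace.re)⁻¹ • K ^ (2 * n))).trace.re := by
  set N : ℝ := P.trace.re with hNdef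
  have hΓ : 0 < Γ := hΔ.trans hΔΓ
  -- numeric consequence of hn : D * Δ^n ≤ N * η * Γ^n
  have hkey : (D : ℝ) * Δ ^ n ≤ N * η * Γ ^ n := by
    have hlogpos : 0 < Real.log (Γ / Δ) :=
      Real.log_pos (by rw [lt_div_iff₀ hΔ]; linarith)
    have h1 : Real.log ((D : ℝ) / (N * η)) ≤ (n : ℝ) * Real.log (Γ / Δ) := by
      have := (div_le_iff₀ hlogpos).mp hn
      linarith
    have hDpos : (0:ℝ) < D := by exact_mod_cast hD
    have h2 : (D : ℝ) / (N * η) ≤ (Γ / Δ) ^ n := by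
      have hx : (0:ℝ) < (D : ℝ) / (N * η) := by positivity
      have hy : (0:ℝ) < (Γ / Δ) ^ n := by positivity
      rw [← Real.log_le_log_iff hx hy, Real.log_pow]
      exact h1
    rw [div_pow] at h2
    have h3 := (div_le_div_iff₀ (by positivity) (by positivity)).mp h2
    linarith
  -- the projector complement
  have hQherm : ((1 : Matrix (Fin D) (Fin D) ℂ) - P).IsHermitian := by
    have : ((1 : Matrix (Fin D) (Fin D) ℂ) - P)ᴴ = 1 - P := by
      rw [Matrix.conjTranspose_sub, Matrix.conjTranspose_one, hPherm.eq]
    exact this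
  have hQproj : ((1 : Matrix (Fin D) (Fin D) ℂ) - P) * (1 - P) = 1 - P := by
    rw [Matrix.sub_mul, Matrix.mul_sub, Matrix.mul_sub, Matrix.one_mul, Matrix.one_mul,
      Matrix.mul_one, hPproj]
    abel
  have hQpsd : ((1 : Matrix (Fin D) (Fin D) ℂ) - P).PosSemidef := psd_of_proj hQherm hQproj
  -- trace of P is at most D
  have hND : N ≤ D := by
    rw [hNdef, trace_re_sum]
    calc ∑ i, (P i i).re ≤ ∑ _i : Fin D, (1:ℝ) := by
          refine Finset.sum_le_sum fun i _ => ?_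
          have := psd_diag_re_nonneg hQpsd i
          simp only [Matrix.sub_apply, Matrix.one_apply_eq, Complex.sub_re, Complex.one_re] at this
          linarith
      _ = D := by simp
  -- n = 0 impossible
  rcases Nat.eq_zero_or_pos n with hn0 | hnpos
  · exfalso
    rw [hn0] at hkey
    simp only [pow_zero, mul_one] at hkey
    nlinarith
  -- set up X and B
  obtain ⟨X, hXdef⟩ : ∃ X : Matrix (Fin D) (Fin D) ℂ, X = K * P := ⟨_, rfl⟩
  obtain ⟨B, hBdef⟩ : ∃ B : Matrix (Fin D) (Fin D) ℂ, B = K - X := ⟨_, rfl⟩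
  have hXP : X * P = X := by rw [hXdef, Matrix.mul_assoc, hPproj]
  have hPX : P * X = X := by
    rw [hXdef, ← Matrix.mul_assoc, ← hcomm, Matrix.mul_assoc, hPproj]
  have hXh : X.IsHermitian := by
    show Xᴴ = X
    rw [hXdef, Matrix.conjTranspose_mul, hPherm.eq, hK.eq, ← hcomm]
  have hXK : X * K = K * K * P := by
    rw [hXdef, Matrix.mul_assoc, ← hcomm, ← Matrix.mul_assoc]
  have hXX : X * X = K * K * P := by
    rw [hXdef]
    calc K * P * (K * P) = K * (P * K) * P := by noncomm_ring
      _ = K * (K * P) * P := by rw [hcomm]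
      _ = K * K * (P * P) := by noncomm_ring
      _ = K * K * P := by rw [hPproj]
  have hXB : X * B = 0 := by
    rw [hBdef, Matrix.mul_sub, hXK, hXX, sub_self]
  have hKX : K * X = K * K * P := by rw [hXdef, ← Matrix.mul_assoc]
  have hBX : B * X = 0 := by
    rw [hBdef, Matrix.sub_mul, hKX, hXX, sub_self]
  have hPB : P * B = 0 := by
    rw [hBdef, Matrix.mul_sub, hPX, ← hcomm, ← hXdef, sub_self]

  -- K^m = X^m + B^m for 1 ≤ m
  have hdecomp : ∀ m : ℕ, 1 ≤ m → K ^ m = X ^ m + B ^ m := by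
    intro m hm
    induction m with
    | zero => omega
    | succ m ih =>
      rcases Nat.eq_zero_or_pos m with h0 | h1
      · subst h0; simp [hBdef]
      · have ihm := ih h1
        have hXmB : X ^ m * B = 0 := by
          calc X ^ m * B = X ^ (m-1) * (X * B) := by
                rw [← Matrix.mul_assoc, ← pow_succ]
                congr 2
                omega
            _ = 0 := by rw [hXB, Matrix.mul_zero]
        have hBmX : B ^ m * X = 0 := by
          calc B ^ m * X = B ^ (m-1) * (B * X) := by
                rw [← Matrix.mul_assoc, ← pow_succ]
                congr 2
                omega
            _ = 0 := by rw [hBX, Matrix.mul_zero]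
        calc K ^ (m+1) = K ^ m * K := by rw [pow_succ]
          _ = (X ^ m + B ^ m) * (X + B) := by rw [ihm, hBdef]; congr 1; abel
          _ = X ^ (m+1) + B ^ (m+1) := by
              rw [Matrix.add_mul, Matrix.mul_add, Matrix.mul_add, hXmB, hBmX, ← pow_succ,
                ← pow_succ]
              abel
  have h2n : 1 ≤ 2 * n := by omega
  -- PSD bound on X^{2n}
  have hsqrtΓ : (0:ℂ) ≤ ((Real.sqrt Γ : ℝ) : ℂ) :=
    Complex.zero_le_real.mpr (Real.sqrt_nonneg Γ)
  have hXpsd0 := pow_sub_psd X P ((Real.sqrt Γ : ℝ) : ℂ) hsqrtΓ hXh hPproj hQpsd hXP hPX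
    (by rw [hXdef]; exact hGamma) n
  have hss : (((Real.sqrt Γ : ℝ) : ℂ) * ((Real.sqrt Γ : ℝ) : ℂ)) = ((Γ : ℝ) : ℂ) := by
    rw [← Complex.ofReal_mul, Real.mul_self_sqrt hΓ.le]
  rw [hss] at hXpsd0
  -- trace quantities
  set t : ℝ := (X ^ (2 * n)).trace.re with htdef
  set s : ℝ := (B ^ (2 * n)).trace.re with hsdef
  have ht : Γ ^ n * N ≤ t := by
    have h := psd_trace_re_nonneg hXpsd0
    rw [Matrix.trace_sub, Matrix.trace_smul, Complex.sub_re, smul_eq_mul,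
      ← Complex.ofReal_pow, Complex.re_ofReal_mul] at h
    linarith
  -- B facts
  have hBherm : B.IsHermitian := by
    show Bᴴ = B
    rw [hBdef, Matrix.conjTranspose_sub, hK.eq, hXh.eq]
  have hBeq : (1 - P) * K * (1 - P) = B := by
    calc (1 - P) * K * (1 - P) = (K - P * K) * (1 - P) := by rw [Matrix.sub_mul, Matrix.one_mul]
      _ = (K - P * K) - (K * P - P * K * P) := by
          rw [Matrix.mul_sub, Matrix.mul_one, Matrix.sub_mul]
      _ = (K - K * P) - (K * P - K * P) := by
          rw [← hcomm, Matrix.mul_assoc, hPproj]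
      _ = B := by rw [hBdef, hXdef]; abel
  have hBnorm : ‖B‖ ≤ Real.sqrt Δ := by rw [← hBeq]; exact hDelta
  have hB2n : B ^ (2 * n) = (B ^ n)ᴴ * B ^ n := by
    rw [(hBherm.pow n).eq, ← pow_add, two_mul]
  have hs_nonneg : 0 ≤ s := by
    rw [hsdef, hB2n]
    exact psd_trace_re_nonneg (Matrix.posSemidef_conjTranspose_mul_self _)
  have hs_le : s ≤ D * Δ ^ n := by
    have h1 : s ≤ D * ‖B ^ n‖ ^ 2 := by rw [hsdef, hB2n]; exact trace_sq_le _
    have h2 : ‖B ^ n‖ ≤ Real.sqrt Δ ^ n := by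
      calc ‖B ^ n‖ ≤ ‖B‖ ^ n := norm_pow_le' B hnpos
        _ ≤ Real.sqrt Δ ^ n := pow_le_pow_left₀ (norm_nonneg B) hBnorm n
    have h3 : ‖B ^ n‖ ^ 2 ≤ (Real.sqrt Δ ^ n) ^ 2 := pow_le_pow_left₀ (norm_nonneg _) h2 2
    have h4 : (Real.sqrt Δ ^ n) ^ 2 = Δ ^ n := by
      rw [← pow_mul, mul_comm n 2, pow_mul, Real.sq_sqrt hΔ.le]
    have hD0 : (0:ℝ) ≤ D := Nat.cast_nonneg D
    nlinarith
  -- total trace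
  have hT : (K ^ (2 * n)).trace.re = t + s := by
    rw [hdecomp (2 * n) h2n, Matrix.trace_add, Complex.add_re]
  have ht_pos : 0 < t := lt_of_lt_of_le (by positivity) ht
  have hT_pos : 0 < t + s := by linarith
  -- trace of P against K^{2n}
  obtain ⟨m, hm⟩ : ∃ m, 2 * n = m + 1 := ⟨2 * n - 1, by omega⟩
  have hPX2 : P * X ^ (2 * n) = X ^ (2 * n) := by
    rw [hm, pow_succ', ← Matrix.mul_assoc, hPX]
  have hPB2 : P * B ^ (2 * n) = 0 := by
    rw [hm, pow_succ', ← Matrix.mul_assoc, hPB, Matrix.zero_mul]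
  have hPtr : (P * K ^ (2 * n)).trace = (X ^ (2 * n)).trace := by
    rw [hdecomp (2 * n) h2n, Matrix.mul_add, hPX2, hPB2, add_zero]
  -- overlap error bound
  have hKn : (K ^ n)ᴴ = K ^ n := (hK.pow n).eq
  have hKnn : K ^ n * K ^ n = K ^ (2 * n) := by rw [← pow_add, two_mul]
  have hcyc : ((K ^ n)ᴴ * (P - P₀) * K ^ n).trace = ((P - P₀) * K ^ (2 * n)).trace := by
    rw [hKn, Matrix.trace_mul_comm, ← Matrix.mul_assoc, hKnn]
    exact Matrix.trace_mul_comm _ _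
  have hcyc2 : ((K ^ n)ᴴ * K ^ n).trace = (K ^ (2 * n)).trace := by
    rw [hKn, hKnn]
  have hbound := trace_conj_bound (P - P₀) (K ^ n)
  rw [hcyc, hcyc2, hT] at hbound
  set r : ℝ := (((P - P₀) * K ^ (2 * n)).trace).re with hrdef
  have hr : |r| ≤ ε * (t + s) := by
    refine hbound.trans ?_
    exact mul_le_mul_of_nonneg_right hPP₀ (by linarith)
  have hr' : r ≤ ε * (t + s) := (abs_le.mp hr).2
  -- P₀ trace identity
  have hP0tr : (P₀ * K ^ (2 * n)).trace.re = t - r := by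
    have hsplit : (P - P₀) * K ^ (2 * n) = P * K ^ (2 * n) - P₀ * K ^ (2 * n) :=
      Matrix.sub_mul _ _ _
    have : r = t - (P₀ * K ^ (2 * n)).trace.re := by
      rw [hrdef, hsplit, Matrix.trace_sub, Complex.sub_re, hPtr, htdef]
    linarith
  -- final numeric computation
  have hsη : s ≤ η * t := by
    have h1 : N * η * Γ ^ n ≤ η * t := by
      rw [show N * η * Γ ^ n = η * (Γ ^ n * N) by ring]
      exact mul_le_mul_of_nonneg_left ht hη0.le
    linarith
  rw [Matrix.mul_smul, Matrix.trace_smul, hT]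
  rw [show ((t + s)⁻¹ • (P₀ * K ^ (2 * n)).trace).re
    = (t + s)⁻¹ * (P₀ * K ^ (2 * n)).trace.re from by
      rw [Complex.real_smul, Complex.re_ofReal_mul]]
  rw [hP0tr, inv_mul_eq_div, le_div_iff₀ hT_pos]
  nlinarith [mul_nonneg hη0.le hs_nonneg, mul_nonneg hε hs_nonneg]
end

section
/- Let K be a Hermitian D×D complex matrix with ‖K‖ ≤ 1, let Π be an orthogonal projector with N := tr Π > 0, and let reals Γ > 0 and 0 ≤ Δ < 1 satisfy KΠ = ΠK, KΠ ≥ √Γ·Π in the Loewner order, and ‖(I−Π)K(I−Π)‖ ≤ √Δ. Then for every natural number n ≥ 1, tr(K^{2n}) > 0 and tr(∑_{k=0}^{n−1} K^{2k}) / tr(K^{2n}) ≤ Γ^{−n} · ( n + ((1−Δⁿ)/(1−Δ))·(D/N − 1) ). (The left-hand side equals the expected stopping time of the dissipative quantum eigensolver with global resampling until the first run of n successful measurement outcomes.) -/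
open scoped Matrix.Norms.L2Operator ComplexOrder

section DQEAux

open Matrix

lemma dqe_psd_trace_re_nonneg {d : ℕ} {M : Matrix (Fin d) (Fin d) ℂ} (h : M.PosSemidef) :
    0 ≤ M.trace.re := by
  have h2 : ∀ i, 0 ≤ (M i i).re := by
    intro i
    have h3 := h.dotProduct_mulVec_nonneg (Pi.single i 1)
    have hval : dotProduct (star (Pi.single i 1)) (M *ᵥ Pi.single i 1) = M i i := by
      simp [dotProduct, mulVec, Pi.single_apply, Finset.sum_ite_eq, apply_ite]
    rw [hval] at h3
    simpa using (Complex.le_def.mp h3).1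
  have : 0 ≤ ∑ i, (M i i).re := Finset.sum_nonneg fun i _ => h2 i
  simpa [Matrix.trace, Matrix.diag, Complex.re_sum] using this

lemma dqe_trace_re_mono {d : ℕ} {A B : Matrix (Fin d) (Fin d) ℂ} (h : (B - A).PosSemidef) :
    A.trace.re ≤ B.trace.re := by
  have := dqe_psd_trace_re_nonneg h
  rw [Matrix.trace_sub, Complex.sub_re] at this; linarith

lemma dqe_psd_smul {d : ℕ} {M : Matrix (Fin d) (Fin d) ℂ} (h : M.PosSemidef) {c : ℝ}
    (hc : 0 ≤ c) : ((c:ℂ) • M).PosSemidef := by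
  refine posSemidef_iff_dotProduct_mulVec.mpr ⟨?_, ?_⟩
  · have h1 := h.1
    unfold Matrix.IsHermitian at *
    rw [Matrix.conjTranspose_smul, h1]
    congr 1
    simp [Complex.star_def]
  · intro x
    rw [Matrix.smul_mulVec, dotProduct_smul]
    exact smul_nonneg (by exact_mod_cast hc) (h.dotProduct_mulVec_nonneg x)

lemma dqe_dot_self_eq {d : ℕ} (y : Fin d → ℂ) :
    dotProduct (star y) y = ((∑ i, ‖y i‖^2 : ℝ) : ℂ) := by
  push_cast
  unfold dotProduct
  congr 1
  funext i
  simp [Complex.star_def, Complex.conj_mul', Complex.normSq_eq_norm_sq, Complex.sq_norm]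

lemma dqe_norm_sq_sum {d : ℕ} (y : Fin d → ℂ) :
    ‖(EuclideanSpace.equiv (Fin d) ℂ).symm y‖^2 = ∑ i, ‖y i‖^2 := by
  rw [EuclideanSpace.norm_eq]
  rw [Real.sq_sqrt (Finset.sum_nonneg fun i _ => sq_nonneg _)]
  rfl

lemma dqe_key_psd {d : ℕ} (B : Matrix (Fin d) (Fin d) ℂ) (r : ℝ) (hB : ‖B‖ ≤ r) :
    ((((r^2 : ℝ)) : ℂ) • 1 - Bᴴ * B).PosSemidef := by
  refine posSemidef_iff_dotProduct_mulVec.mpr ⟨?_, ?_⟩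
  · have h1 : (Bᴴ * B).IsHermitian := isHermitian_conjTranspose_mul_self B
    have h2 : ((((r^2 : ℝ)) : ℂ) • (1 : Matrix (Fin d) (Fin d) ℂ)).IsHermitian := by
      unfold Matrix.IsHermitian
      rw [Matrix.conjTranspose_smul]
      simp [Complex.star_def]
    exact h2.sub h1
  · intro x
    have hq : dotProduct (star x) (((((r^2 : ℝ)) : ℂ) • 1 - Bᴴ * B) *ᵥ x)
        = (((r^2 : ℝ)) : ℂ) * dotProduct (star x) x
          - dotProduct (star (B *ᵥ x)) (B *ᵥ x) := by
      rw [Matrix.sub_mulVec, dotProduct_sub, Matrix.smul_mulVec,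
        Matrix.one_mulVec, dotProduct_smul, smul_eq_mul]
      congr 1
      rw [← Matrix.mulVec_mulVec, Matrix.dotProduct_mulVec, Matrix.star_mulVec]
    rw [hq, dqe_dot_self_eq, dqe_dot_self_eq]
    have hineq : ∑ i, ‖(B *ᵥ x) i‖^2 ≤ r^2 * ∑ i, ‖x i‖^2 := by
      have h3 := Matrix.l2_opNorm_mulVec B ((EuclideanSpace.equiv (Fin d) ℂ).symm x)
      rw [show (B *ᵥ ((EuclideanSpace.equiv (Fin d) ℂ).symm x) : Fin d → ℂ) = B *ᵥ x
        from rfl] at h3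
      have h4 : ‖B‖ * ‖(EuclideanSpace.equiv (Fin d) ℂ).symm x‖
          ≤ r * ‖(EuclideanSpace.equiv (Fin d) ℂ).symm x‖ :=
        mul_le_mul_of_nonneg_right hB (norm_nonneg _)
      have h5 : ‖(EuclideanSpace.equiv (Fin d) ℂ).symm (B *ᵥ x)‖^2
          ≤ (r * ‖(EuclideanSpace.equiv (Fin d) ℂ).symm x‖)^2 := by
        apply pow_le_pow_left₀ (norm_nonneg _) (le_trans h3 h4)
      rw [dqe_norm_sq_sum] at h5
      calc ∑ i, ‖(B *ᵥ x) i‖^2 ≤ (r * ‖(EuclideanSpace.equiv (Fin d) ℂ).symm x‖)^2 := h5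
        _ = r^2 * ‖(EuclideanSpace.equiv (Fin d) ℂ).symm x‖^2 := by ring
        _ = r^2 * ∑ i, ‖x i‖^2 := by rw [dqe_norm_sq_sum]
    rw [← Complex.ofReal_mul, ← Complex.ofReal_sub]
    rw [Complex.zero_le_real]
    linarith

lemma dqe_pow_psd {d : ℕ} {M : Matrix (Fin d) (Fin d) ℂ} (hM : M.IsHermitian) {c : ℝ}
    (hc : 0 ≤ c) (h : ((c:ℂ) • 1 - M * M).PosSemidef) (k : ℕ) :
    (((c^k : ℝ) : ℂ) • 1 - M ^ (2*k)).PosSemidef := by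
  induction k with
  | zero => simpa using Matrix.PosSemidef.zero
  | succ k ih =>
    have key : (((c^(k+1) : ℝ) : ℂ) • (1 : Matrix (Fin d) (Fin d) ℂ) - M ^ (2*(k+1)))
        = Mᴴ * ((((c^k : ℝ) : ℂ) • 1 - M ^ (2*k))) * M
          + ((c^k : ℝ) : ℂ) • ((c:ℂ) • 1 - M * M) := by
      rw [hM.eq]
      rw [mul_sub, sub_mul, mul_smul_comm, smul_mul_assoc, mul_one, smul_sub,
        smul_smul]
      have e1 : M * M ^ (2*k) * M = M ^ (2*(k+1)) := by
        rw [← pow_succ', ← pow_succ]; ring_nf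
      rw [e1]
      have e2 : ((c^k : ℝ) : ℂ) * (c : ℂ) = ((c^(k+1) : ℝ) : ℂ) := by push_cast; ring
      rw [e2]
      abel
    rw [key]
    exact (ih.conjTranspose_mul_mul_same M).add (dqe_psd_smul h (pow_nonneg hc k))

end DQEAux


open Matrix

/-- Bound on the expected stopping time of the DQE with global resampling:
`tr(∑_{k<n} K^{2k}) / tr(K^{2n}) ≤ Γ⁻ⁿ (n + (1-Δⁿ)/(1-Δ) (D/N - 1))`. -/
theorem stmt3 (D : ℕ) (hD : 1 ≤ D)
    (K P : Matrix (Fin D) (Fin D) ℂ)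
    (Γ Δ : ℝ) (hΓ : 0 < Γ) (hΔ0 : 0 ≤ Δ) (hΔ1 : Δ < 1)
    (hK : K.IsHermitian) (hKnorm : ‖K‖ ≤ 1)
    (hPherm : P.IsHermitian) (hPproj : P * P = P)
    (hN : 0 < P.trace.re)
    (hcomm : K * P = P * K)
    (hGamma : (K * P - (Real.sqrt Γ : ℂ) • P).PosSemidef)
    (hDelta : ‖(1 - P) * K * (1 - P)‖ ≤ Real.sqrt Δ)
    (n : ℕ) (hn : 1 ≤ n) :
    0 < (K ^ (2 * n)).trace.re ∧
      ((∑ k ∈ Finset.range n, K ^ (2 * k)).trace.re) / (K ^ (2 * n)).trace.re ≤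
        (Γ ^ n)⁻¹ * ((n : ℝ) + (1 - Δ ^ n) / (1 - Δ) * ((D : ℝ) / P.trace.re - 1)) := by
  have hKP : ∀ m : ℕ, K ^ m * P = P * K ^ m := fun m => ((Commute.pow_left hcomm m)).eq
  have hAP : (K * P) * P = K * P := by rw [mul_assoc, hPproj]
  have hPA : P * (K * P) = K * P := by rw [← mul_assoc, ← hcomm, mul_assoc, hPproj]
  have hAherm : (K * P).IsHermitian := by
    unfold Matrix.IsHermitian
    rw [Matrix.conjTranspose_mul, hPherm.eq, hK.eq, ← hcomm]
  have hcsq : ((Real.sqrt Γ : ℝ) : ℂ) * ((Real.sqrt Γ : ℝ) : ℂ) = ((Γ : ℝ) : ℂ) := by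
    rw [← Complex.ofReal_mul, Real.mul_self_sqrt hΓ.le]
  have base_id : (K*P) * (K*P) - ((Γ:ℝ):ℂ) • P
      = ((K*P) - ((Real.sqrt Γ : ℝ) : ℂ) • P) * ((K*P) - ((Real.sqrt Γ : ℝ) : ℂ) • P)
        + ((2 * Real.sqrt Γ : ℝ) : ℂ) • ((K*P) - ((Real.sqrt Γ : ℝ) : ℂ) • P) := by
    simp only [mul_sub, sub_mul, smul_mul_assoc, mul_smul_comm, smul_smul, smul_sub]
    rw [hAP, hPA, hPproj, hcsq]
    have h1 : ((2 * Real.sqrt Γ : ℝ) : ℂ) = 2 * ((Real.sqrt Γ : ℝ) : ℂ) := by push_cast; ring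
    rw [h1]
    have h2 : (2 * ((Real.sqrt Γ : ℝ) : ℂ)) • (K*P)
        = ((Real.sqrt Γ : ℝ) : ℂ) • (K*P) + ((Real.sqrt Γ : ℝ) : ℂ) • (K*P) := by
      rw [two_mul, add_smul]
    have h3 : (2 * ((Real.sqrt Γ : ℝ) : ℂ) * ((Real.sqrt Γ : ℝ) : ℂ)) • P
        = ((Γ:ℝ):ℂ) • P + ((Γ:ℝ):ℂ) • P := by
      rw [mul_assoc, hcsq, two_mul, add_smul]
    rw [h2, h3]
    abel
  have base_psd : ((K*P) * (K*P) - ((Γ:ℝ):ℂ) • P).PosSemidef := by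
    rw [base_id]
    have hSS : (((K*P) - ((Real.sqrt Γ : ℝ) : ℂ) • P)
        * ((K*P) - ((Real.sqrt Γ : ℝ) : ℂ) • P)).PosSemidef := by
      have := Matrix.posSemidef_conjTranspose_mul_self ((K*P) - ((Real.sqrt Γ : ℝ) : ℂ) • P)
      rwa [hGamma.1.eq] at this
    exact hSS.add (dqe_psd_smul hGamma (by positivity))
  have claim1 : ∀ m : ℕ, 1 ≤ m → ((K*P) ^ (2*m) - ((Γ^m : ℝ):ℂ) • P).PosSemidef := by
    intro m hm
    induction m, hm using Nat.le_induction with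
    | base =>
      have e : (K*P) ^ (2*1) = (K*P) * (K*P) := by norm_num [pow_two]
      rw [e, pow_one]
      exact base_psd
    | succ m hm ih =>
      have key : (K*P) ^ (2*(m+1)) - ((Γ^(m+1) : ℝ):ℂ) • P
          = (K*P)ᴴ * ((K*P) ^ (2*m) - ((Γ^m : ℝ):ℂ) • P) * (K*P)
            + ((Γ^m : ℝ):ℂ) • ((K*P) * (K*P) - ((Γ:ℝ):ℂ) • P) := by
        rw [hAherm.eq]
        simp only [mul_sub, sub_mul, smul_mul_assoc, mul_smul_comm, smul_smul, smul_sub]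
        have e0 : (K*P) * P * (K*P) = (K*P) * (K*P) := by rw [hAP]
        rw [e0]
        have e1 : (K*P) * (K*P) ^ (2*m) * (K*P) = (K*P) ^ (2*(m+1)) := by
          rw [← pow_succ', ← pow_succ]; ring_nf
        rw [e1]
        have e2 : ((Γ^m : ℝ) : ℂ) * ((Γ:ℝ) : ℂ) = ((Γ^(m+1) : ℝ) : ℂ) := by push_cast; ring
        rw [e2]
        abel
      rw [key]
      exact (ih.conjTranspose_mul_mul_same (K*P)).add (dqe_psd_smul base_psd (by positivity))
  have hApow : ∀ m : ℕ, (K*P) ^ (m+1) = K ^ (m+1) * P := by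
    intro m
    induction m with
    | zero => simp
    | succ m ih =>
      rw [pow_succ, ih, mul_assoc (K^(m+1)) P (K*P), ← mul_assoc P K P, ← hcomm,
        mul_assoc K P P, hPproj, ← mul_assoc, ← pow_succ]
  -- the Q = 1 - P side
  set Q : Matrix (Fin D) (Fin D) ℂ := 1 - P with hQdef
  clear_value Q
  have hKQ : K * Q = Q * K := by
    rw [hQdef]; simp only [mul_sub, sub_mul, mul_one, one_mul, hcomm]
  have hQproj : Q * Q = Q := by
    rw [hQdef]; simp only [mul_sub, sub_mul, mul_one, one_mul, hPproj]; abel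
  have hQherm : Q.IsHermitian := by
    unfold Matrix.IsHermitian
    rw [hQdef, Matrix.conjTranspose_sub, Matrix.conjTranspose_one, hPherm.eq]
  have hBherm : (K * Q).IsHermitian := by
    unfold Matrix.IsHermitian
    rw [Matrix.conjTranspose_mul, hQherm.eq, hK.eq, ← hKQ]
  have hBnorm : ‖K * Q‖ ≤ Real.sqrt Δ := by
    have hBform : Q * K * Q = K * Q := by rw [← hKQ, mul_assoc, hQproj]
    rwa [hBform] at hDelta
  have hBpow : ∀ m : ℕ, (K * Q) ^ (m+1) = K ^ (m+1) * Q := by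
    intro m
    induction m with
    | zero => simp
    | succ m ih =>
      rw [pow_succ, ih, mul_assoc (K^(m+1)) Q (K*Q), ← mul_assoc Q K Q,
        ← hKQ, mul_assoc K Q Q, hQproj, ← mul_assoc, ← pow_succ]
  have hKQm : ∀ m : ℕ, K ^ m * Q = Q * K ^ m :=
    fun m => ((Commute.pow_left hKQ m)).eq
  -- PSD bounds on powers
  have psdK : ∀ k : ℕ, ((1 : Matrix (Fin D) (Fin D) ℂ) - K ^ (2*k)).PosSemidef := by
    intro k
    have h1 := dqe_key_psd K 1 hKnorm
    rw [hK.eq] at h1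
    have h1' : (((1:ℝ):ℂ) • 1 - K * K).PosSemidef := by
      convert h1 using 3
      norm_num
    have h2 := dqe_pow_psd hK zero_le_one h1' k
    simpa using h2
  have psdB : ∀ k : ℕ, ((((Δ^k:ℝ)):ℂ) • 1 - (K * Q) ^ (2*k)).PosSemidef := by
    intro k
    have h1 := dqe_key_psd (K * Q) (Real.sqrt Δ) hBnorm
    rw [hBherm.eq, Real.sq_sqrt hΔ0] at h1
    exact dqe_pow_psd hBherm hΔ0 h1 k
  have hQBQ : ∀ k : ℕ, Q * (K*Q)^(2*k) * Q = K^(2*k) * Q := by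
    intro k
    cases k with
    | zero => simp [hQproj]
    | succ k =>
      have h2 : 2*(k+1) = (2*k+1)+1 := by ring
      rw [h2, hBpow (2*k+1), ← mul_assoc Q (K^((2*k+1)+1)) Q, ← hKQm,
        mul_assoc (K^((2*k+1)+1)) Q Q, hQproj,
        mul_assoc (K^((2*k+1)+1)) Q Q, hQproj]
  -- trace bounds
  have boundP : ∀ k : ℕ, (K^(2*k) * P).trace.re ≤ P.trace.re := by
    intro k
    have key : P - K^(2*k) * P = Pᴴ * ((1 : Matrix (Fin D) (Fin D) ℂ) - K^(2*k)) * P := by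
      rw [hPherm.eq, mul_sub, mul_one, sub_mul, hPproj, ← hKP (2*k),
        mul_assoc (K^(2*k)) P P, hPproj]
    apply dqe_trace_re_mono
    rw [key]
    exact (psdK k).conjTranspose_mul_mul_same P
  have boundQ : ∀ k : ℕ, (K^(2*k) * Q).trace.re ≤ Δ^k * ((D:ℝ) - P.trace.re) := by
    intro k
    have key : Qᴴ * ((((Δ^k:ℝ)):ℂ) • 1 - (K*Q)^(2*k)) * Q
        = (((Δ^k:ℝ)):ℂ) • Q - K^(2*k) * Q := by
      rw [hQherm.eq, mul_sub, sub_mul, mul_smul_comm, mul_one, smul_mul_assoc,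
        hQproj, hQBQ k]
    have hmono := dqe_trace_re_mono (key ▸ ((psdB k).conjTranspose_mul_mul_same Q))
    have htr : ((((Δ^k:ℝ)):ℂ) • Q).trace.re = Δ^k * Q.trace.re := by
      rw [Matrix.trace_smul, smul_eq_mul, Complex.mul_re, Complex.ofReal_re,
        Complex.ofReal_im]
      ring
    have hQtrace : Q.trace.re = (D:ℝ) - P.trace.re := by
      rw [hQdef, Matrix.trace_sub, Matrix.trace_one, Complex.sub_re]
      simp
    rw [htr, hQtrace] at hmono
    exact hmono
  -- lower bound on denominator
  obtain ⟨m, rfl⟩ : ∃ m, n = m + 1 := ⟨n - 1, by omega⟩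
  have psd1 : (K^(2*(m+1)) - (K*P)^(2*(m+1))).PosSemidef := by
    have hA2n : (K*P)^(2*(m+1)) = K^(2*(m+1)) * P := by
      have h2 : 2*(m+1) = (2*m+1)+1 := by ring
      rw [h2, hApow (2*m+1)]
    have hB2n : K^(2*(m+1)) - K^(2*(m+1)) * P = (K*Q)^(2*(m+1)) := by
      have h2 : 2*(m+1) = (2*m+1)+1 := by ring
      rw [h2, hBpow (2*m+1), hQdef, mul_sub, mul_one]
    rw [hA2n, hB2n]
    have h3 : (K*Q)^(2*(m+1)) = ((K*Q)^(m+1))ᴴ * (K*Q)^(m+1) := by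
      rw [(hBherm.pow (m+1)).eq, ← pow_add]
      ring_nf
    rw [h3]
    exact Matrix.posSemidef_conjTranspose_mul_self _
  have psd2 := claim1 (m+1) (by omega)
  have combine : (K^(2*(m+1)) - ((Γ^(m+1):ℝ):ℂ) • P).PosSemidef := by
    have h4 := psd1.add psd2
    rwa [sub_add_sub_cancel] at h4
  have hTlower : Γ^(m+1) * P.trace.re ≤ (K^(2*(m+1))).trace.re := by
    have h5 := dqe_trace_re_mono combine
    have h6 : ((((Γ^(m+1):ℝ)):ℂ) • P).trace.re = Γ^(m+1) * P.trace.re := by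
      rw [Matrix.trace_smul, smul_eq_mul, Complex.mul_re, Complex.ofReal_re,
        Complex.ofReal_im]
      ring
    rwa [h6] at h5
  have hTpos : 0 < (K^(2*(m+1))).trace.re :=
    lt_of_lt_of_le (by positivity) hTlower
  refine ⟨hTpos, ?_⟩
  -- numerator bound
  have hsum : (∑ k ∈ Finset.range (m+1), K^(2*k)).trace.re
      = ∑ k ∈ Finset.range (m+1), (K^(2*k)).trace.re := by
    rw [Matrix.trace_sum, Complex.re_sum]
  have hdecomp : ∀ k : ℕ, (K^(2*k)).trace.re
      = (K^(2*k) * P).trace.re + (K^(2*k) * Q).trace.re := by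
    intro k
    have h7 : K^(2*k) * P + K^(2*k) * Q = K^(2*k) := by
      rw [hQdef, ← mul_add]
      simp
    conv_lhs => rw [← h7]
    rw [Matrix.trace_add, Complex.add_re]
  have hbound : ∀ k : ℕ, (K^(2*k)).trace.re ≤ P.trace.re + Δ^k * ((D:ℝ) - P.trace.re) := by
    intro k
    rw [hdecomp k]
    have h9 := boundQ k
    have h10 := boundP k
    linarith
  have hS0 : 0 ≤ (∑ k ∈ Finset.range (m+1), K^(2*k)).trace.re := by
    rw [hsum]
    apply Finset.sum_nonneg
    intro k _
    have h8 : K^(2*k) = (K^k)ᴴ * K^k := by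
      rw [(hK.pow k).eq, ← pow_add, two_mul]
    rw [h8]
    exact dqe_psd_trace_re_nonneg (Matrix.posSemidef_conjTranspose_mul_self _)
  have hgeom : ∑ k ∈ Finset.range (m+1), Δ^k = (1 - Δ^(m+1))/(1-Δ) := by
    rw [geom_sum_eq (ne_of_lt hΔ1)]
    rw [← neg_div_neg_eq]
    ring_nf
  have hSbound : (∑ k ∈ Finset.range (m+1), K^(2*k)).trace.re
      ≤ (m+1 : ℝ) * P.trace.re + ((1 - Δ^(m+1))/(1-Δ)) * ((D:ℝ) - P.trace.re) := by
    rw [hsum, ← hgeom]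
    calc ∑ k ∈ Finset.range (m+1), (K^(2*k)).trace.re
        ≤ ∑ k ∈ Finset.range (m+1), (P.trace.re + Δ^k * ((D:ℝ) - P.trace.re)) :=
          Finset.sum_le_sum fun k _ => hbound k
      _ = (m+1 : ℝ) * P.trace.re
          + (∑ k ∈ Finset.range (m+1), Δ^k) * ((D:ℝ) - P.trace.re) := by
          rw [Finset.sum_add_distrib, Finset.sum_const, Finset.card_range,
            nsmul_eq_mul, ← Finset.sum_mul]
          push_cast
          ring
  have hNne : P.trace.re ≠ 0 := ne_of_gt hN
  have hΔne : (1:ℝ) - Δ ≠ 0 := by linarith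
  have hGn : (Γ:ℝ)^(m+1) ≠ 0 := by positivity
  have hgeq : (Γ^(m+1))⁻¹ * (((m+1:ℕ) : ℝ) + (1-Δ^(m+1))/(1-Δ) * ((D:ℝ)/P.trace.re - 1))
      = ((m+1 : ℝ) * P.trace.re + ((1 - Δ^(m+1))/(1-Δ)) * ((D:ℝ) - P.trace.re))
        / (Γ^(m+1) * P.trace.re) := by
    push_cast
    field_simp
  rw [hgeq]
  exact div_le_div₀ (le_trans hS0 hSbound) hSbound (by positivity) hTlower
end

section
/- Let K be a Hermitian D×D complex matrix with ‖K‖ ≤ 1, let Π and Π₀ be orthogonal projectors with N := tr Π > 0, and let reals Γ, Δ, ε with 0 ≤ Δ ≤ Γ ≤ 1, Δ < 1 and ε ≥ 0 satisfy KΠ = ΠK, KΠ ≥ √Γ·Π in the Loewner order, ‖(I−Π)K(I−Π)‖ ≤ √Δ, and ‖Π − Π₀‖ ≤ ε. Suppose ρ is a density matrix satisfying the fixed-point equation ρ = KρK + (1 − tr(KρK))·I/D. Then tr(Π₀ ρ) ≥ (1−Δ)/((Γ−Δ) + (D/N)(1−Γ)) − ε. -/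
open scoped Matrix.Norms.L2Operator ComplexOrder

section Helpers
open Matrix

variable {D : ℕ}

noncomputable def ev (v : Fin D → ℂ) : EuclideanSpace ℂ (Fin D) := WithLp.toLp 2 v

lemma dot_star_self (v : Fin D → ℂ) : star v ⬝ᵥ v = ((‖ev v‖ ^ 2 : ℝ) : ℂ) := by
  have := EuclideanSpace.inner_toLp_toLp (𝕜 := ℂ) v v
  rw [inner_self_eq_norm_sq_to_K] at this
  rw [dotProduct_comm, ← this, ev]
  norm_cast

lemma mulVec_ev (A : Matrix (Fin D) (Fin D) ℂ) (v : Fin D → ℂ) :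
    ‖ev (A *ᵥ v)‖ ≤ ‖A‖ * ‖ev v‖ :=
  A.l2_opNorm_mulVec (ev v)

lemma dot_mulVec_conj (A : Matrix (Fin D) (Fin D) ℂ) (x : Fin D → ℂ) :
    star x ⬝ᵥ ((Aᴴ * A) *ᵥ x) = star (A *ᵥ x) ⬝ᵥ (A *ᵥ x) := by
  rw [← mulVec_mulVec, dotProduct_mulVec, vecMul_conjTranspose, star_star, star_dotProduct,
    star_dotProduct, star_star]

lemma psd_sq_sub (A : Matrix (Fin D) (Fin D) ℂ) (c : ℝ) (h : ‖A‖ ≤ c) :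
    (((c ^ 2 : ℝ) : ℂ) • 1 - Aᴴ * A).PosSemidef := by
  have hc : 0 ≤ c := le_trans (norm_nonneg _) h
  refine Matrix.PosSemidef.of_dotProduct_mulVec_nonneg ?_ ?_
  · unfold Matrix.IsHermitian
    rw [conjTranspose_sub, conjTranspose_smul, conjTranspose_one, conjTranspose_mul,
      conjTranspose_conjTranspose]
    simp [Complex.star_def]
  · intro x
    rw [sub_mulVec, dotProduct_sub, dot_mulVec_conj, smul_mulVec, one_mulVec,
      dotProduct_smul, dot_star_self, dot_star_self, smul_eq_mul, ← Complex.ofReal_mul,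
      ← Complex.ofReal_sub, ← Complex.ofReal_zero, Complex.real_le_real]
    have h1 : ‖ev (A *ᵥ x)‖ ≤ c * ‖ev x‖ :=
      le_trans (mulVec_ev A x) (by nlinarith [norm_nonneg (ev x)])
    nlinarith [norm_nonneg (ev (A *ᵥ x)), norm_nonneg (ev x)]

lemma herm_dot_real (A : Matrix (Fin D) (Fin D) ℂ) (hA : A.IsHermitian) (x : Fin D → ℂ) :
    star (star x ⬝ᵥ (A *ᵥ x)) = star x ⬝ᵥ (A *ᵥ x) := by
  nth_rewrite 2 [← hA.eq]
  rw [star_dotProduct, star_star, dotProduct_mulVec, vecMul_conjTranspose, star_star]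

lemma psd_smul_one_sub (A : Matrix (Fin D) (Fin D) ℂ) (hA : A.IsHermitian) (c : ℝ)
    (h : ‖A‖ ≤ c) : (((c : ℝ) : ℂ) • 1 - A).PosSemidef := by
  have hc : 0 ≤ c := le_trans (norm_nonneg _) h
  refine Matrix.PosSemidef.of_dotProduct_mulVec_nonneg ?_ ?_
  · unfold Matrix.IsHermitian
    rw [conjTranspose_sub, conjTranspose_smul, conjTranspose_one, hA.eq]
    simp [Complex.star_def]
  · intro x
    rw [sub_mulVec, dotProduct_sub, smul_mulVec, one_mulVec, dotProduct_smul,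
      dot_star_self, smul_eq_mul]
    set w := star x ⬝ᵥ (A *ᵥ x) with hw
    have hwr : w = ((w.re : ℝ) : ℂ) := by
      have := herm_dot_real A hA x
      rw [← hw] at this
      exact (Complex.conj_eq_iff_re.mp this).symm
    rw [hwr, ← Complex.ofReal_mul, ← Complex.ofReal_sub, ← Complex.ofReal_zero,
      Complex.real_le_real, sub_nonneg]
    have hcs : ‖w‖ ≤ ‖ev x‖ * ‖ev (A *ᵥ x)‖ := by
      have := norm_inner_le_norm (𝕜 := ℂ) (ev x) (ev (A *ᵥ x))
      simp only [ev, EuclideanSpace.inner_toLp_toLp, dotProduct_comm (A *ᵥ x) (star x)] at this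
      exact this
    have h1 : ‖ev (A *ᵥ x)‖ ≤ c * ‖ev x‖ :=
      le_trans (mulVec_ev A x) (by nlinarith [norm_nonneg (ev x)])
    have h2 : w.re ≤ ‖w‖ := Complex.re_le_norm w
    nlinarith [norm_nonneg (ev x), norm_nonneg (ev (A *ᵥ x))]

lemma psd_smul' {M : Matrix (Fin D) (Fin D) ℂ} (hM : M.PosSemidef) {c : ℝ} (hc : 0 ≤ c) :
    (((c : ℝ) : ℂ) • M).PosSemidef := by
  refine Matrix.PosSemidef.of_dotProduct_mulVec_nonneg ?_ ?_
  · unfold Matrix.IsHermitian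
    rw [conjTranspose_smul, hM.1.eq]
    simp [Complex.star_def]
  · intro x
    rw [smul_mulVec, dotProduct_smul, smul_eq_mul]
    exact mul_nonneg (by exact_mod_cast Complex.zero_le_real.mpr hc) (hM.dotProduct_mulVec_nonneg x)

lemma psd_trace_nonneg {M : Matrix (Fin D) (Fin D) ℂ} (hM : M.PosSemidef) :
    0 ≤ M.trace := by
  rw [Matrix.trace]
  apply Finset.sum_nonneg
  intro i _
  have := hM.dotProduct_mulVec_nonneg (Pi.single i 1)
  simpa [dotProduct, Pi.single_apply, Matrix.mulVec, Finset.sum_ite_eq] using this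

lemma psd_trace_mul_nonneg {A B : Matrix (Fin D) (Fin D) ℂ} (hA : A.PosSemidef)
    (hB : B.PosSemidef) : 0 ≤ (A * B).trace := by
  obtain ⟨C, rfl⟩ : ∃ C : Matrix (Fin D) (Fin D) ℂ, B = Cᴴ * C := by
    open scoped MatrixOrder in
    simpa [star_eq_conjTranspose] using CStarAlgebra.nonneg_iff_eq_star_mul_self.mp hB.nonneg
  have h1 : (A * (Cᴴ * C)).trace = (C * A * Cᴴ).trace := by
    rw [← Matrix.mul_assoc, Matrix.trace_mul_cycle]
  rw [h1]
  exact psd_trace_nonneg (hA.mul_mul_conjTranspose_same C)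

lemma psd_real_of_nonneg {z : ℂ} (h : 0 ≤ z) : z = ((z.re : ℝ) : ℂ) := by
  obtain ⟨h1, h2⟩ := Complex.nonneg_iff.mp h
  exact Complex.ext rfl (by simp [← h2])

end Helpers

set_option maxHeartbeats 2000000 in
/-- Ground-space overlap of any fixed point of the dissipative CPT map
`ρ ↦ KρK + (1 - tr(KρK))·I/D`. -/
theorem stmt4 (D : ℕ) (hD : 1 ≤ D)
    (K P P₀ ρ : Matrix (Fin D) (Fin D) ℂ)
    (Γ Δ ε : ℝ) (hΔ0 : 0 ≤ Δ) (hΔΓ : Δ ≤ Γ) (hΓ1 : Γ ≤ 1) (hΔ1 : Δ < 1) (hε : 0 ≤ ε)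
    (hK : K.IsHermitian) (hKnorm : ‖K‖ ≤ 1)
    (hPherm : P.IsHermitian) (hPproj : P * P = P)
    (hP₀herm : P₀.IsHermitian) (hP₀proj : P₀ * P₀ = P₀)
    (hN : 0 < P.trace.re)
    (hcomm : K * P = P * K)
    (hGamma : (K * P - (Real.sqrt Γ : ℂ) • P).PosSemidef)
    (hDelta : ‖(1 - P) * K * (1 - P)‖ ≤ Real.sqrt Δ)
    (hPP₀ : ‖P - P₀‖ ≤ ε)
    (hρ : ρ.PosSemidef) (hρtr : ρ.trace = 1)
    (hfix : ρ = K * ρ * K + (1 - (K * ρ * K).trace) • ((D : ℂ)⁻¹ • (1 : Matrix (Fin D) (Fin D) ℂ))) :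
    (1 - Δ) / ((Γ - Δ) + ((D : ℝ) / P.trace.re) * (1 - Γ)) - ε ≤ (P₀ * ρ).trace.re := by
  have hΓ0 : (0:ℝ) ≤ Γ := le_trans hΔ0 hΔΓ
  have hDpos : (0:ℝ) < (D:ℝ) := by exact_mod_cast hD
  -- PSD facts (to be proven)
  have hPpsd : P.PosSemidef := by
    have := Matrix.posSemidef_conjTranspose_mul_self P
    rwa [hPherm.eq, hPproj] at this
  -- algebraic normalization lemmas
  have hkpk : K*P*K = K*K*P := by rw [mul_assoc, ← hcomm, ← mul_assoc]
  have e2 : K*P*P = K*P := by rw [mul_assoc, hPproj]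
  have e3 : P*(K*P) = K*P := by rw [← mul_assoc, ← hcomm, mul_assoc, hPproj]
  have e1 : K*P*(K*P) = K*K*P := by rw [mul_assoc K P (K*P), e3, ← mul_assoc]
  have f1 : P*(K*K) = K*K*P := by rw [← mul_assoc, ← hcomm, hkpk]
  have f2 : K*K*P*P = K*K*P := by rw [mul_assoc (K*K) P P, hPproj]
  have f3 : P*(K*K*P) = K*K*P := by rw [← mul_assoc, f1, f2]
  have hQherm : ((1 : Matrix (Fin D) (Fin D) ℂ) - P).IsHermitian :=
    Matrix.isHermitian_one.sub hPherm
  have hQproj : ((1 : Matrix (Fin D) (Fin D) ℂ) - P) * (1 - P) = 1 - P := by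
    rw [mul_sub, mul_one, sub_mul, one_mul, hPproj]
    abel
  have hQpsd : ((1 : Matrix (Fin D) (Fin D) ℂ) - P).PosSemidef := by
    have := Matrix.posSemidef_conjTranspose_mul_self ((1 : Matrix (Fin D) (Fin D) ℂ) - P)
    rwa [hQherm.eq, hQproj] at this
  have hF1 : (K*P*K - ((Γ:ℝ):ℂ)•P).PosSemidef := by
    set C := K*P - (Real.sqrt Γ : ℂ)•P with hC_def
    have hCC : (C*C).PosSemidef := by
      have := Matrix.posSemidef_conjTranspose_mul_self C
      rwa [hGamma.1.eq] at this
    have hgC : (((Real.sqrt Γ : ℝ):ℂ)•C).PosSemidef := psd_smul' hGamma (Real.sqrt_nonneg Γ)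
    have hid : K*P*K - ((Γ:ℝ):ℂ)•P
        = C*C + ((Real.sqrt Γ : ℝ):ℂ)•C + ((Real.sqrt Γ : ℝ):ℂ)•C := by
      rw [hC_def, hkpk]
      simp only [sub_mul, mul_sub, Matrix.smul_mul, Matrix.mul_smul, smul_smul, smul_sub,
        e1, e2, e3, hPproj, ← Complex.ofReal_mul, Real.mul_self_sqrt hΓ0]
      module
    rw [hid]
    exact (hCC.add hgC).add hgC
  have hF4 : ((1:Matrix (Fin D) (Fin D) ℂ) - K*K).PosSemidef := by
    have := psd_sq_sub K 1 hKnorm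
    rwa [one_pow, Complex.ofReal_one, one_smul, hK.eq] at this
  have hF2 : (P - K*P*K).PosSemidef := by
    have h := hF4.conjTranspose_mul_mul_same P
    rw [hPherm.eq] at h
    have hid : P * ((1:Matrix (Fin D) (Fin D) ℂ) - K*K) * P = P - K*P*K := by
      rw [mul_sub, mul_one, sub_mul, hPproj, hkpk, f1, f2]
    rwa [hid] at h
  have hF3 : (((Δ:ℝ):ℂ)•((1 : Matrix (Fin D) (Fin D) ℂ)-P) - (K*K - K*P*K)).PosSemidef := by
    set B := (1 - P) * K * (1 - P) with hB_def
    have hBherm : B.IsHermitian := by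
      unfold Matrix.IsHermitian
      rw [hB_def, Matrix.conjTranspose_mul, Matrix.conjTranspose_mul, hQherm.eq, hK.eq,
        ← mul_assoc]
    have hB' : B = K - K*P := by
      rw [hB_def, sub_mul, one_mul, ← hcomm, mul_sub, mul_one, sub_mul, e2]
      abel
    have hBB : B*B = K*K - K*K*P := by
      rw [hB', sub_mul, mul_sub, mul_sub, ← mul_assoc K K P, hkpk, e1]
      abel
    have hpsd : (((Δ:ℝ):ℂ)•(1:Matrix (Fin D) (Fin D) ℂ) - B.conjTranspose*B).PosSemidef := by
      have := psd_sq_sub B (Real.sqrt Δ) hDelta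
      rwa [Real.sq_sqrt hΔ0] at this
    have h := hpsd.conjTranspose_mul_mul_same (1 - P)
    rw [hQherm.eq] at h
    rw [show B.conjTranspose = B from hBherm.eq] at h
    have hid : ((1:Matrix (Fin D) (Fin D) ℂ) - P) * (((Δ:ℝ):ℂ)•(1:Matrix (Fin D) (Fin D) ℂ) - B*B) * (1 - P)
        = ((Δ:ℝ):ℂ)•((1 : Matrix (Fin D) (Fin D) ℂ)-P) - (K*K - K*P*K) := by
      rw [hBB, hkpk]
      simp only [mul_sub, sub_mul, Matrix.mul_smul, Matrix.smul_mul, smul_sub, one_mul,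
        mul_one, hPproj, f1, f2, f3]
      abel
    rwa [hid] at h
  have hF5 : (((ε:ℝ):ℂ)•(1 : Matrix (Fin D) (Fin D) ℂ) - (P - P₀)).PosSemidef :=
    psd_smul_one_sub _ (hPherm.sub hP₀herm) ε hPP₀
  -- real quantities
  set p : ℝ := (P*ρ).trace.re with hp_def
  set q : ℝ := (K*P*K*ρ).trace.re with hq_def
  set t : ℝ := (K*K*ρ).trace.re with ht_def
  set N : ℝ := P.trace.re with hN_def
  -- basic realness
  have hρre : ρ.trace.re = 1 := by rw [hρtr]; simp
  have hSpsd : (K*ρ*K).PosSemidef := by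
    have := hρ.mul_mul_conjTranspose_same K
    rwa [hK.eq] at this
  have hs := psd_real_of_nonneg (psd_trace_nonneg hSpsd)
  have hNt : P.trace = ((N:ℝ):ℂ) := psd_real_of_nonneg (psd_trace_nonneg hPpsd)
  -- trace of K ρ K equals trace of K K ρ
  have hsre : (K*ρ*K).trace.re = t := by
    rw [ht_def]
    congr 1
    rw [Matrix.trace_mul_comm (K*ρ) K, ← Matrix.mul_assoc]
  -- fixed point equation
  have hE : p = q + (1 - t) * ((D:ℝ)⁻¹ * N) := by
    have hE0 := congrArg (fun M => (P * M).trace) hfix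
    simp only [Matrix.mul_add, Matrix.mul_smul, Matrix.mul_one, Matrix.trace_add,
      Matrix.trace_smul, smul_eq_mul] at hE0
    have hcyc : (P * (K*ρ*K)).trace = (K*P*K*ρ).trace := by
      rw [show P * (K*ρ*K) = (P*K*ρ)*K by noncomm_ring, Matrix.trace_mul_comm,
        show K*(P*K*ρ) = K*P*K*ρ by noncomm_ring]
    rw [hcyc, hs, hNt, hsre] at hE0
    have := congrArg Complex.re hE0
    simpa [Complex.ofReal_mul, ← Complex.ofReal_natCast, ← Complex.ofReal_inv,
      ← Complex.ofReal_sub, ← Complex.ofReal_one, ← Complex.ofReal_mul,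
      ← Complex.ofReal_add] using this
  -- inequality extraction
  have extract : ∀ (A B : Matrix (Fin D) (Fin D) ℂ), (A - B).PosSemidef →
      (B*ρ).trace.re ≤ (A*ρ).trace.re := by
    intro A B hAB
    have h := psd_trace_mul_nonneg hAB hρ
    rw [Matrix.sub_mul, Matrix.trace_sub] at h
    have := (Complex.nonneg_iff.mp h).1
    rw [Complex.sub_re] at this
    linarith
  have hsmulP : ∀ (c : ℝ) (M : Matrix (Fin D) (Fin D) ℂ),
      ((((c:ℝ):ℂ)•M)*ρ).trace.re = c * (M*ρ).trace.re := by
    intro c M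
    rw [Matrix.smul_mul, Matrix.trace_smul, smul_eq_mul, Complex.mul_re]
    simp
  have hI1 : Γ * p ≤ q := by
    have := extract _ _ hF1
    rwa [hsmulP Γ P] at this
  have hI2 : q ≤ p := extract _ _ hF2
  have hI3 : t - q ≤ Δ * (1 - p) := by
    have := extract _ _ hF3
    rw [hsmulP Δ] at this
    rw [Matrix.sub_mul, Matrix.trace_sub, Complex.sub_re] at this
    rw [show ((1:Matrix (Fin D) (Fin D) ℂ) - P) * ρ = ρ - P * ρ by noncomm_ring] at this
    rw [Matrix.trace_sub, Complex.sub_re, hρre] at this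
    linarith
  have hI4 : t ≤ 1 := by
    have := extract _ _ hF4
    rwa [Matrix.one_mul, hρre] at this
  have hI5 : p - ε ≤ (P₀*ρ).trace.re := by
    have := extract _ _ hF5
    rw [hsmulP ε, Matrix.one_mul, hρre, mul_one, Matrix.sub_mul, Matrix.trace_sub,
      Complex.sub_re] at this
    linarith
  have hp0 : 0 ≤ p := (Complex.nonneg_iff.mp (psd_trace_mul_nonneg hPpsd hρ)).1
  have hND : N ≤ (D:ℝ) := by
    have := psd_trace_nonneg hQpsd
    rw [Matrix.trace_sub, Matrix.trace_one] at this
    have h2 := (Complex.nonneg_iff.mp this).1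
    rw [Complex.sub_re] at h2
    simpa using h2
  -- final arithmetic
  set n : ℝ := (D:ℝ)⁻¹ * N with hn_def
  have hn : 0 < n := mul_pos (inv_pos.mpr hDpos) hN
  have hn1 : n ≤ 1 := by
    rw [hn_def]
    rw [inv_mul_le_iff₀ hDpos]
    linarith
  have hA : 0 ≤ (1 - n) * (q - Γ * p) := mul_nonneg (by linarith) (by linarith)
  have hB : 0 ≤ n * (Δ * (1 - p) - (t - q)) := mul_nonneg hn.le (by linarith)
  have hkey : n * (1 - Δ) ≤ p * (1 - Γ + n * (Γ - Δ)) := by nlinarith [hA, hB, hE]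
  set X : ℝ := (Γ - Δ) + ((D:ℝ) / N) * (1 - Γ) with hX_def
  have hnX : n * X = 1 - Γ + n * (Γ - Δ) := by
    rw [hX_def, hn_def]
    field_simp
    ring
  have hXpos : 0 < X := by
    have h0 : 0 ≤ (1 - n) * (1 - Γ) := mul_nonneg (by linarith) (by linarith)
    have h1 : n * (1 - Δ) ≤ n * X := by rw [hnX]; nlinarith [h0]
    have h2 : (1:ℝ) - Δ ≤ X := le_of_mul_le_mul_left h1 hn
    linarith
  have hfinal : (1 - Δ) / X ≤ p := by
    rw [div_le_iff₀ hXpos]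
    have h1 : n * (1 - Δ) ≤ n * (p * X) := by
      have h2 : n * (p * X) = p * (n * X) := by ring
      rw [h2, hnX]
      exact hkey
    exact le_of_mul_le_mul_left h1 hn
  linarith
end

section
/- Let K be a Hermitian D×D complex matrix with ‖K‖ < 1. Then I − K² is invertible, tr((I−K²)^{−1}) > 0, and the matrix ρ∞ := (I−K²)^{−1} / tr((I−K²)^{−1}) is the unique density matrix satisfying the fixed-point equation ρ = KρK + (1 − tr(KρK))·I/D. -/
open scoped Matrix.Norms.L2Operator ComplexOrder

section aux

open Matrix

private lemma stmt5_aux_posdef (D : ℕ) (K : Matrix (Fin D) (Fin D) ℂ)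
    (hK : K.IsHermitian) (hKnorm : ‖K‖ < 1) : (1 - K ^ 2).PosDef := by
  refine Matrix.PosDef.of_dotProduct_mulVec_pos ((Matrix.isHermitian_one).sub (hK.pow 2)) fun x hx => ?_
  have hexp : dotProduct (star x) ((1 - K ^ 2) *ᵥ x)
      = dotProduct (star x) x
        - dotProduct (star (K *ᵥ x)) (K *ᵥ x) := by
    rw [Matrix.sub_mulVec, Matrix.one_mulVec, dotProduct_sub]
    congr 1
    rw [pow_two, ← Matrix.mulVec_mulVec, Matrix.dotProduct_mulVec,
      Matrix.star_mulVec, hK.eq]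
  have key : ∀ v : Fin D → ℂ,
      dotProduct (star v) v
        = Complex.ofReal (‖(WithLp.equiv 2 ((Fin D) → ℂ)).symm v‖ ^ 2) := by
    intro v
    rw [show dotProduct (star v) v = inner ℂ ((WithLp.equiv 2 ((Fin D) → ℂ)).symm v) ((WithLp.equiv 2 ((Fin D) → ℂ)).symm v) from dotProduct_comm _ _, inner_self_eq_norm_sq_to_K]
    norm_num
  have hxn : 0 < ‖(WithLp.equiv 2 ((Fin D) → ℂ)).symm x‖ := by
    rw [norm_pos_iff]
    intro h
    exact hx (by simpa using congrArg (WithLp.equiv 2 _) h)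
  have hbound : ‖(WithLp.equiv 2 ((Fin D) → ℂ)).symm (K *ᵥ x)‖
      ≤ ‖K‖ * ‖(WithLp.equiv 2 ((Fin D) → ℂ)).symm x‖ :=
    K.l2_opNorm_mulVec ((WithLp.equiv 2 ((Fin D) → ℂ)).symm x)
  have hKn : 0 ≤ ‖K‖ := norm_nonneg K
  have h2 : ‖(WithLp.equiv 2 ((Fin D) → ℂ)).symm (K *ᵥ x)‖ ^ 2
      < ‖(WithLp.equiv 2 ((Fin D) → ℂ)).symm x‖ ^ 2 := by
    have h3 : ‖(WithLp.equiv 2 ((Fin D) → ℂ)).symm (K *ᵥ x)‖ ^ 2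
        ≤ (‖K‖ * ‖(WithLp.equiv 2 ((Fin D) → ℂ)).symm x‖) ^ 2 :=
      pow_le_pow_left₀ (norm_nonneg _) hbound 2
    have h4 : (‖K‖ * ‖(WithLp.equiv 2 ((Fin D) → ℂ)).symm x‖) ^ 2
        < ‖(WithLp.equiv 2 ((Fin D) → ℂ)).symm x‖ ^ 2 := by
      have hk2 : ‖K‖ ^ 2 < 1 := by nlinarith
      nlinarith [mul_pos hxn hxn]
    linarith
  rw [hexp, key x, key (K *ᵥ x), ← Complex.ofReal_sub, Complex.zero_lt_real]
  linarith

end aux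

/-- For `‖K‖ < 1` Hermitian, `(I - K²)⁻¹/tr((I - K²)⁻¹)` is the unique density-matrix fixed
point of the map `ρ ↦ KρK + (1 - tr(KρK))·I/D`. -/
theorem stmt5 (D : ℕ) (hD : 1 ≤ D)
    (K : Matrix (Fin D) (Fin D) ℂ)
    (hK : K.IsHermitian) (hKnorm : ‖K‖ < 1) :
    IsUnit (1 - K ^ 2) ∧
    0 < ((1 - K ^ 2)⁻¹).trace.re ∧
    (let ρfix : Matrix (Fin D) (Fin D) ℂ := (((1 - K ^ 2)⁻¹).trace.re)⁻¹ • (1 - K ^ 2)⁻¹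
     ρfix.PosSemidef ∧ ρfix.trace = 1 ∧
     ρfix = K * ρfix * K +
        (1 - (K * ρfix * K).trace) • ((D : ℂ)⁻¹ • (1 : Matrix (Fin D) (Fin D) ℂ)) ∧
     ∀ ρ : Matrix (Fin D) (Fin D) ℂ, ρ.PosSemidef → ρ.trace = 1 →
       ρ = K * ρ * K + (1 - (K * ρ * K).trace) • ((D : ℂ)⁻¹ • (1 : Matrix (Fin D) (Fin D) ℂ)) →
       ρ = ρfix) := by
  haveI : Nonempty (Fin D) := ⟨⟨0, hD⟩⟩
  have hMpd : (1 - K ^ 2).PosDef := stmt5_aux_posdef D K hK hKnorm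
  have hMunit : IsUnit (1 - K ^ 2) := hMpd.isUnit
  have hdet : IsUnit (1 - K ^ 2).det := (Matrix.isUnit_iff_isUnit_det _).mp hMunit
  set A : Matrix (Fin D) (Fin D) ℂ := (1 - K ^ 2)⁻¹ with hA
  have hApd : A.PosDef := hMpd.inv
  have hAM : A * (1 - K ^ 2) = 1 := Matrix.nonsing_inv_mul _ hdet
  have hMA : (1 - K ^ 2) * A = 1 := Matrix.mul_nonsing_inv _ hdet
  have hdiag : ∀ i, 0 < A i i := by
    intro i
    have hs : (Pi.single i 1 : Fin D → ℂ) ≠ 0 := by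
      intro h
      have := congrFun h i
      simp [Pi.single_eq_same] at this
    have := hApd.dotProduct_mulVec_pos hs
    simpa [dotProduct, Pi.single_apply, mul_comm] using this
  have htrre : 0 < A.trace.re := by
    have h : A.trace.re = ∑ i, (A i i).re := by
      simp [Matrix.trace, Matrix.diag, Complex.re_sum]
    rw [h]
    exact Finset.sum_pos (fun i _ => (Complex.lt_def.mp (hdiag i)).1) Finset.univ_nonempty
  have htr : A.trace = (A.trace.re : ℂ) := by
    have h1 : star A.trace = A.trace := by
      rw [← Matrix.trace_conjTranspose, hApd.isHermitian.eq]
    exact (Complex.conj_eq_iff_re.mp h1).symm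
  -- commutation facts
  have hKM : K * (1 - K ^ 2) = (1 - K ^ 2) * K := by
    rw [mul_sub, sub_mul, mul_one, one_mul, ← pow_succ, ← pow_succ']
  have hKA : K * A = A * K := by
    have h := congrArg (fun X => A * X * A) hKM.symm
    simp only [Matrix.mul_assoc] at h
    rwa [Matrix.nonsing_inv_mul_cancel_left _ _ hdet, hMA, mul_one] at h
  have hKAK : K * A * K = A - 1 := by
    rw [hKA, Matrix.mul_assoc, ← pow_two, (sub_sub_cancel 1 (K ^ 2)).symm,
      mul_sub, mul_one, hAM]
  -- scalars
  set c : ℝ := A.trace.re with hc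
  have hcne : (c : ℂ) ≠ 0 := by
    exact_mod_cast htrre.ne'
  have hDne : (D : ℂ) ≠ 0 := by
    exact_mod_cast (Nat.cast_ne_zero (R := ℂ)).mpr (by omega)
  have hsmul : ∀ (r : ℝ) (X : Matrix (Fin D) (Fin D) ℂ), r • X = (r : ℂ) • X := by
    intro r X
    ext i j
    simp [Matrix.smul_apply, Complex.real_smul]
  have ρeq : (c⁻¹ : ℝ) • A = ((c : ℂ))⁻¹ • A := by
    rw [hsmul, Complex.ofReal_inv]
  refine ⟨hMunit, htrre, ?_, ?_, ?_, ?_⟩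
  · -- PosSemidef
    rw [ρeq]
    refine Matrix.PosSemidef.of_dotProduct_mulVec_nonneg ?_ (fun x => ?_)
    · show ((c : ℂ)⁻¹ • A).conjTranspose = _
      rw [Matrix.conjTranspose_smul, hApd.isHermitian.eq]
      congr 1
      simp [Complex.star_def, Complex.conj_ofReal]
    · rw [Matrix.smul_mulVec, dotProduct_smul, smul_eq_mul]
      refine mul_nonneg ?_ (hApd.posSemidef.dotProduct_mulVec_nonneg x)
      rw [← Complex.ofReal_inv, Complex.zero_le_real]
      positivity
  · rw [ρeq, Matrix.trace_smul, htr, smul_eq_mul, inv_mul_cancel₀ hcne]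
  · -- fixed point
    rw [ρeq]
    have hKrK : K * ((c : ℂ)⁻¹ • A) * K = (c : ℂ)⁻¹ • (A - 1) := by
      rw [Matrix.mul_smul, Matrix.smul_mul, hKAK]
    rw [hKrK]
    have htrKrK : ((c : ℂ)⁻¹ • (A - 1)).trace = (c : ℂ)⁻¹ * ((c : ℂ) - D) := by
      rw [Matrix.trace_smul, Matrix.trace_sub, Matrix.trace_one, htr, smul_eq_mul]
      simp
    rw [htrKrK]
    have hscal : (1 - (c : ℂ)⁻¹ * ((c : ℂ) - D)) = (c : ℂ)⁻¹ * D := by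
      field_simp
      ring
    rw [hscal, smul_smul, mul_assoc, mul_inv_cancel₀ hDne, mul_one, smul_sub]
    abel
  · -- uniqueness
    intro ρ hρpsd hρtr hρfp
    set t : ℂ := (1 - (K * ρ * K).trace) * (D : ℂ)⁻¹ with ht
    have h1 : ρ - K * ρ * K = t • 1 := by
      nth_rewrite 1 [hρfp]
      rw [ht, ← smul_smul]
      abel
    have h2 : ((c : ℂ)⁻¹ • A : Matrix (Fin D) (Fin D) ℂ) - K * ((c : ℂ)⁻¹ • A) * K
        = (c : ℂ)⁻¹ • (1 : Matrix (Fin D) (Fin D) ℂ) := by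
      rw [Matrix.mul_smul, Matrix.smul_mul, hKAK, ← smul_sub]
      congr 1
      abel
    set σ : Matrix (Fin D) (Fin D) ℂ := (c : ℂ)⁻¹ • ρ - t • ((c : ℂ)⁻¹ • A) with hσ
    have hσfix : σ = K * σ * K := by
      have e1 : K * σ * K = (c : ℂ)⁻¹ • (K * ρ * K) - t • (K * ((c : ℂ)⁻¹ • A) * K) := by
        rw [hσ]
        simp only [Matrix.mul_sub, Matrix.sub_mul, Matrix.mul_smul, Matrix.smul_mul]
      have e2 : (c : ℂ)⁻¹ • (K * ρ * K) = (c : ℂ)⁻¹ • ρ - (c : ℂ)⁻¹ • (t • (1 : Matrix (Fin D) (Fin D) ℂ)) := by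
        rw [← smul_sub, ← h1]
        congr 1
        abel
      have e3 : t • (K * ((c : ℂ)⁻¹ • A) * K)
          = t • ((c : ℂ)⁻¹ • A) - t • ((c : ℂ)⁻¹ • (1 : Matrix (Fin D) (Fin D) ℂ)) := by
        rw [← smul_sub, ← h2]
        congr 1
        abel
      rw [e1, e2, e3, hσ, smul_comm ((c : ℂ)⁻¹) t]
      abel
    have hσ0 : σ = 0 := by
      by_contra hne
      have hpos : 0 < ‖σ‖ := norm_pos_iff.mpr hne
      have hb : ‖σ‖ ≤ ‖K‖ * ‖σ‖ * ‖K‖ := by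
        calc ‖σ‖ = ‖K * σ * K‖ := by rw [← hσfix]
          _ ≤ ‖K * σ‖ * ‖K‖ := norm_mul_le _ _
          _ ≤ ‖K‖ * ‖σ‖ * ‖K‖ :=
            mul_le_mul_of_nonneg_right (norm_mul_le _ _) (norm_nonneg _)
      nlinarith [mul_nonneg (norm_nonneg K) (norm_nonneg σ), hKnorm, hpos, hb]
    have heq : (c : ℂ)⁻¹ • ρ = t • ((c : ℂ)⁻¹ • A) := sub_eq_zero.mp hσ0
    have htt : t = (c : ℂ)⁻¹ := by
      have h3 := congrArg Matrix.trace heq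
      rw [Matrix.trace_smul, Matrix.trace_smul, Matrix.trace_smul, hρtr, htr] at h3
      simp only [smul_eq_mul, mul_one, inv_mul_cancel₀ hcne] at h3
      exact h3.symm
    rw [ρeq]
    rw [htt] at heq
    exact smul_right_injective (Matrix (Fin D) (Fin D) ℂ) (inv_ne_zero hcne) heq
end

section
/- Let K be a Hermitian D×D complex matrix with ‖K‖ < 1, let Π be a nonzero orthogonal projector, and let reals Γ ≥ 0 and 0 ≤ Δ < 1 satisfy KΠ = ΠK, KΠ ≥ √Γ·Π in the Loewner order, and ‖(I−Π)K(I−Π)‖ ≤ √Δ. Then Γ < 1, the inverse (I−K²)^{−1} commutes with Π, and one has the Loewner-order bounds Π (I−K²)^{−1} Π ≥ (1/(1−Γ))·Π and (I−Π)(I−K²)^{−1}(I−Π) ≤ (1/(1−Δ))·(I−Π). -/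
open scoped Matrix.Norms.L2Operator ComplexOrder
open Matrix

variable {n : Type*} [Fintype n] [DecidableEq n]

noncomputable def agspSqrt {A : Matrix n n ℂ} (hA : A.PosSemidef) : Matrix n n ℂ :=
  (hA.1.eigenvectorUnitary : Matrix n n ℂ) * diagonal ((↑) ∘ Real.sqrt ∘ hA.1.eigenvalues) *
    star (hA.1.eigenvectorUnitary : Matrix n n ℂ)

lemma agspSqrt_herm {A : Matrix n n ℂ} (hA : A.PosSemidef) : (agspSqrt hA)ᴴ = agspSqrt hA := by
  have hd : star (diagonal ((↑) ∘ Real.sqrt ∘ hA.1.eigenvalues) : Matrix n n ℂ) =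
      diagonal ((↑) ∘ Real.sqrt ∘ hA.1.eigenvalues) := by
    rw [star_eq_conjTranspose, diagonal_conjTranspose]
    congr 1
    ext i
    simp
  simp only [agspSqrt, ← star_eq_conjTranspose, star_mul, star_star, hd, Matrix.mul_assoc]

lemma agspSqrt_mul_self {A : Matrix n n ℂ} (hA : A.PosSemidef) : agspSqrt hA * agspSqrt hA = A := by
  have hUU : star (hA.1.eigenvectorUnitary : Matrix n n ℂ) * hA.1.eigenvectorUnitary = 1 :=
    (Matrix.mem_unitaryGroup_iff').mp hA.1.eigenvectorUnitary.2
  have hspec : A = (hA.1.eigenvectorUnitary : Matrix n n ℂ) *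
      diagonal (RCLike.ofReal ∘ hA.1.eigenvalues) * star (hA.1.eigenvectorUnitary : Matrix n n ℂ) :=
    hA.1.spectral_theorem
  have hdd : diagonal ((↑) ∘ Real.sqrt ∘ hA.1.eigenvalues) *
      diagonal ((↑) ∘ Real.sqrt ∘ hA.1.eigenvalues) =
      (diagonal (RCLike.ofReal ∘ hA.1.eigenvalues) : Matrix n n ℂ) := by
    rw [diagonal_mul_diagonal]
    congr 1
    ext i
    simp only [Function.comp_apply]
    rw [← Complex.ofReal_mul, Real.mul_self_sqrt (hA.eigenvalues_nonneg i)]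
    rfl
  conv_rhs => rw [hspec]
  rw [← hdd, agspSqrt]
  calc _ = (hA.1.eigenvectorUnitary : Matrix n n ℂ) * diagonal ((↑) ∘ Real.sqrt ∘ hA.1.eigenvalues) *
        (star (hA.1.eigenvectorUnitary : Matrix n n ℂ) * (hA.1.eigenvectorUnitary : Matrix n n ℂ)) *
        diagonal ((↑) ∘ Real.sqrt ∘ hA.1.eigenvalues) *
        star (hA.1.eigenvectorUnitary : Matrix n n ℂ) := by simp only [Matrix.mul_assoc]
    _ = _ := by rw [hUU, Matrix.mul_one]; simp only [Matrix.mul_assoc]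

/-- anything commuting with a PSD matrix commutes with its square root -/
lemma agsp_sqrt_commute {A B : Matrix n n ℂ} (hA : A.PosSemidef) (hAB : A * B = B * A) :
    agspSqrt hA * B = B * agspSqrt hA := by
  set U : Matrix n n ℂ := hA.1.eigenvectorUnitary.1 with hUdef
  have hUU : star U * U = 1 := (Matrix.mem_unitaryGroup_iff').mp hA.1.eigenvectorUnitary.2
  have hUU' : U * star U = 1 := (Matrix.mem_unitaryGroup_iff).mp hA.1.eigenvectorUnitary.2
  set d : n → ℂ := RCLike.ofReal ∘ hA.1.eigenvalues with hd
  set e : n → ℂ := (↑) ∘ Real.sqrt ∘ hA.1.eigenvalues with he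
  set C : Matrix n n ℂ := star U * B * U with hC
  have hspec : A = U * diagonal d * star U := hA.1.spectral_theorem
  have hdiag : diagonal d * C = C * diagonal d := by
    have h1 : star U * A = diagonal d * star U := by
      rw [hspec]; rw [← mul_assoc, ← mul_assoc, hUU, one_mul]
    have h2 : A * U = U * diagonal d := by
      rw [hspec]; rw [mul_assoc, hUU, mul_one]
    calc diagonal d * C = (diagonal d * star U) * B * U := by
            rw [hC]; noncomm_ring
      _ = star U * (A * B) * U := by rw [← h1]; noncomm_ring
      _ = star U * B * (A * U) := by rw [hAB]; noncomm_ring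
      _ = C * diagonal d := by rw [h2, hC]; noncomm_ring
  have hdiag' : diagonal e * C = C * diagonal e := by
    ext i j
    have h := congrFun (congrFun hdiag i) j
    simp only [diagonal_mul, mul_diagonal] at h ⊢
    rcases eq_or_ne (hA.1.eigenvalues i) (hA.1.eigenvalues j) with hij | hij
    · simp [he, hij, mul_comm]
    · have : C i j = 0 := by
        have hdij : d i ≠ d j := by
          simp only [hd, Function.comp_apply]
          exact_mod_cast fun hcon => hij (by exact_mod_cast hcon)
        have : (d i - d j) * C i j = 0 := by rw [sub_mul, h, mul_comm]; ring
        rcases mul_eq_zero.mp this with h0 | h0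
        · exact absurd (sub_eq_zero.mp h0) hdij
        · exact h0
      simp [this]
  have hsq : agspSqrt hA = U * diagonal e * star U := rfl
  calc agspSqrt hA * B = U * diagonal e * (star U * B) := by rw [hsq]; noncomm_ring
    _ = U * diagonal e * (star U * B * U * star U) := by
        rw [mul_assoc (star U * B) U (star U), hUU', mul_one]
    _ = U * (diagonal e * C) * star U := by rw [hC]; noncomm_ring
    _ = U * C * diagonal e * star U := by rw [hdiag']; noncomm_ring
    _ = B * agspSqrt hA := by
        rw [hC, hsq]
        calc U * (star U * B * U) * diagonal e * star U
            = (U * star U) * B * (U * diagonal e * star U) := by noncomm_ring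
          _ = B * (U * diagonal e * star U) := by rw [hUU', one_mul]

/-- the product of two commuting PSD matrices is PSD -/
lemma agsp_psd_mul {A B : Matrix n n ℂ} (hA : A.PosSemidef) (hB : B.PosSemidef)
    (hAB : A * B = B * A) : (A * B).PosSemidef := by
  have hs := agsp_sqrt_commute hA hAB
  have : A * B = agspSqrt hA * B * (agspSqrt hA)ᴴ := by
    rw [agspSqrt_herm hA, mul_assoc, ← hs, ← mul_assoc, agspSqrt_mul_self hA]
  rw [this]
  exact hB.mul_mul_conjTranspose_same _

noncomputable def eV {D : ℕ} (x : Fin D → ℂ) : EuclideanSpace ℂ (Fin D) :=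
  (WithLp.equiv 2 _).symm x

lemma agsp_dot_self {D : ℕ} (x : Fin D → ℂ) :
    star x ⬝ᵥ x = ((‖eV x‖ ^ 2 : ℝ) : ℂ) := by
  have := EuclideanSpace.inner_toLp_toLp (𝕜 := ℂ) x x
  rw [inner_self_eq_norm_sq_to_K] at this
  rw [dotProduct_comm, ← this, eV]
  push_cast
  rfl

lemma agsp_dot_inner {D : ℕ} (x y : Fin D → ℂ) :
    star x ⬝ᵥ y = inner ℂ (eV x) (eV y) := by
  simp only [eV]
  rw [dotProduct_comm]
  exact (EuclideanSpace.inner_toLp_toLp x y).symm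

lemma agsp_mulVec_norm {D : ℕ} (A : Matrix (Fin D) (Fin D) ℂ) (x : Fin D → ℂ) :
    ‖eV (A *ᵥ x)‖ ≤ ‖A‖ * ‖eV x‖ :=
  A.l2_opNorm_mulVec (eV x)

lemma agsp_dot_conjTranspose_mul {D : ℕ} (A : Matrix (Fin D) (Fin D) ℂ) (x : Fin D → ℂ) :
    star x ⬝ᵥ ((Aᴴ * A) *ᵥ x) = ((‖eV (A *ᵥ x)‖ ^ 2 : ℝ) : ℂ) := by
  rw [← Matrix.mulVec_mulVec, Matrix.dotProduct_mulVec, Matrix.vecMul_conjTranspose, star_star,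
    agsp_dot_self]

lemma agsp_smul_psd {D : ℕ} {c : ℝ} (hc : 0 ≤ c) {X : Matrix (Fin D) (Fin D) ℂ}
    (hX : X.PosSemidef) : ((c : ℂ) • X).PosSemidef := by
  have hherm : ((c : ℂ) • X).IsHermitian := by
    have h1 := hX.1
    unfold Matrix.IsHermitian at h1 ⊢
    rw [Matrix.conjTranspose_smul, h1, Complex.star_def, Complex.conj_ofReal]
  refine Matrix.PosSemidef.of_dotProduct_mulVec_nonneg hherm (fun x => ?_)
  rw [Matrix.smul_mulVec, dotProduct_smul]
  have h0 : (0:ℂ) ≤ (c:ℂ) := by exact_mod_cast hc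
  exact mul_nonneg h0 (hX.dotProduct_mulVec_nonneg x)

lemma agsp_inv_commute {n : Type*} [Fintype n] [DecidableEq n] {M X : Matrix n n ℂ}
    (h : IsUnit M.det) (hc : M * X = X * M) : M⁻¹ * X = X * M⁻¹ := by
  have h1 := Matrix.nonsing_inv_mul M h
  have h2 := Matrix.mul_nonsing_inv M h
  calc M⁻¹ * X = M⁻¹ * X * (M * M⁻¹) := by rw [h2, mul_one]
    _ = M⁻¹ * (X * M) * M⁻¹ := by noncomm_ring
    _ = M⁻¹ * (M * X) * M⁻¹ := by rw [hc]
    _ = X * M⁻¹ := by rw [← mul_assoc, h1, one_mul]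

lemma agsp_posdef {D : ℕ} {K : Matrix (Fin D) (Fin D) ℂ} (hK : K.IsHermitian)
    (hKnorm : ‖K‖ < 1) : (1 - K ^ 2 : Matrix (Fin D) (Fin D) ℂ).PosDef := by
  have hK2 : K ^ 2 = Kᴴ * K := by rw [hK.eq, pow_two]
  have hherm : (1 - K ^ 2 : Matrix (Fin D) (Fin D) ℂ).IsHermitian :=
    (Matrix.isHermitian_one).sub (hK.pow 2)
  refine Matrix.PosDef.of_dotProduct_mulVec_pos hherm (fun x hx => ?_)
  have heq : star x ⬝ᵥ ((1 - K ^ 2) *ᵥ x)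
      = ((‖eV x‖ ^ 2 - ‖eV (K *ᵥ x)‖ ^ 2 : ℝ) : ℂ) := by
    rw [Matrix.sub_mulVec, dotProduct_sub, Matrix.one_mulVec, hK2,
      agsp_dot_self, agsp_dot_conjTranspose_mul]
    push_cast; ring
  rw [heq, Complex.zero_lt_real]
  have hxe : eV x ≠ 0 := by
    simpa [eV] using hx
  have hxpos : 0 < ‖eV x‖ := norm_pos_iff.mpr hxe
  have hb := agsp_mulVec_norm K x
  have h2 : ‖eV (K *ᵥ x)‖ ^ 2 ≤ (‖K‖ * ‖eV x‖) ^ 2 :=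
    pow_le_pow_left₀ (norm_nonneg _) hb 2
  have hK1 : ‖K‖ ^ 2 < 1 := by nlinarith [norm_nonneg K]
  have h4 : 0 < (1 - ‖K‖ ^ 2) * ‖eV x‖ ^ 2 := mul_pos (by linarith) (pow_pos hxpos 2)
  nlinarith []

/-- Loewner-order bounds on the blocks of `(I - K²)⁻¹` for an AGSP `K`. -/
theorem stmt7 (D : ℕ) (hD : 1 ≤ D)
    (K P : Matrix (Fin D) (Fin D) ℂ)
    (hK : K.IsHermitian) (hKnorm : ‖K‖ < 1)
    (hPherm : P.IsHermitian) (hPproj : P * P = P) (hPne : P ≠ 0)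
    (Γ Δ : ℝ) (hΓ : 0 ≤ Γ) (hΔ0 : 0 ≤ Δ) (hΔ1 : Δ < 1)
    (hcomm : K * P = P * K)
    (hGamma : (K * P - (Real.sqrt Γ : ℂ) • P).PosSemidef)
    (hDelta : ‖(1 - P) * K * (1 - P)‖ ≤ Real.sqrt Δ) :
    Γ < 1 ∧
    (1 - K ^ 2)⁻¹ * P = P * (1 - K ^ 2)⁻¹ ∧
    (P * (1 - K ^ 2)⁻¹ * P - (((1 - Γ)⁻¹ : ℝ) : ℂ) • P).PosSemidef ∧
    ((((1 - Δ)⁻¹ : ℝ) : ℂ) • (1 - P) - (1 - P) * (1 - K ^ 2)⁻¹ * (1 - P)).PosSemidef := by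
  classical
  set M : Matrix (Fin D) (Fin D) ℂ := 1 - K ^ 2 with hMdef
  set Q : Matrix (Fin D) (Fin D) ℂ := 1 - P with hQdef
  have hQproj : Q * Q = Q := by
    rw [hQdef, mul_sub, mul_one, sub_mul, one_mul, hPproj]; abel
  have hQherm : Qᴴ = Q := by
    rw [hQdef, Matrix.conjTranspose_sub, Matrix.conjTranspose_one, hPherm.eq]
  have hKQ : K * Q = Q * K := by
    rw [hQdef, mul_sub, sub_mul, mul_one, one_mul, hcomm]
  have hK2P : K ^ 2 * P = P * K ^ 2 := by
    rw [pow_two, mul_assoc, hcomm, ← mul_assoc, hcomm, mul_assoc]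
  have hK2Q : K ^ 2 * Q = Q * K ^ 2 := by
    rw [hQdef, mul_sub, sub_mul, mul_one, one_mul, hK2P]
  have hMP : M * P = P * M := by
    rw [hMdef, sub_mul, mul_sub, one_mul, mul_one, hK2P]
  have hMQ : M * Q = Q * M := by
    have e1 : M * Q = M - M * P := by rw [hQdef, mul_sub, mul_one]
    have e2 : Q * M = M - P * M := by rw [hQdef, sub_mul, one_mul]
    rw [e1, e2, hMP]
  have hMK2 : M * K ^ 2 = K ^ 2 * M := by rw [hMdef]; noncomm_ring
  have hM : M.PosDef := agsp_posdef hK hKnorm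
  have hdet : IsUnit M.det := (Matrix.isUnit_iff_isUnit_det M).mp hM.isUnit
  have hMinv : (M⁻¹).PosSemidef := hM.posSemidef.inv
  have hinvP : M⁻¹ * P = P * M⁻¹ := agsp_inv_commute hdet hMP
  have hinvQ : M⁻¹ * Q = Q * M⁻¹ := agsp_inv_commute hdet hMQ
  -- Γ < 1
  have hΓ1 : Γ < 1 := by
    have hex : ∃ x : Fin D → ℂ, P *ᵥ x ≠ 0 := by
      by_contra h
      push_neg at h
      apply hPne
      ext i j
      have := congrFun (h (Pi.single j 1)) i
      simpa [Matrix.mulVec, dotProduct, Pi.single_apply] using this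
    obtain ⟨x, hxne⟩ := hex
    set v : Fin D → ℂ := P *ᵥ x with hv
    have hPv : P *ᵥ v = v := by
      rw [hv, Matrix.mulVec_mulVec, hPproj]
    have h0 := hGamma.dotProduct_mulVec_nonneg v
    rw [Matrix.sub_mulVec, dotProduct_sub, Matrix.smul_mulVec,
      dotProduct_smul, ← Matrix.mulVec_mulVec, hPv] at h0
    rw [agsp_dot_self, agsp_dot_inner] at h0
    have h0' : ((Real.sqrt Γ * ‖eV v‖ ^ 2 : ℝ) : ℂ) ≤ inner ℂ (eV v) (eV (K *ᵥ v)) := by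
      have h := sub_nonneg.mp h0
      calc ((Real.sqrt Γ * ‖eV v‖ ^ 2 : ℝ) : ℂ)
          = (Real.sqrt Γ : ℂ) • ((‖eV v‖ ^ 2 : ℝ) : ℂ) := by
            rw [smul_eq_mul, Complex.ofReal_mul]
        _ ≤ inner ℂ (eV v) (eV (K *ᵥ v)) := h
    have h1 : Real.sqrt Γ * ‖eV v‖ ^ 2 ≤ (inner ℂ (eV v) (eV (K *ᵥ v)) : ℂ).re := by
      have h := (Complex.le_def.mp h0').1
      simpa only [Complex.ofReal_re] using h
    have h2 : (inner ℂ (eV v) (eV (K *ᵥ v)) : ℂ).re ≤ ‖K‖ * ‖eV v‖ ^ 2 := by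
      calc (inner ℂ (eV v) (eV (K *ᵥ v)) : ℂ).re ≤ ‖(inner ℂ (eV v) (eV (K *ᵥ v)) : ℂ)‖ :=
            Complex.re_le_norm _
        _ ≤ ‖eV v‖ * ‖eV (K *ᵥ v)‖ := norm_inner_le_norm _ _
        _ ≤ ‖eV v‖ * (‖K‖ * ‖eV v‖) :=
            mul_le_mul_of_nonneg_left (agsp_mulVec_norm K v) (norm_nonneg _)
        _ = ‖K‖ * ‖eV v‖ ^ 2 := by ring
    have hvpos : 0 < ‖eV v‖ := norm_pos_iff.mpr (by simpa [eV] using hxne)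
    have h3 : Real.sqrt Γ ≤ ‖K‖ := by
      have := le_trans h1 h2
      have hsq : 0 < ‖eV v‖ ^ 2 := pow_pos hvpos 2
      exact le_of_mul_le_mul_right (by linarith) hsq
    nlinarith [Real.sq_sqrt hΓ, Real.sqrt_nonneg Γ, norm_nonneg K]
  -- third part
  have hPpsd : P.PosSemidef := by
    have h : P = Pᴴ * P := by rw [hPherm.eq, hPproj]
    exact h ▸ Matrix.posSemidef_conjTranspose_mul_self P
  set γ : ℂ := (Real.sqrt Γ : ℂ) with hγ
  have hγ2 : γ * γ = (Γ : ℂ) := by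
    rw [hγ, ← Complex.ofReal_mul, Real.mul_self_sqrt hΓ]
  have hKPP : (K * P) * P = K * P := by rw [mul_assoc, hPproj]
  have hPKP : P * (K * P) = K * P := by rw [← mul_assoc, ← hcomm, mul_assoc, hPproj]
  have hKPKP : (K * P) * (K * P) = K ^ 2 * P := by
    rw [mul_assoc, hPKP, ← mul_assoc, ← pow_two]
  set N : Matrix (Fin D) (Fin D) ℂ := K ^ 2 * P - (Γ : ℂ) • P with hN
  have hBpsd : (K * P + γ • P).PosSemidef := by
    have he : K * P + γ • P = (K * P - γ • P) + ((2 * Real.sqrt Γ : ℝ) : ℂ) • P := by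
      push_cast
      module
    rw [he]
    exact Matrix.PosSemidef.add hGamma (agsp_smul_psd (by positivity) hPpsd)
  have hABN : (K * P - γ • P) * (K * P + γ • P) = N := by
    simp only [hN, sub_mul, add_mul, mul_add, mul_sub, smul_mul_assoc, mul_smul_comm,
      hKPKP, hKPP, hPKP, hPproj]
    match_scalars <;> first | ring1 | linear_combination hγ2 | linear_combination -hγ2
  have hBAN : (K * P + γ • P) * (K * P - γ • P) = N := by
    simp only [hN, sub_mul, add_mul, mul_add, mul_sub, smul_mul_assoc, mul_smul_comm,
      hKPKP, hKPP, hPKP, hPproj]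
    match_scalars <;> first | ring1 | linear_combination hγ2 | linear_combination -hγ2
  have hNpsd : N.PosSemidef := by
    rw [← hABN]
    exact agsp_psd_mul hGamma hBpsd (by rw [hABN, hBAN])
  have hMN : M * N = N * M := by
    have h1 : M * (K ^ 2 * P) = (K ^ 2 * P) * M := by
      rw [← mul_assoc, hMK2, mul_assoc, hMP, ← mul_assoc]
    have e1 : M * N = M * (K ^ 2 * P) - (Γ : ℂ) • (M * P) := by
      rw [hN, mul_sub, mul_smul_comm]
    have e2 : N * M = (K ^ 2 * P) * M - (Γ : ℂ) • (P * M) := by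
      rw [hN, sub_mul, smul_mul_assoc]
    rw [e1, e2, h1, hMP]
  have hprod : (M⁻¹ * N).PosSemidef :=
    agsp_psd_mul hMinv hNpsd (agsp_inv_commute hdet hMN)
  have hc0 : (0:ℝ) ≤ (1 - Γ)⁻¹ := inv_nonneg.mpr (by linarith)
  have hfinal3 : P * M⁻¹ * P - (((1 - Γ)⁻¹ : ℝ) : ℂ) • P
      = (((1 - Γ)⁻¹ : ℝ) : ℂ) • (M⁻¹ * N) := by
    have e1 : P * M⁻¹ * P = M⁻¹ * P := by
      rw [← hinvP, mul_assoc, hPproj]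
    have e2 : M⁻¹ * (M * P) = P := by
      rw [← mul_assoc, Matrix.nonsing_inv_mul M hdet, one_mul]
    have hMPe : M * P = P - K ^ 2 * P := by rw [hMdef, sub_mul, one_mul]
    have inner : P - (((1 - Γ)⁻¹ : ℝ) : ℂ) • (M * P) = (((1 - Γ)⁻¹ : ℝ) : ℂ) • N := by
      rw [hMPe, hN]
      have hne : (1 - Γ : ℝ) ≠ 0 := by linarith
      have hneC : (1 : ℂ) - (Γ : ℂ) ≠ 0 := by
        have h := Complex.ofReal_ne_zero.mpr hne
        push_cast at h
        exact h
      match_scalars <;> (push_cast; field_simp; try ring)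
    calc P * M⁻¹ * P - (((1 - Γ)⁻¹ : ℝ) : ℂ) • P
        = M⁻¹ * P - (((1 - Γ)⁻¹ : ℝ) : ℂ) • (M⁻¹ * (M * P)) := by rw [e1, e2]
      _ = M⁻¹ * (P - (((1 - Γ)⁻¹ : ℝ) : ℂ) • (M * P)) := by
          rw [mul_sub M⁻¹ P ((((1 - Γ)⁻¹ : ℝ) : ℂ) • (M * P)),
            mul_smul_comm (((1 - Γ)⁻¹ : ℝ) : ℂ) M⁻¹ (M * P)]
      _ = M⁻¹ * ((((1 - Γ)⁻¹ : ℝ) : ℂ) • N) := by rw [inner]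
      _ = (((1 - Γ)⁻¹ : ℝ) : ℂ) • (M⁻¹ * N) := (mul_smul_comm _ _ _)
  -- fourth part
  obtain ⟨R, hR⟩ : ∃ R : Matrix (Fin D) (Fin D) ℂ, R = K * Q := ⟨K * Q, rfl⟩
  have hQKQ : Q * K * Q = K * Q := by rw [← hKQ, mul_assoc, hQproj]
  have hRherm : Rᴴ = R := by
    rw [hR, Matrix.conjTranspose_mul, hQherm, hK.eq, ← hKQ]
  have hRQ : R * Q = R := by rw [hR, mul_assoc, hQproj]
  have hRR : Rᴴ * R = K ^ 2 * Q := by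
    rw [hRherm, hR, mul_assoc, ← mul_assoc Q K Q, ← hKQ, mul_assoc, hQproj, ← mul_assoc, ← pow_two]
  have hRnorm : ‖R‖ ≤ Real.sqrt Δ := by
    rw [hR, ← hQKQ]
    exact hDelta
  set N' : Matrix (Fin D) (Fin D) ℂ := (Δ : ℂ) • Q - K ^ 2 * Q with hN'
  have hN'psd : N'.PosSemidef := by
    refine Matrix.PosSemidef.of_dotProduct_mulVec_nonneg ?_ ?_
    · show N'ᴴ = N'
      rw [hN', Matrix.conjTranspose_sub, Matrix.conjTranspose_smul, Matrix.conjTranspose_mul,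
        hQherm, (hK.pow 2).eq, hK2Q, Complex.star_def, Complex.conj_ofReal]
    · intro x
      have hQHQ : Q = Qᴴ * Q := by rw [hQherm, hQproj]
      have hd1 : star x ⬝ᵥ (Q *ᵥ x) = ((‖eV (Q *ᵥ x)‖ ^ 2 : ℝ) : ℂ) := by
        conv_lhs => rw [hQHQ]
        exact agsp_dot_conjTranspose_mul Q x
      rw [hN', Matrix.sub_mulVec, dotProduct_sub, Matrix.smul_mulVec,
        dotProduct_smul, ← hRR, agsp_dot_conjTranspose_mul, hd1, smul_eq_mul,
        ← Complex.ofReal_mul, ← Complex.ofReal_sub, Complex.zero_le_real]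
      have hRx : R *ᵥ x = R *ᵥ (Q *ᵥ x) := by rw [Matrix.mulVec_mulVec, hRQ]
      have hb : ‖eV (R *ᵥ x)‖ ≤ Real.sqrt Δ * ‖eV (Q *ᵥ x)‖ := by
        rw [hRx]
        exact le_trans (agsp_mulVec_norm R (Q *ᵥ x))
          (mul_le_mul_of_nonneg_right hRnorm (norm_nonneg _))
      have hb2 : ‖eV (R *ᵥ x)‖ ^ 2 ≤ (Real.sqrt Δ * ‖eV (Q *ᵥ x)‖) ^ 2 :=
        pow_le_pow_left₀ (norm_nonneg _) hb 2
      nlinarith [Real.sq_sqrt hΔ0, norm_nonneg (eV (Q *ᵥ x))]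
  have hMN' : M * N' = N' * M := by
    have h1 : M * (K ^ 2 * Q) = (K ^ 2 * Q) * M := by
      rw [← mul_assoc, hMK2, mul_assoc, hMQ, ← mul_assoc]
    have e1 : M * N' = (Δ : ℂ) • (M * Q) - M * (K ^ 2 * Q) := by
      rw [hN', mul_sub, mul_smul_comm]
    have e2 : N' * M = (Δ : ℂ) • (Q * M) - (K ^ 2 * Q) * M := by
      rw [hN', sub_mul, smul_mul_assoc]
    rw [e1, e2, h1, hMQ]
  have hprod' : (M⁻¹ * N').PosSemidef :=
    agsp_psd_mul hMinv hN'psd (agsp_inv_commute hdet hMN')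
  have hc0' : (0:ℝ) ≤ (1 - Δ)⁻¹ := inv_nonneg.mpr (by linarith)
  have hfinal4 : (((1 - Δ)⁻¹ : ℝ) : ℂ) • Q - Q * M⁻¹ * Q
      = (((1 - Δ)⁻¹ : ℝ) : ℂ) • (M⁻¹ * N') := by
    have e1 : Q * M⁻¹ * Q = M⁻¹ * Q := by
      rw [← hinvQ, mul_assoc, hQproj]
    have e2 : M⁻¹ * (M * Q) = Q := by
      rw [← mul_assoc, Matrix.nonsing_inv_mul M hdet, one_mul]
    have hMQe : M * Q = Q - K ^ 2 * Q := by rw [hMdef, sub_mul, one_mul]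
    have hne : (1 - Δ : ℝ) ≠ 0 := by linarith
    have inner : (((1 - Δ)⁻¹ : ℝ) : ℂ) • (M * Q) - Q = (((1 - Δ)⁻¹ : ℝ) : ℂ) • N' := by
      rw [hMQe, hN']
      have hneC : (1 : ℂ) - (Δ : ℂ) ≠ 0 := by
        have h := Complex.ofReal_ne_zero.mpr hne
        push_cast at h
        exact h
      match_scalars <;> (push_cast; field_simp; try ring)
    calc (((1 - Δ)⁻¹ : ℝ) : ℂ) • Q - Q * M⁻¹ * Q
        = (((1 - Δ)⁻¹ : ℝ) : ℂ) • (M⁻¹ * (M * Q)) - M⁻¹ * Q := by rw [e1, e2]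
      _ = M⁻¹ * ((((1 - Δ)⁻¹ : ℝ) : ℂ) • (M * Q) - Q) := by
          rw [mul_sub M⁻¹ ((((1 - Δ)⁻¹ : ℝ) : ℂ) • (M * Q)) Q,
            mul_smul_comm (((1 - Δ)⁻¹ : ℝ) : ℂ) M⁻¹ (M * Q)]
      _ = M⁻¹ * ((((1 - Δ)⁻¹ : ℝ) : ℂ) • N') := by rw [inner]
      _ = (((1 - Δ)⁻¹ : ℝ) : ℂ) • (M⁻¹ * N') := (mul_smul_comm _ _ _)
  refine ⟨hΓ1, hinvP, ?_, ?_⟩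
  · rw [hfinal3]
    exact agsp_smul_psd hc0 hprod
  · rw [hfinal4]
    exact agsp_smul_psd hc0' hprod'
end

section
/- Let K be a Hermitian D×D complex matrix with ‖K‖ < 1, let Π be an orthogonal projector with N := tr Π > 0, and let reals Γ ≥ 0 and 0 ≤ Δ < 1 satisfy KΠ = ΠK, KΠ ≥ √Γ·Π in the Loewner order, and ‖(I−Π)K(I−Π)‖ ≤ √Δ. Then the fixed point ρ∞ := (I−K²)^{−1}/tr((I−K²)^{−1}) satisfies tr(Π ρ∞) ≥ 1 − r·(D/N − 1) / (1 + r·(D/N − 1)), where r := (1−Γ)/(1−Δ). In particular this shows that the fixed-point overlap bound tr(Πρ∞) ≥ (1−Δ)/((Γ−Δ)+(D/N)(1−Γ)) is attained by the explicit fixed point, i.e. the bound is tight in terms of the AGSP parameters. -/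
open scoped Matrix.Norms.L2Operator ComplexOrder

namespace Stmt8Aux

open Matrix

variable {D : ℕ}

noncomputable def toE (x : Fin D → ℂ) : EuclideanSpace ℂ (Fin D) := (WithLp.equiv 2 _).symm x

lemma dot_eq_inner (x y : Fin D → ℂ) :
    dotProduct (star x) y = (inner ℂ (toE x) (toE y) : ℂ) :=
  ((EuclideanSpace.inner_eq_star_dotProduct _ _).trans (dotProduct_comm _ _)).symm

lemma dot_self_eq (x : Fin D → ℂ) :
    dotProduct (star x) x = ((‖toE x‖ ^ 2 : ℝ) : ℂ) := by
  rw [dot_eq_inner]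
  exact_mod_cast inner_self_eq_norm_sq_to_K (𝕜 := ℂ) (toE x)

lemma mulVec_norm_le (X : Matrix (Fin D) (Fin D) ℂ) (x : Fin D → ℂ) :
    ‖toE (X *ᵥ x)‖ ≤ ‖X‖ * ‖toE x‖ :=
  X.l2_opNorm_mulVec (toE x)

lemma re_dot_le (x y : Fin D → ℂ) :
    (dotProduct (star x) y).re ≤ ‖toE x‖ * ‖toE y‖ := by
  rw [dot_eq_inner]
  exact_mod_cast re_inner_le_norm (𝕜 := ℂ) (toE x) (toE y)

lemma trace_re_nonneg {X : Matrix (Fin D) (Fin D) ℂ} (hX : X.PosSemidef) :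
    0 ≤ X.trace.re := by
  rw [Matrix.trace, Complex.re_sum]
  refine Finset.sum_nonneg fun i _ => ?_
  have := hX.re_dotProduct_nonneg (Pi.single i 1)
  simpa [dotProduct, Matrix.mulVec, Pi.single_apply, Finset.sum_ite_eq,
    Matrix.diag] using this

open scoped MatrixOrder in
lemma trace_mul_re_nonneg {X Y : Matrix (Fin D) (Fin D) ℂ} (hX : X.PosSemidef)
    (hY : Y.PosSemidef) : 0 ≤ (X * Y).trace.re := by
  obtain ⟨B, rfl⟩ : ∃ B : Matrix (Fin D) (Fin D) ℂ, Y = Bᴴ * B := by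
    classical
    obtain ⟨X, hX, -, rfl⟩ :=
      CFC.exists_sqrt_of_isSelfAdjoint_of_quasispectrumRestricts hY.isHermitian
        (QuasispectrumRestricts.nnreal_of_nonneg hY.nonneg)
    exact ⟨X, by rw [show Xᴴ = X from hX]⟩
  rw [← mul_assoc, Matrix.trace_mul_cycle]
  exact trace_re_nonneg (hX.mul_mul_conjTranspose_same B)

lemma herm_shift {H : Matrix (Fin D) (Fin D) ℂ} (hH : H.IsHermitian) (x y : Fin D → ℂ) :
    dotProduct (star x) (H *ᵥ y) = dotProduct (star (H *ᵥ x)) y := by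
  rw [Matrix.dotProduct_mulVec, Matrix.star_mulVec, hH.eq]

lemma smul_herm (c : ℝ) {P : Matrix (Fin D) (Fin D) ℂ} (hP : P.IsHermitian) :
    ((c : ℂ) • P).IsHermitian := by
  simp [Matrix.IsHermitian, Matrix.conjTranspose_smul, Complex.star_def,
    Complex.conj_ofReal, hP.eq]

lemma A_posdef (K : Matrix (Fin D) (Fin D) ℂ) (hK : K.IsHermitian) (hKnorm : ‖K‖ < 1) :
    (1 - K ^ 2).PosDef := by
  refine Matrix.PosDef.of_dotProduct_mulVec_pos (isHermitian_one.sub (hK.pow 2)) fun v hv => ?_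
  have hv' : (0:ℝ) < ‖toE v‖ := by
    rw [norm_pos_iff]
    exact fun h => hv (by simpa [toE] using congrArg WithLp.ofLp h)
  set u := K *ᵥ v with hu
  have hq : dotProduct (star v) ((1 - K ^ 2) *ᵥ v)
      = ((‖toE v‖ ^ 2 - ‖toE u‖ ^ 2 : ℝ) : ℂ) := by
    rw [Matrix.sub_mulVec, dotProduct_sub, Matrix.one_mulVec]
    have h2 : (K ^ 2) *ᵥ v = K *ᵥ u := by
      rw [pow_two, ← Matrix.mulVec_mulVec]
    rw [h2, herm_shift hK, dot_self_eq, dot_self_eq]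
    push_cast
    ring
  rw [hq]
  rw [show ((0:ℂ) = ((0:ℝ):ℂ)) by norm_num, Complex.real_lt_real]
  have hnu : ‖toE u‖ ≤ ‖K‖ * ‖toE v‖ := mulVec_norm_le K v
  have hK0 : 0 ≤ ‖K‖ := norm_nonneg K
  have hu0 : 0 ≤ ‖toE u‖ := norm_nonneg _
  have h2 : ‖toE u‖ ^ 2 ≤ ‖K‖ ^ 2 * ‖toE v‖ ^ 2 := by nlinarith
  have h3 : ‖K‖ ^ 2 < 1 := by nlinarith
  nlinarith [mul_pos hv' hv']

lemma S1_psd (K P : Matrix (Fin D) (Fin D) ℂ) (hK : K.IsHermitian) (hPherm : P.IsHermitian)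
    (hPproj : P * P = P) (Γ : ℝ) (hΓ : 0 ≤ Γ)
    (hGamma : (K * P - (Real.sqrt Γ : ℂ) • P).PosSemidef) :
    (P * K ^ 2 * P - (Γ : ℂ) • P).PosSemidef := by
  refine Matrix.PosSemidef.of_dotProduct_mulVec_nonneg ?_ ?_
  · have h1 : (P * K ^ 2 * P).IsHermitian := by
      have h := Matrix.isHermitian_conjTranspose_mul_mul P (hK.pow 2)
      rwa [hPherm.eq] at h
    exact h1.sub (smul_herm Γ hPherm)
  · intro v
    set w := P *ᵥ v with hw
    set u := K *ᵥ w with hu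
    have hPw : P *ᵥ w = w := by rw [hw, Matrix.mulVec_mulVec, hPproj]
    have hq : dotProduct (star v) ((P * K ^ 2 * P - (Γ : ℂ) • P) *ᵥ v)
        = ((‖toE u‖ ^ 2 - Γ * ‖toE w‖ ^ 2 : ℝ) : ℂ) := by
      rw [Matrix.sub_mulVec, dotProduct_sub]
      have h1 : (P * K ^ 2 * P) *ᵥ v = P *ᵥ (K *ᵥ u) := by
        rw [hu, hw, pow_two]
        simp only [← Matrix.mulVec_mulVec, mul_assoc]
      have h2 : dotProduct (star v) ((P * K ^ 2 * P) *ᵥ v)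
          = ((‖toE u‖ ^ 2 : ℝ) : ℂ) := by
        rw [h1, herm_shift hPherm, ← hw, herm_shift hK, ← hu, dot_self_eq]
      have h3 : dotProduct (star v) (((Γ : ℂ) • P) *ᵥ v)
          = (Γ : ℂ) * ((‖toE w‖ ^ 2 : ℝ) : ℂ) := by
        rw [Matrix.smul_mulVec, dotProduct_smul, smul_eq_mul, ← hw]
        congr 1
        calc dotProduct (star v) w = dotProduct (star v) (P *ᵥ w) := by rw [hPw]
          _ = dotProduct (star w) w := by rw [herm_shift hPherm, ← hw]
          _ = _ := dot_self_eq w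
      rw [h2, h3]
      push_cast
      ring
    rw [hq]
    rw [show ((0:ℂ) = ((0:ℝ):ℂ)) by norm_num, Complex.real_le_real]
    -- now the real inequality
    have hg := hGamma.re_dotProduct_nonneg w
    have hgq : (dotProduct (star w) ((K * P - (Real.sqrt Γ : ℂ) • P) *ᵥ w)).re
        = (dotProduct (star w) u).re - Real.sqrt Γ * ‖toE w‖ ^ 2 := by
      rw [Matrix.sub_mulVec, dotProduct_sub]
      have h4 : (K * P) *ᵥ w = u := by
        rw [← Matrix.mulVec_mulVec, hPw, hu]
      have h5 : ((Real.sqrt Γ : ℂ) • P) *ᵥ w = (Real.sqrt Γ : ℂ) • w := by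
        rw [Matrix.smul_mulVec, hPw]
      rw [h4, h5, dotProduct_smul, smul_eq_mul, dot_self_eq, Complex.sub_re,
        Complex.re_ofReal_mul, Complex.ofReal_re]
    simp only [RCLike.re_to_complex] at hg
    rw [hgq] at hg
    have hcs : (dotProduct (star w) u).re ≤ ‖toE w‖ * ‖toE u‖ := re_dot_le w u
    have hs : Real.sqrt Γ ^ 2 = Γ := Real.sq_sqrt hΓ
    have hs0 : 0 ≤ Real.sqrt Γ := Real.sqrt_nonneg Γ
    have hw0 : 0 ≤ ‖toE w‖ := norm_nonneg _
    have hu0 : 0 ≤ ‖toE u‖ := norm_nonneg _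
    have h6 : Real.sqrt Γ * ‖toE w‖ ^ 2 ≤ ‖toE w‖ * ‖toE u‖ := by linarith
    nlinarith [sq_nonneg (Real.sqrt Γ * ‖toE w‖ - ‖toE u‖),
      mul_le_mul_of_nonneg_left h6 hs0]

lemma S2_psd (K P : Matrix (Fin D) (Fin D) ℂ) (hK : K.IsHermitian) (hPherm : P.IsHermitian)
    (hPproj : P * P = P) (hcomm : K * P = P * K) (Δ : ℝ) (hΔ0 : 0 ≤ Δ)
    (hDelta : ‖(1 - P) * K * (1 - P)‖ ≤ Real.sqrt Δ) :
    ((Δ : ℂ) • (1 - P) - (1 - P) * K ^ 2 * (1 - P)).PosSemidef := by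
  set Q : Matrix (Fin D) (Fin D) ℂ := 1 - P with hQ
  have hQherm : Q.IsHermitian := isHermitian_one.sub hPherm
  have hQproj : Q * Q = Q := by
    rw [hQ]
    simp only [sub_mul, mul_sub, one_mul, mul_one, hPproj]
    abel
  have hQK : Q * K = K * Q := by
    rw [hQ]
    simp only [sub_mul, mul_sub, one_mul, mul_one, hcomm]
  refine Matrix.PosSemidef.of_dotProduct_mulVec_nonneg ?_ ?_
  · have h1 : (Q * K ^ 2 * Q).IsHermitian := by
      have h := Matrix.isHermitian_conjTranspose_mul_mul Q (hK.pow 2)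
      rwa [hQherm.eq] at h
    exact (smul_herm Δ hQherm).sub h1
  · intro v
    set w := Q *ᵥ v with hw
    set u := K *ᵥ w with hu
    have hQw : Q *ᵥ w = w := by rw [hw, Matrix.mulVec_mulVec, hQproj]
    have hq : dotProduct (star v) (((Δ : ℂ) • Q - Q * K ^ 2 * Q) *ᵥ v)
        = ((Δ * ‖toE w‖ ^ 2 - ‖toE u‖ ^ 2 : ℝ) : ℂ) := by
      rw [Matrix.sub_mulVec, dotProduct_sub]
      have h1 : (Q * K ^ 2 * Q) *ᵥ v = Q *ᵥ (K *ᵥ u) := by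
        rw [hu, hw, pow_two]
        simp only [← Matrix.mulVec_mulVec, mul_assoc]
      have h2 : dotProduct (star v) ((Q * K ^ 2 * Q) *ᵥ v)
          = ((‖toE u‖ ^ 2 : ℝ) : ℂ) := by
        rw [h1, herm_shift hQherm, ← hw, herm_shift hK, ← hu, dot_self_eq]
      have h3 : dotProduct (star v) (((Δ : ℂ) • Q) *ᵥ v)
          = (Δ : ℂ) * ((‖toE w‖ ^ 2 : ℝ) : ℂ) := by
        rw [Matrix.smul_mulVec, dotProduct_smul, smul_eq_mul, ← hw]
        congr 1
        calc dotProduct (star v) w = dotProduct (star v) (Q *ᵥ w) := by rw [hQw]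
          _ = dotProduct (star w) w := by rw [herm_shift hQherm, ← hw]
          _ = _ := dot_self_eq w
      rw [h2, h3]
      push_cast
      ring
    rw [hq]
    rw [show ((0:ℂ) = ((0:ℝ):ℂ)) by norm_num, Complex.real_le_real]
    have hQKQ : Q * K * Q = K * Q := by rw [hQK, mul_assoc, hQproj]
    have hun : u = (Q * K * Q) *ᵥ w := by
      rw [hQKQ, ← Matrix.mulVec_mulVec, hQw, hu]
    have hle : ‖toE u‖ ≤ Real.sqrt Δ * ‖toE w‖ := by
      rw [hun]
      calc ‖toE ((Q * K * Q) *ᵥ w)‖ ≤ ‖Q * K * Q‖ * ‖toE w‖ := mulVec_norm_le _ w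
        _ ≤ Real.sqrt Δ * ‖toE w‖ := by
            apply mul_le_mul_of_nonneg_right _ (norm_nonneg _)
            rw [hQ]; exact hDelta
    have hs : Real.sqrt Δ ^ 2 = Δ := Real.sq_sqrt hΔ0
    have hs0 : 0 ≤ Real.sqrt Δ := Real.sqrt_nonneg Δ
    have hw0 : 0 ≤ ‖toE w‖ := norm_nonneg _
    have hu0 : 0 ≤ ‖toE u‖ := norm_nonneg _
    nlinarith [mul_le_mul hle hle hu0 (mul_nonneg hs0 hw0)]

end Stmt8Aux
set_option maxHeartbeats 1600000 in
open Matrix Stmt8Aux in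
/-- Overlap of the explicit fixed point `(I - K²)⁻¹/tr((I - K²)⁻¹)` with the projector `Π`,
showing the fixed-point overlap bound is tight in terms of the AGSP parameters. -/
theorem stmt8 (D : ℕ) (hD : 1 ≤ D)
    (K P : Matrix (Fin D) (Fin D) ℂ)
    (hK : K.IsHermitian) (hKnorm : ‖K‖ < 1)
    (hPherm : P.IsHermitian) (hPproj : P * P = P)
    (hN : 0 < P.trace.re)
    (Γ Δ : ℝ) (hΓ : 0 ≤ Γ) (hΔ0 : 0 ≤ Δ) (hΔ1 : Δ < 1)
    (hcomm : K * P = P * K)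
    (hGamma : (K * P - (Real.sqrt Γ : ℂ) • P).PosSemidef)
    (hDelta : ‖(1 - P) * K * (1 - P)‖ ≤ Real.sqrt Δ) :
    (let r : ℝ := (1 - Γ) / (1 - Δ)
     let ρfix : Matrix (Fin D) (Fin D) ℂ :=
       (((1 - K ^ 2)⁻¹).trace.re)⁻¹ • (1 - K ^ 2)⁻¹
     1 - r * ((D : ℝ) / P.trace.re - 1) / (1 + r * ((D : ℝ) / P.trace.re - 1)) ≤
       (P * ρfix).trace.re) := by
  intro r ρfix
  set Q : Matrix (Fin D) (Fin D) ℂ := 1 - P with hQdef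
  set A : Matrix (Fin D) (Fin D) ℂ := 1 - K ^ 2 with hAdef
  set M : Matrix (Fin D) (Fin D) ℂ := A⁻¹ with hMdef
  have hA : A.PosDef := A_posdef K hK hKnorm
  have hM : M.PosDef := hA.inv
  have hMpsd : M.PosSemidef := hM.posSemidef
  have hdet : IsUnit A.det := isUnit_iff_ne_zero.mpr hA.det_pos.ne'
  have hMA : M * A = 1 := Matrix.nonsing_inv_mul A hdet
  have hAM : A * M = 1 := Matrix.mul_nonsing_inv A hdet
  -- commutation
  have hPK2 : K ^ 2 * P = P * K ^ 2 := by
    rw [pow_two, mul_assoc, hcomm, ← mul_assoc, hcomm, mul_assoc]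
  have hPA : A * P = P * A := by
    rw [hAdef]
    simp only [sub_mul, mul_sub, one_mul, mul_one, hPK2]
  have hPM : P * M = M * P := by
    have h1 : A * (P * M) = P := by
      rw [← mul_assoc, hPA, mul_assoc, hAM, mul_one]
    calc P * M = (M * A) * (P * M) := by rw [hMA, one_mul]
      _ = M * (A * (P * M)) := by rw [mul_assoc]
      _ = M * P := by rw [h1]
  -- projector facts
  have hQherm : Q.IsHermitian := isHermitian_one.sub hPherm
  have hQproj : Q * Q = Q := by
    rw [hQdef]
    simp only [sub_mul, mul_sub, one_mul, mul_one, hPproj]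
    abel
  have hPpsd : P.PosSemidef :=
    by have h := Matrix.posSemidef_conjTranspose_mul_self P; rwa [hPherm.eq, hPproj] at h
  have hQpsd : Q.PosSemidef :=
    by have h := Matrix.posSemidef_conjTranspose_mul_self Q; rwa [hQherm.eq, hQproj] at h
  set a : ℝ := (M * P).trace.re with hadef
  set b : ℝ := (M * Q).trace.re with hbdef
  set NN : ℝ := P.trace.re with hNNdef
  -- trace identities
  have hMK2P : M * (K ^ 2 * P) = M * P - P := by
    have : K ^ 2 = 1 - A := by rw [hAdef, sub_sub_cancel]
    rw [this, sub_mul, one_mul, mul_sub, ← mul_assoc, hMA, one_mul]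
  have hQtr : Q.trace.re = (D : ℝ) - NN := by
    rw [hQdef, Matrix.trace_sub, Matrix.trace_one, Complex.sub_re, hNNdef]
    norm_num
  -- inequality 1 : (1 - Γ) * a ≥ NN
  have hS1 := S1_psd K P hK hPherm hPproj Γ hΓ hGamma
  have h1 : 0 ≤ (M * (P * K ^ 2 * P - (Γ : ℂ) • P)).trace.re :=
    trace_mul_re_nonneg hMpsd hS1
  have hPKP : P * K ^ 2 * P = K ^ 2 * P := by
    rw [← hPK2, mul_assoc, hPproj]
  have hexp1 : (M * (P * K ^ 2 * P - (Γ : ℂ) • P)).trace.re = a - NN - Γ * a := by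
    rw [hPKP, mul_sub, hMK2P, mul_smul_comm, Matrix.trace_sub, Matrix.trace_sub,
      Matrix.trace_smul, Complex.sub_re, Complex.sub_re]
    have : ((Γ : ℂ) • (M * P).trace).re = Γ * a := by
      rw [smul_eq_mul, Complex.re_ofReal_mul, hadef]
    rw [this, hadef, hNNdef]
  rw [hexp1] at h1
  -- inequality 2 : (1 - Δ) * b ≤ D - NN
  have hS2 := S2_psd K P hK hPherm hPproj hcomm Δ hΔ0 hDelta
  have h2 : 0 ≤ (M * ((Δ : ℂ) • Q - Q * K ^ 2 * Q)).trace.re := by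
    rw [← hQdef] at hS2
    exact trace_mul_re_nonneg hMpsd hS2
  have hQK2 : K ^ 2 * Q = Q * K ^ 2 := by
    rw [hQdef]
    simp only [sub_mul, mul_sub, one_mul, mul_one, hPK2]
  have hQKQ : Q * K ^ 2 * Q = K ^ 2 * Q := by
    rw [← hQK2, mul_assoc, hQproj]
  have hMK2Q : M * (K ^ 2 * Q) = M * Q - Q := by
    have : K ^ 2 = 1 - A := by rw [hAdef, sub_sub_cancel]
    rw [this, sub_mul, one_mul, mul_sub, ← mul_assoc, hMA, one_mul]
  have hexp2 : (M * ((Δ : ℂ) • Q - Q * K ^ 2 * Q)).trace.re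
      = Δ * b - (b - ((D : ℝ) - NN)) := by
    rw [hQKQ, mul_sub, hMK2Q, mul_smul_comm, Matrix.trace_sub, Matrix.trace_sub,
      Matrix.trace_smul, Complex.sub_re, Complex.sub_re]
    have : ((Δ : ℂ) • (M * Q).trace).re = Δ * b := by
      rw [smul_eq_mul, Complex.re_ofReal_mul, hbdef]
    rw [this, ← hbdef, hQtr]
  rw [hexp2] at h2
  -- positivity facts
  have ha0 : 0 ≤ a := trace_mul_re_nonneg hMpsd hPpsd
  have hb0 : 0 ≤ b := trace_mul_re_nonneg hMpsd hQpsd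
  have hDN : NN ≤ (D : ℝ) := by
    have := trace_re_nonneg hQpsd
    rw [hQtr] at this
    linarith
  have hab : M.trace.re = a + b := by
    have : M * P + M * Q = M := by
      rw [← mul_add, hQdef, add_sub_cancel, mul_one]
    rw [hadef, hbdef, ← Complex.add_re, ← Matrix.trace_add, this]
  have habpos : 0 < a + b := by
    rw [← hab]
    rw [Matrix.trace, Complex.re_sum]
    have hne : (Finset.univ : Finset (Fin D)).Nonempty := ⟨⟨0, hD⟩, Finset.mem_univ _⟩
    refine Finset.sum_pos (fun i _ => ?_) hne
    have hx : (Pi.single i 1 : Fin D → ℂ) ≠ 0 := by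
      intro h
      have := congrFun h i
      rw [Pi.single_eq_same] at this
      exact one_ne_zero this
    have := hM.re_dotProduct_pos hx
    simpa [dotProduct, Matrix.mulVec, Pi.single_apply, Finset.sum_ite_eq,
      Matrix.diag] using this
  -- compute target trace
  have hgoal : (P * ρfix).trace.re = (a + b)⁻¹ * a := by
    show (P * ((M.trace.re)⁻¹ • M)).trace.re = (a + b)⁻¹ * a
    rw [Matrix.mul_smul, Matrix.trace_smul, Matrix.trace_mul_comm, hab,
      Complex.real_smul, Complex.re_ofReal_mul, ← hadef]
  rw [hgoal]
  set t : ℝ := (D : ℝ) / NN - 1 with htdef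
  have hr : r = (1 - Γ) / (1 - Δ) := rfl
  have hNN0 : 0 < NN := hN
  have hkey1 : NN ≤ a - Γ * a := by linarith
  have hd1 : 0 < 1 - Δ := by linarith
  have hg1 : 0 < 1 - Γ := by
    by_contra hcon
    push_neg at hcon
    have h' : (1 - Γ) * a ≤ 0 := mul_nonpos_of_nonpos_of_nonneg (by linarith) ha0
    nlinarith
  have ha1 : 0 < a := by nlinarith
  have ht0 : 0 ≤ t := by
    have h' : (1 : ℝ) ≤ (D : ℝ) / NN := (one_le_div hNN0).mpr hDN
    rw [htdef]; linarith
  have hr0 : 0 < r := by rw [hr]; exact div_pos hg1 hd1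
  have h1rt : 0 < 1 + r * t := by nlinarith
  have heq : 1 - r * t / (1 + r * t) = 1 / (1 + r * t) := by
    rw [eq_div_iff h1rt.ne', sub_mul, div_mul_cancel₀ _ h1rt.ne']; ring
  rw [heq, inv_mul_eq_div, div_le_div_iff₀ h1rt habpos]
  have hb1 : b * (1 - Δ) ≤ (D : ℝ) - NN := by linarith
  have key : b ≤ a * (r * t) := by
    have hrt : r * t = ((1 - Γ) * ((D : ℝ) - NN)) / ((1 - Δ) * NN) := by
      rw [hr, htdef]
      field_simp
    rw [hrt, mul_div_assoc', le_div_iff₀ (mul_pos hd1 hNN0)]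
    nlinarith [mul_le_mul_of_nonneg_right hb1 hNN0.le,
      mul_le_mul_of_nonneg_right hkey1 (sub_nonneg.mpr hDN)]
  nlinarith [key]
end

section
/- Let n ≥ 1 and for each t ∈ {1,…,n} let K_t be a Hermitian D×D complex matrix with ‖K_t‖ ≤ 1, let Π_t be an orthogonal projector, and let reals Γ_t, Δ_t ∈ [0,1] and ε_t ≥ 0 satisfy K_tΠ_t = Π_tK_t, K_tΠ_t ≥ √Γ_t·Π_t in the Loewner order, ‖(I−Π_t)K_t(I−Π_t)‖ ≤ √Δ_t, and ‖Π_t − Π₀‖ ≤ ε_t, where Π₀ is a fixed orthogonal projector. Let ρ be a density matrix and set K := K_n K_{n−1} ⋯ K_1. Then tr(K ρ K† Π₀) ≥ tr(ρ Π₀)·∏_{t=1}^n Γ_t − 2∑_{t=1}^n ε_t ∏_{s=t+1}^n Γ_s, and tr(K ρ K† (I−Π₀)) ≤ tr(ρ (I−Π₀))·∏_{t=1}^n Δ_t + 2∑_{t=1}^n ε_t ∏_{s=t+1}^n Δ_s. -/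
open scoped Matrix Matrix.Norms.L2Operator ComplexOrder

variable {D : ℕ}

lemma hermNormPSD (hD : 1 ≤ D) {H : Matrix (Fin D) (Fin D) ℂ} (hH : H.IsHermitian) {c : ℝ}
    (hc : ‖H‖ ≤ c) : (((c:ℂ) • 1 - H)).PosSemidef := by
  haveI : NeZero D := ⟨by omega⟩
  haveI : Nontrivial (Matrix (Fin D) (Fin D) ℂ) := by infer_instance
  have hev : ∀ i, hH.eigenvalues i ≤ c := by
    intro i
    have h1 := hH.eigenvalues_mem_spectrum_real i
    have h2 : ‖hH.eigenvalues i‖ ≤ ‖H‖ := spectrum.norm_le_norm_of_mem h1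
    calc hH.eigenvalues i ≤ |hH.eigenvalues i| := le_abs_self _
    _ ≤ c := le_trans (by simpa using h2) hc
  have hspec := hH.spectral_theorem
  rw [Unitary.conjStarAlgAut_apply] at hspec
  set U := (Matrix.IsHermitian.eigenvectorUnitary hH : Matrix (Fin D) (Fin D) ℂ) with hU
  have hdiagpsd : (Matrix.diagonal (fun i => ((c - hH.eigenvalues i : ℝ) : ℂ))).PosSemidef := by
    refine Matrix.posSemidef_diagonal_iff.mpr fun i => ?_
    rw [Complex.zero_le_real]
    linarith [hev i]
  have hpsd := hdiagpsd.mul_mul_conjTranspose_same U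
  convert hpsd using 1
  have hUU : U * (star U) = 1 := by
    exact Matrix.mem_unitaryGroup_iff.mp (Matrix.IsHermitian.eigenvectorUnitary hH).prop
  have : Matrix.diagonal (fun i => ((c - hH.eigenvalues i : ℝ) : ℂ))
      = (c:ℂ) • 1 - Matrix.diagonal (RCLike.ofReal ∘ hH.eigenvalues) := by
    ext i j
    by_cases h : i = j <;> simp [Matrix.diagonal, h, Complex.ofReal_sub, Matrix.one_apply, sub_eq_iff_eq_add]
  rw [this, Matrix.mul_sub, Matrix.sub_mul, Matrix.mul_smul, mul_one, Matrix.smul_mul]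
  rw [show Uᴴ = star U from rfl, hUU, ← hspec]

lemma psd_diag_nonneg {A : Matrix (Fin D) (Fin D) ℂ} (hA : A.PosSemidef) (i : Fin D) :
    0 ≤ (A i i).re := by
  have h := hA.dotProduct_mulVec_nonneg (Pi.single i 1)
  rw [Complex.le_def] at h
  simpa [dotProduct, Matrix.mulVec, Pi.single_apply, Finset.sum_ite_eq'] using h.1

lemma psd_trace_re_nonneg {A : Matrix (Fin D) (Fin D) ℂ} (hA : A.PosSemidef) :
    0 ≤ A.trace.re := by
  rw [Matrix.trace, Complex.re_sum]
  exact Finset.sum_nonneg fun i _ => psd_diag_nonneg hA i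

lemma trace_mul_psd_nonneg {A B : Matrix (Fin D) (Fin D) ℂ} (hA : A.PosSemidef)
    (hB : B.PosSemidef) : 0 ≤ (A * B).trace.re := by
  open MatrixOrder in obtain ⟨C, hC⟩ := CStarAlgebra.nonneg_iff_eq_star_mul_self.mp hB.nonneg
  rw [hC, ← Matrix.mul_assoc, Matrix.trace_mul_comm, ← Matrix.mul_assoc]
  exact psd_trace_re_nonneg (hA.mul_mul_conjTranspose_same C)

lemma trace_mono {σ X Y : Matrix (Fin D) (Fin D) ℂ} (hσ : σ.PosSemidef)
    (h : (Y - X).PosSemidef) : (σ * X).trace.re ≤ (σ * Y).trace.re := by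
  have := trace_mul_psd_nonneg hσ h
  rw [Matrix.mul_sub, Matrix.trace_sub, Complex.sub_re] at this
  linarith

lemma herm_proj_psd {P : Matrix (Fin D) (Fin D) ℂ} (h1 : P.IsHermitian) (h2 : P * P = P) :
    P.PosSemidef :=
  by have := Matrix.posSemidef_conjTranspose_mul_self P; rwa [h1.eq, h2] at this

lemma trace_smul_one (σ : Matrix (Fin D) (Fin D) ℂ) (c : ℝ) :
    (σ * ((c:ℂ) • 1)).trace.re = c * σ.trace.re := by
  rw [Matrix.mul_smul, mul_one, Matrix.trace_smul]
  simp

lemma trace_bound_upper (hD : 1 ≤ D) {σ X : Matrix (Fin D) (Fin D) ℂ} (hσ : σ.PosSemidef)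
    (hX : X.IsHermitian) {c : ℝ} (hc : ‖X‖ ≤ c) :
    (σ * X).trace.re ≤ c * σ.trace.re := by
  have := trace_mono hσ (hermNormPSD hD hX hc)
  rwa [trace_smul_one] at this

lemma trace_bound_lower (hD : 1 ≤ D) {σ X : Matrix (Fin D) (Fin D) ℂ} (hσ : σ.PosSemidef)
    (hX : X.IsHermitian) {c : ℝ} (hc : ‖X‖ ≤ c) :
    -(c * σ.trace.re) ≤ (σ * X).trace.re := by
  have hX' : (-X).IsHermitian := hX.neg
  have hc' : ‖(-X)‖ ≤ c := by rwa [norm_neg]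
  have hpsd : (X - (-((c:ℂ) • 1))).PosSemidef := by
    have := hermNormPSD hD hX' hc'
    rw [sub_neg_eq_add]
    simpa [sub_neg_eq_add, add_comm] using this
  have := trace_mono hσ hpsd
  have hneg : (σ * (-((c:ℂ) • 1))).trace.re = -(c * σ.trace.re) := by
    rw [Matrix.mul_neg, Matrix.trace_neg, Complex.neg_re, ← trace_smul_one σ c]
  linarith

lemma herm_real_smul {A : Matrix (Fin D) (Fin D) ℂ} (hA : A.IsHermitian) (c : ℝ) :
    ((c:ℂ) • A).IsHermitian := by
  rw [Matrix.IsHermitian, Matrix.conjTranspose_smul, hA.eq, Complex.star_def,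
    Complex.conj_ofReal]

lemma psd_real_smul {A : Matrix (Fin D) (Fin D) ℂ} (hA : A.PosSemidef) {c : ℝ} (hc : 0 ≤ c) :
    ((c:ℂ) • A).PosSemidef := by
  refine .of_dotProduct_mulVec_nonneg (herm_real_smul hA.1 c) fun x => ?_
  rw [Matrix.smul_mulVec, dotProduct_smul, smul_eq_mul]
  exact mul_nonneg (Complex.zero_le_real.mpr hc) (hA.dotProduct_mulVec_nonneg x)

lemma H1 {Kt Pt : Matrix (Fin D) (Fin D) ℂ} {g Γt : ℝ}
    (hKh : Kt.IsHermitian) (hPh : Pt.IsHermitian) (hPp : Pt * Pt = Pt)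
    (hcm : Kt * Pt = Pt * Kt) (hg : g = Real.sqrt Γt) (hΓ0 : 0 ≤ Γt)
    (hG : (Kt * Pt - (g:ℂ) • Pt).PosSemidef) :
    (Kt * Pt * Kt - (Γt:ℂ) • Pt).PosSemidef := by
  set C := Kt * Pt - (g:ℂ) • Pt with hC
  have hg0 : 0 ≤ g := hg ▸ Real.sqrt_nonneg _
  have hgg : (g:ℂ) * (g:ℂ) = (Γt:ℂ) := by
    rw [← Complex.ofReal_mul, hg, Real.mul_self_sqrt hΓ0]
  have hCP : C * Pt = C := by
    rw [hC, Matrix.sub_mul, Matrix.mul_assoc, hPp, Matrix.smul_mul, hPp]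
  have hPC : Pt * C = C := by
    rw [hC, Matrix.mul_sub, ← Matrix.mul_assoc, ← hcm, Matrix.mul_assoc, hPp,
      Matrix.mul_smul, hPp]
  have hKPK : Kt * Pt * Kt = (Kt * Pt) * (Kt * Pt) := by
    nth_rewrite 3 [hcm]
    rw [← Matrix.mul_assoc (Kt * Pt) Pt Kt, Matrix.mul_assoc Kt Pt Pt, hPp]
  have hA : Kt * Pt = C + (g:ℂ) • Pt := by rw [hC]; abel
  have key : Kt * Pt * Kt - (Γt:ℂ) • Pt = C * C + ((2*g:ℝ):ℂ) • C := by
    rw [hKPK, hA, Matrix.add_mul, Matrix.mul_add, Matrix.mul_add, Matrix.smul_mul,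
      Matrix.mul_smul, Matrix.smul_mul, Matrix.mul_smul, hCP, hPC, smul_smul, hgg, hPp]
    push_cast
    module
  rw [key]
  have hCC : (C * C).PosSemidef := by
    have := Matrix.posSemidef_conjTranspose_mul_self C
    rwa [hG.1.eq] at this
  exact hCC.add (psd_real_smul hG (by linarith))

lemma H2 (hD : 1 ≤ D) {Kt Pt : Matrix (Fin D) (Fin D) ℂ} {Δt : ℝ}
    (hKh : Kt.IsHermitian) (hPh : Pt.IsHermitian) (hPp : Pt * Pt = Pt)
    (hcm : Kt * Pt = Pt * Kt) (hΔ0 : 0 ≤ Δt)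
    (hdel : ‖(1 - Pt) * Kt * (1 - Pt)‖ ≤ Real.sqrt Δt) :
    ((Δt:ℂ) • (1 - Pt) - Kt * (1 - Pt) * Kt).PosSemidef := by
  set Q := (1 : Matrix (Fin D) (Fin D) ℂ) - Pt with hQdef
  have hQh : Q.IsHermitian := by
    rw [Matrix.IsHermitian, Matrix.conjTranspose_sub, Matrix.conjTranspose_one, hPh.eq]
  have hQQ : Q * Q = Q := by
    rw [hQdef, Matrix.mul_sub, Matrix.sub_mul, Matrix.sub_mul, hPp]
    simp only [Matrix.one_mul, Matrix.mul_one]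
    abel
  have hcmQ : Kt * Q = Q * Kt := by
    rw [hQdef, Matrix.mul_sub, Matrix.sub_mul, Matrix.mul_one, Matrix.one_mul, hcm]
  set B := Kt * Q with hBdef
  have hQKQ : Q * Kt * Q = B := by
    rw [← hcmQ, Matrix.mul_assoc, hQQ]
  have hBnorm : ‖B‖ ≤ Real.sqrt Δt := by rwa [hQKQ] at hdel
  have hBh : B.IsHermitian := by
    rw [Matrix.IsHermitian, Matrix.conjTranspose_mul, hQh.eq, hKh.eq, hcmQ]
  have hBBh : (B * B).IsHermitian := by
    rw [Matrix.IsHermitian, Matrix.conjTranspose_mul, hBh.eq]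
  have hBB : ‖B * B‖ ≤ Δt := by
    calc ‖B * B‖ ≤ ‖B‖ * ‖B‖ := Matrix.l2_opNorm_mul B B
    _ ≤ Real.sqrt Δt * Real.sqrt Δt :=
        mul_le_mul hBnorm hBnorm (norm_nonneg _) (Real.sqrt_nonneg _)
    _ = Δt := Real.mul_self_sqrt hΔ0
  have hpsd := (hermNormPSD hD hBBh hBB).mul_mul_conjTranspose_same Q
  have hswap : Kt * Q = Q * Kt := by rw [← hBdef, hcmQ]
  have hQB : Q * B = B := by rw [hcmQ, ← Matrix.mul_assoc, hQQ]
  have hBQ : B * Q = B := by rw [hBdef, Matrix.mul_assoc, hQQ]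
  have hBBKQK : B * B = Kt * Q * Kt := by
    conv_lhs => rw [hBdef]
    nth_rewrite 2 [hswap]
    rw [← Matrix.mul_assoc (Kt * Q) Q Kt, Matrix.mul_assoc Kt Q Q, hQQ]
  clear hcmQ hQKQ hdel hBnorm
  clear_value B Q
  have key : Q * ((Δt:ℂ) • 1 - B * B) * Qᴴ = (Δt:ℂ) • Q - Kt * Q * Kt := by
    rw [hQh.eq, Matrix.mul_sub, Matrix.sub_mul, Matrix.mul_smul, Matrix.mul_one,
      Matrix.smul_mul, hQQ, ← Matrix.mul_assoc Q B B, hQB, Matrix.mul_assoc B B Q, hBQ,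
      hBBKQK]
  rw [key] at hpsd
  rw [hBdef]
  exact hpsd

lemma tr_cyclic (σ Kt M : Matrix (Fin D) (Fin D) ℂ) :
    ((Kt * σ * Kt) * M).trace = (σ * (Kt * M * Kt)).trace := by
  simp only [Matrix.mul_assoc]
  rw [Matrix.trace_mul_comm Kt (σ * (Kt * M))]
  simp only [Matrix.mul_assoc]

lemma tr_sub_re (σ A B : Matrix (Fin D) (Fin D) ℂ) :
    (σ * A).trace.re - (σ * B).trace.re = (σ * (A - B)).trace.re := by
  rw [Matrix.mul_sub, Matrix.trace_sub, Complex.sub_re]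

lemma tr_smul_re (σ : Matrix (Fin D) (Fin D) ℂ) (c : ℝ) (A : Matrix (Fin D) (Fin D) ℂ) :
    (σ * ((c:ℂ) • A)).trace.re = c * (σ * A).trace.re := by
  rw [Matrix.mul_smul, Matrix.trace_smul]
  simp [Complex.smul_re]

lemma sandwich_herm {Kt X : Matrix (Fin D) (Fin D) ℂ} (hK : Kt.IsHermitian)
    (hX : X.IsHermitian) : (Kt * X * Kt).IsHermitian := by
  rw [Matrix.IsHermitian, Matrix.conjTranspose_mul, Matrix.conjTranspose_mul, hK.eq, hX.eq,
    Matrix.mul_assoc]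

lemma sandwich_norm {Kt X : Matrix (Fin D) (Fin D) ℂ} {c : ℝ} (hK : ‖Kt‖ ≤ 1)
    (hX : ‖X‖ ≤ c) : ‖Kt * X * Kt‖ ≤ c := by
  have h0 : 0 ≤ c := le_trans (norm_nonneg _) hX
  calc ‖Kt * X * Kt‖ ≤ ‖Kt * X‖ * ‖Kt‖ := Matrix.l2_opNorm_mul _ _
  _ ≤ ‖Kt‖ * ‖X‖ * ‖Kt‖ := by
      have := Matrix.l2_opNorm_mul Kt X
      exact mul_le_mul_of_nonneg_right this (norm_nonneg _)
  _ ≤ 1 * c * 1 := by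
      apply mul_le_mul _ hK (norm_nonneg _) (by linarith)
      exact mul_le_mul hK hX (norm_nonneg _) zero_le_one
  _ = c := by ring

lemma step (hD : 1 ≤ D) {Kt Pt P₀ σ : Matrix (Fin D) (Fin D) ℂ} {Γt Δt εt : ℝ}
    (hP₀h : P₀.IsHermitian) (hP₀p : P₀ * P₀ = P₀)
    (hKh : Kt.IsHermitian) (hKn : ‖Kt‖ ≤ 1)
    (hPh : Pt.IsHermitian) (hPp : Pt * Pt = Pt)
    (hΓt : Γt ∈ Set.Icc (0:ℝ) 1) (hΔt : Δt ∈ Set.Icc (0:ℝ) 1) (hεt : 0 ≤ εt)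
    (hcm : Kt * Pt = Pt * Kt)
    (hG : (Kt * Pt - ((Real.sqrt Γt : ℝ):ℂ) • Pt).PosSemidef)
    (hdel : ‖(1 - Pt) * Kt * (1 - Pt)‖ ≤ Real.sqrt Δt)
    (hPP₀ : ‖Pt - P₀‖ ≤ εt)
    (hσ : σ.PosSemidef) (hσ1 : σ.trace.re ≤ 1) :
    Γt * (σ * P₀).trace.re - 2 * εt ≤ ((Kt * σ * Kt) * P₀).trace.re ∧
    ((Kt * σ * Kt) * (1 - P₀)).trace.re ≤ Δt * (σ * (1 - P₀)).trace.re + 2 * εt ∧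
    (Kt * σ * Kt).trace.re ≤ σ.trace.re := by
  have hσ0 : 0 ≤ σ.trace.re := psd_trace_re_nonneg hσ
  have hP₀psd : P₀.PosSemidef := by have := Matrix.posSemidef_conjTranspose_mul_self P₀; rwa [hP₀h.eq, hP₀p] at this
  have hQ₀h : (1 - P₀).IsHermitian := by
    rw [Matrix.IsHermitian, Matrix.conjTranspose_sub, Matrix.conjTranspose_one, hP₀h.eq]
  -- perturbation bounds
  have hpert : ∀ {A B : Matrix (Fin D) (Fin D) ℂ}, A.IsHermitian → B.IsHermitian →
      ‖A - B‖ ≤ εt → (σ * (Kt * A * Kt)).trace.re - εt ≤ (σ * (Kt * B * Kt)).trace.re := by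
    intro A B hAh hBh hAB
    have hXh : (Kt * (A - B) * Kt).IsHermitian := sandwich_herm hKh (hAh.sub hBh)
    have hXn : ‖Kt * (A - B) * Kt‖ ≤ εt := sandwich_norm hKn hAB
    have hub := trace_bound_upper hD hσ hXh hXn
    have hsub : (σ * (Kt * (A - B) * Kt)).trace.re
        = (σ * (Kt * A * Kt)).trace.re - (σ * (Kt * B * Kt)).trace.re := by
      rw [Matrix.mul_sub Kt A B, Matrix.sub_mul, ← tr_sub_re]
    nlinarith
  have hpert0 : ∀ {A B : Matrix (Fin D) (Fin D) ℂ}, A.IsHermitian → B.IsHermitian →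
      ‖A - B‖ ≤ εt → (σ * A).trace.re - εt ≤ (σ * B).trace.re := by
    intro A B hAh hBh hAB
    have hub := trace_bound_upper hD hσ (hAh.sub hBh) hAB
    have hsub := tr_sub_re σ A B
    nlinarith
  have hQth : (1 - Pt).IsHermitian := by
    rw [Matrix.IsHermitian, Matrix.conjTranspose_sub, Matrix.conjTranspose_one, hPh.eq]
  refine ⟨?_, ?_, ?_⟩
  · have e1 : ((Kt * σ * Kt) * P₀).trace.re = (σ * (Kt * P₀ * Kt)).trace.re := by
      rw [tr_cyclic]
    have e2 := hpert hPh hP₀h hPP₀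
    have e3 : Γt * (σ * Pt).trace.re ≤ (σ * (Kt * Pt * Kt)).trace.re := by
      have h := trace_mono hσ (H1 hKh hPh hPp hcm rfl hΓt.1 hG)
      rwa [tr_smul_re] at h
    have e4 : (σ * P₀).trace.re - εt ≤ (σ * Pt).trace.re :=
      hpert0 hP₀h hPh (by rwa [norm_sub_rev])
    rw [e1]
    nlinarith [mul_le_mul_of_nonneg_left e4 hΓt.1, mul_le_of_le_one_left hεt hΓt.2]
  · have e1 : ((Kt * σ * Kt) * (1 - P₀)).trace.re = (σ * (Kt * (1 - P₀) * Kt)).trace.re := by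
      rw [tr_cyclic]
    have hd1 : (1 - P₀) - (1 - Pt) = Pt - P₀ := by abel
    have hd2 : (1 - Pt) - (1 - P₀) = P₀ - Pt := by abel
    have e2 : (σ * (Kt * (1 - P₀) * Kt)).trace.re - εt
        ≤ (σ * (Kt * (1 - Pt) * Kt)).trace.re := by
      refine hpert hQ₀h hQth ?_
      rw [hd1]
      exact hPP₀
    have e3 : (σ * (Kt * (1 - Pt) * Kt)).trace.re ≤ Δt * (σ * (1 - Pt)).trace.re := by
      have h := trace_mono hσ (H2 hD hKh hPh hPp hcm hΔt.1 hdel)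
      rwa [tr_smul_re] at h
    have e4 : (σ * (1 - Pt)).trace.re - εt ≤ (σ * (1 - P₀)).trace.re := by
      refine hpert0 hQth hQ₀h ?_
      rw [hd2, norm_sub_rev]
      exact hPP₀
    rw [e1]
    nlinarith [mul_le_mul_of_nonneg_left e4 hΔt.1, mul_le_of_le_one_left hεt hΔt.2]
  · have e1 : (Kt * σ * Kt).trace = (σ * (Kt * Kt)).trace := by
      rw [Matrix.trace_mul_cycle Kt σ Kt, ← Matrix.mul_assoc, Matrix.trace_mul_comm,
        Matrix.mul_assoc]
    have hKKh : (Kt * Kt).IsHermitian := by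
      rw [Matrix.IsHermitian, Matrix.conjTranspose_mul, hKh.eq]
    have hKKn : ‖Kt * Kt‖ ≤ 1 := by
      calc ‖Kt * Kt‖ ≤ ‖Kt‖ * ‖Kt‖ := Matrix.l2_opNorm_mul _ _
      _ ≤ 1 := by nlinarith [norm_nonneg Kt]
    have := trace_bound_upper hD hσ hKKh hKKn
    rw [e1]
    linarith

/-- Bounds on the ground-space overlap after applying a product of time-dependent AGSPs
`K = K_{n-1} ⋯ K_0`, each with its own parameters `(Γ_t, Δ_t)` and projector error `ε_t`
relative to the common ground-space projector `Π₀`. -/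
theorem stmt12 (D : ℕ) (hD : 1 ≤ D) (n : ℕ) (hn : 1 ≤ n)
    (K P : ℕ → Matrix (Fin D) (Fin D) ℂ)
    (P₀ : Matrix (Fin D) (Fin D) ℂ)
    (Γ Δ ε : ℕ → ℝ)
    (hP₀herm : P₀.IsHermitian) (hP₀proj : P₀ * P₀ = P₀)
    (hKherm : ∀ t ∈ Finset.range n, (K t).IsHermitian)
    (hKnorm : ∀ t ∈ Finset.range n, ‖K t‖ ≤ 1)
    (hPherm : ∀ t ∈ Finset.range n, (P t).IsHermitian)
    (hPproj : ∀ t ∈ Finset.range n, P t * P t = P t)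
    (hΓ : ∀ t ∈ Finset.range n, Γ t ∈ Set.Icc (0 : ℝ) 1)
    (hΔ : ∀ t ∈ Finset.range n, Δ t ∈ Set.Icc (0 : ℝ) 1)
    (hε : ∀ t ∈ Finset.range n, 0 ≤ ε t)
    (hcomm : ∀ t ∈ Finset.range n, K t * P t = P t * K t)
    (hGamma : ∀ t ∈ Finset.range n, (K t * P t - (Real.sqrt (Γ t) : ℂ) • P t).PosSemidef)
    (hDelta : ∀ t ∈ Finset.range n, ‖(1 - P t) * K t * (1 - P t)‖ ≤ Real.sqrt (Δ t))
    (hPP₀ : ∀ t ∈ Finset.range n, ‖P t - P₀‖ ≤ ε t)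
    (ρ : Matrix (Fin D) (Fin D) ℂ) (hρ : ρ.PosSemidef) (hρtr : ρ.trace = 1) :
    (let Kprod : Matrix (Fin D) (Fin D) ℂ := ((List.ofFn fun i : Fin n => K i).reverse).prod
     (ρ * P₀).trace.re * (∏ t ∈ Finset.range n, Γ t) -
         2 * ∑ t ∈ Finset.range n, ε t * ∏ s ∈ Finset.Ico (t + 1) n, Γ s ≤
       (Kprod * ρ * Kprodᴴ * P₀).trace.re ∧
     (Kprod * ρ * Kprodᴴ * (1 - P₀)).trace.re ≤
       (ρ * (1 - P₀)).trace.re * (∏ t ∈ Finset.range n, Δ t) +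
         2 * ∑ t ∈ Finset.range n, ε t * ∏ s ∈ Finset.Ico (t + 1) n, Δ s) := by
  intro Kprod
  have hFs : ∀ t : ℕ, ((List.ofFn fun i : Fin (t+1) => K i).reverse).prod
      = K t * ((List.ofFn fun i : Fin t => K i).reverse).prod := by
    intro t
    rw [List.ofFn_succ']
    simp [List.reverse_concat]
  have main : ∀ t, t ≤ n →
      (((List.ofFn fun i : Fin t => K i).reverse.prod * ρ *
          ((List.ofFn fun i : Fin t => K i).reverse.prod)ᴴ).PosSemidef) ∧
      ((List.ofFn fun i : Fin t => K i).reverse.prod * ρ *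
          ((List.ofFn fun i : Fin t => K i).reverse.prod)ᴴ).trace.re ≤ 1 ∧
      ((ρ * P₀).trace.re * (∏ s ∈ Finset.range t, Γ s) -
          2 * ∑ s ∈ Finset.range t, ε s * ∏ u ∈ Finset.Ico (s + 1) t, Γ u ≤
        ((List.ofFn fun i : Fin t => K i).reverse.prod * ρ *
          ((List.ofFn fun i : Fin t => K i).reverse.prod)ᴴ * P₀).trace.re) ∧
      (((List.ofFn fun i : Fin t => K i).reverse.prod * ρ *
          ((List.ofFn fun i : Fin t => K i).reverse.prod)ᴴ * (1 - P₀)).trace.re ≤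
        (ρ * (1 - P₀)).trace.re * (∏ s ∈ Finset.range t, Δ s) +
          2 * ∑ s ∈ Finset.range t, ε s * ∏ u ∈ Finset.Ico (s + 1) t, Δ u) := by
    intro t
    induction t with
    | zero =>
      intro _
      simp only [List.ofFn_zero, List.reverse_nil, List.prod_nil, Matrix.one_mul,
        Matrix.conjTranspose_one, Matrix.mul_one, Finset.range_zero, Finset.prod_empty,
        Finset.sum_empty, mul_one, mul_zero, sub_zero, add_zero]
      refine ⟨hρ, ?_, le_refl _, le_refl _⟩
      rw [hρtr]
      simp
    | succ t ih =>
      intro ht1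
      have htn : t < n := by omega
      have htm : t ∈ Finset.range n := Finset.mem_range.mpr htn
      obtain ⟨ihpsd, ihtr, ih3, ih4⟩ := ih (by omega)
      set σ := (List.ofFn fun i : Fin t => K i).reverse.prod * ρ *
          ((List.ofFn fun i : Fin t => K i).reverse.prod)ᴴ with hσdef
      have hnew : (List.ofFn fun i : Fin (t+1) => K i).reverse.prod * ρ *
          ((List.ofFn fun i : Fin (t+1) => K i).reverse.prod)ᴴ = K t * σ * K t := by
        rw [hFs, Matrix.conjTranspose_mul, (hKherm t htm).eq, hσdef]
        simp only [Matrix.mul_assoc]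
      have hst := step hD hP₀herm hP₀proj (hKherm t htm) (hKnorm t htm) (hPherm t htm)
        (hPproj t htm) (hΓ t htm) (hΔ t htm) (hε t htm) (hcomm t htm) (hGamma t htm)
        (hDelta t htm) (hPP₀ t htm) ihpsd ihtr
      have hpsd' : (K t * σ * K t).PosSemidef := by
        have := ihpsd.mul_mul_conjTranspose_same (K t)
        rwa [(hKherm t htm).eq] at this
      have hsumΓ : ∑ s ∈ Finset.range (t+1), ε s * ∏ u ∈ Finset.Ico (s + 1) (t+1), Γ u
          = Γ t * (∑ s ∈ Finset.range t, ε s * ∏ u ∈ Finset.Ico (s + 1) t, Γ u) + ε t := by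
        rw [Finset.sum_range_succ, Finset.Ico_self, Finset.prod_empty, mul_one,
          Finset.mul_sum]
        congr 1
        refine Finset.sum_congr rfl fun s hs => ?_
        rw [Finset.prod_Ico_succ_top (Finset.mem_range.mp hs)]
        ring
      have hsumΔ : ∑ s ∈ Finset.range (t+1), ε s * ∏ u ∈ Finset.Ico (s + 1) (t+1), Δ u
          = Δ t * (∑ s ∈ Finset.range t, ε s * ∏ u ∈ Finset.Ico (s + 1) t, Δ u) + ε t := by
        rw [Finset.sum_range_succ, Finset.Ico_self, Finset.prod_empty, mul_one,
          Finset.mul_sum]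
        congr 1
        refine Finset.sum_congr rfl fun s hs => ?_
        rw [Finset.prod_Ico_succ_top (Finset.mem_range.mp hs)]
        ring
      rw [hnew, hsumΓ, hsumΔ, Finset.prod_range_succ, Finset.prod_range_succ]
      refine ⟨hpsd', le_trans hst.2.2 ihtr, ?_, ?_⟩
      · have h1 := hst.1
        have h2 := mul_le_mul_of_nonneg_left ih3 (hΓ t htm).1
        nlinarith
      · have h1 := hst.2.1
        have h2 := mul_le_mul_of_nonneg_left ih4 (hΔ t htm).1
        nlinarith
  obtain ⟨_, _, h3, h4⟩ := main n le_rfl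
  exact ⟨h3, h4⟩
end
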